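/- arXiv:1605.02098 — 8 statements merged into one kernel-verified Lean document; each statement's English description precedes it below -/
import Mathlib

section
/- Let G be a locally compact topological group equipped with a compatible right-invariant metric d (i.e. d induces the topology of G and d(gk,hk)=d(g,h) for all g,h,k ∈ G). Suppose there exist a group automorphism α : G → G and a real constant 0 < c < 1 such that d(α(g),α(h)) = c·d(g,h) for all g,h ∈ G. Then every closed ball in G is compact; in particular G is a proper metric space. -/
/-- Let `G` be a locally compact topological group equipped with a
compatible right-invariant metric `d`. Suppose there exist a group automorphism
`α : G → G` and a constant `0 < c < 1` such that `d(α g, α h) = c * d(g, h)` for all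
`g, h`. Then every closed ball in `G` is compact; in particular `G` is a proper
metric space. -/
theorem closedBall_isCompact_of_contracting_automorphism
    {G : Type*} [Group G] [MetricSpace G] [IsTopologicalGroup G] [LocallyCompactSpace G]
    (hright : ∀ g h k : G, dist (g * k) (h * k) = dist g h)
    (α : G ≃* G) (c : ℝ) (hc0 : 0 < c) (hc1 : c < 1)
    (hsim : ∀ g h : G, dist (α g) (α h) = c * dist g h) :
    (∀ (g : G) (r : ℝ), IsCompact (Metric.closedBall g r)) ∧ ProperSpace G := by
  -- distance formula for the inverse automorphism
  have hinv : ∀ g h : G, dist (α.symm g) (α.symm h) = c⁻¹ * dist g h := by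
    intro g h
    have := hsim (α.symm g) (α.symm h)
    rw [α.apply_symm_apply, α.apply_symm_apply] at this
    field_simp [this]
    linarith
  -- α.symm is continuous
  have hcont : Continuous (α.symm : G → G) := by
    refine (LipschitzWith.of_dist_le_mul (K := ⟨c⁻¹, by positivity⟩) ?_).continuous
    intro x y
    exact le_of_eq (hinv x y)
  have h1 : α.symm (1 : G) = 1 := map_one _
  -- image of a closed ball under α.symm
  have himg : ∀ ε : ℝ, (α.symm : G → G) '' Metric.closedBall 1 ε
      = Metric.closedBall 1 (c⁻¹ * ε) := by
    intro ε
    ext x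
    simp only [Set.mem_image, Metric.mem_closedBall]
    constructor
    · rintro ⟨y, hy, rfl⟩
      rw [show (1 : G) = α.symm 1 from h1.symm, hinv]
      have : (0:ℝ) < c⁻¹ := by positivity
      nlinarith
    · intro hx
      refine ⟨α x, ?_, α.symm_apply_apply x⟩
      have : dist (α x) (α 1) = c * dist x 1 := hsim x 1
      rw [map_one] at this
      rw [this]
      rw [mul_comm c⁻¹] at hx
      calc c * dist x 1 ≤ c * (ε * c⁻¹) := by nlinarith [dist_nonneg (x := x) (y := (1:G))]
        _ = ε := by field_simp
  obtain ⟨ε, hε, hK⟩ := Metric.exists_isCompact_closedBall (1 : G)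
  -- closed balls of radius ε / c^n around 1 are compact
  have hpow : ∀ n : ℕ, IsCompact (Metric.closedBall (1 : G) ((c⁻¹)^n * ε)) := by
    intro n
    induction n with
    | zero => simpa using hK
    | succ n ih =>
      have := (ih.image hcont)
      rw [himg] at this
      rw [pow_succ, mul_comm ((c⁻¹)^n), mul_assoc]
      exact this
  -- all closed balls around 1 compact
  have hball1 : ∀ r : ℝ, IsCompact (Metric.closedBall (1 : G) r) := by
    intro r
    rcases le_or_gt r 0 with hr | hr
    · rcases lt_or_eq_of_le hr with hr | hr
      · simp [Metric.closedBall_eq_empty.2 hr]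
      · obtain ⟨n, hn⟩ : ∃ n : ℕ, r ≤ (c⁻¹)^n * ε := ⟨0, by simp; linarith⟩
        exact (hpow n).of_isClosed_subset Metric.isClosed_closedBall
          (Metric.closedBall_subset_closedBall hn)
    · obtain ⟨n, hn⟩ := exists_pow_lt_of_lt_one (div_pos hε hr) hc1
      have hcn : (0:ℝ) < c ^ n := by positivity
      have hrn : r ≤ (c⁻¹)^n * ε := by
        rw [inv_pow, ← div_eq_inv_mul, le_div_iff₀ hcn]
        rw [lt_div_iff₀ hr] at hn
        nlinarith
      exact (hpow n).of_isClosed_subset Metric.isClosed_closedBall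
        (Metric.closedBall_subset_closedBall hrn)
  -- translate: closedBall g r = (fun x => x * g) '' closedBall 1 r
  have hball : ∀ (g : G) (r : ℝ), IsCompact (Metric.closedBall g r) := by
    intro g r
    have : (fun x : G => x * g) '' Metric.closedBall 1 r = Metric.closedBall g r := by
      ext x
      simp only [Set.mem_image, Metric.mem_closedBall]
      constructor
      · rintro ⟨y, hy, rfl⟩
        have h' := hright y 1 g
        rw [one_mul] at h'
        rwa [h']
      · intro hx
        refine ⟨x * g⁻¹, ?_, by group⟩
        have h' := hright (x * g⁻¹) 1 g
        rw [one_mul, mul_assoc, inv_mul_cancel, mul_one] at h'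
        rwa [h'] at hx
    rw [← this]
    exact (hball1 r).image (continuous_id.mul continuous_const)
  exact ⟨hball, ⟨fun x r => hball x r⟩⟩
end

section
/- Let G be a locally compact topological group equipped with a compatible right-invariant metric d (i.e. d induces the topology of G and d(gk,hk)=d(g,h) for all g,h,k ∈ G). Suppose there exist a group automorphism α : G → G and a real constant 0 < c < 1 such that d(α(g),α(h)) = c·d(g,h) for all g,h ∈ G. Then G is a doubling metric space: there exists an integer N such that every closed ball B(g,r) in G can be covered by at most N closed balls of radius r/2. -/
/-- Let `G` be a locally compact topological group equipped with a
compatible right-invariant metric `d`, admitting a group automorphism which is a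
similarity with ratio `0 < c < 1`. Then `G` is a doubling metric space: there is an
integer `N` such that every closed ball of radius `r` can be covered by at most `N`
closed balls of radius `r/2`. -/
theorem doubling_of_contracting_automorphism
    {G : Type*} [Group G] [MetricSpace G] [IsTopologicalGroup G] [LocallyCompactSpace G]
    (hright : ∀ g h k : G, dist (g * k) (h * k) = dist g h)
    (α : G ≃* G) (c : ℝ) (hc0 : 0 < c) (hc1 : c < 1)
    (hsim : ∀ g h : G, dist (α g) (α h) = c * dist g h) :
    ∃ N : ℕ, ∀ (g : G) (r : ℝ), ∃ s : Finset G,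
      s.card ≤ N ∧ Metric.closedBall g r ⊆ ⋃ y ∈ s, Metric.closedBall y (r / 2) := by
  set β : MulAut G := α with hβ
  have hpow : ∀ (n : ℕ) (g h : G), dist ((β ^ n) g) ((β ^ n) h) = c ^ n * dist g h := by
    intro n
    induction n with
    | zero => intro g h; simp
    | succ n ih =>
      intro g h
      rw [pow_succ, MulAut.mul_apply, MulAut.mul_apply]
      have : dist (β (g)) (β h) = c * dist g h := hsim g h
      rw [ih (β g) (β h), hsim g h, pow_succ]
      ring
  have hzpow : ∀ (n : ℤ) (g h : G), dist ((β ^ n) g) ((β ^ n) h) = c ^ n * dist g h := by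
    intro n g h
    cases n with
    | ofNat k => simpa [zpow_natCast] using hpow k g h
    | negSucc k =>
      have hinv : ∀ x : G, (β ^ (k + 1)) ((β ^ (Int.negSucc k)) x) = x := by
        intro x
        have h1 : (β ^ (k + 1) : MulAut G) * β ^ (Int.negSucc k) = 1 := by
          rw [zpow_negSucc]
          exact mul_inv_cancel _
        have := congrArg (fun e : MulAut G => e x) h1
        simpa [MulAut.mul_apply] using this
      have h1 := hpow (k + 1) ((β ^ (Int.negSucc k)) g) ((β ^ (Int.negSucc k)) h)
      rw [hinv g, hinv h] at h1
      have hckpos : (0 : ℝ) < c ^ (k + 1) := pow_pos hc0 _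
      rw [zpow_negSucc c k]
      rw [h1, ← mul_assoc, inv_mul_cancel₀ hckpos.ne', one_mul]
  -- a compact closed ball around 1
  obtain ⟨K, hKc, hK1⟩ := exists_compact_mem_nhds (1 : G)
  obtain ⟨R, hR0, hRK⟩ := Metric.nhds_basis_closedBall.mem_iff.mp hK1
  have hcomp : IsCompact (Metric.closedBall (1 : G) R) :=
    hKc.of_isClosed_subset Metric.isClosed_closedBall hRK
  have hcR : 0 < c * R / 2 := by positivity
  obtain ⟨t, ht⟩ := hcomp.elim_finite_subcover (fun y : G => Metric.ball y (c * R / 2))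
    (fun y => Metric.isOpen_ball)
    (fun x hx => Set.mem_iUnion.mpr ⟨x, Metric.mem_ball_self hcR⟩)
  refine ⟨t.card + 1, fun g r => ?_⟩
  by_cases hr : r ≤ 0
  · refine ⟨{g}, by simp, ?_⟩
    intro z hz
    simp only [Finset.mem_singleton, Set.iUnion_iUnion_eq_left]
    exact Metric.closedBall_subset_closedBall (by linarith) hz
  · push_neg at hr
    obtain ⟨n, hn1, hn2⟩ := exists_mem_Ioc_zpow (x := r / R) (y := c⁻¹)
      (by positivity) (one_lt_inv_iff₀.mpr ⟨hc0, hc1⟩)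
    set m : ℤ := -(n + 1) with hm
    have hcm : (c : ℝ) ^ m = ((c⁻¹ : ℝ) ^ (n + 1)) := by
      rw [hm, zpow_neg, inv_zpow]
    have hcm1 : (c : ℝ) ^ (m + 1) = ((c⁻¹ : ℝ) ^ n) := by
      have : m + 1 = -n := by rw [hm]; ring
      rw [this, zpow_neg, inv_zpow]
    have hcmpos : (0 : ℝ) < c ^ m := zpow_pos hc0 m
    have hr1 : r ≤ c ^ m * R := by
      rw [hcm]
      calc r = (r / R) * R := by field_simp
        _ ≤ (c⁻¹) ^ (n + 1) * R := by
            apply mul_le_mul_of_nonneg_right hn2 (le_of_lt hR0)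
    have hr2 : c ^ (m + 1) * R < r := by
      rw [hcm1]
      calc (c⁻¹) ^ n * R < (r / R) * R := by
            apply mul_lt_mul_of_pos_right hn1 hR0
        _ = r := by field_simp
    classical
    refine ⟨t.image (fun y => (β ^ m) y * g),
      le_trans Finset.card_image_le (Nat.le_succ _), ?_⟩
    intro z hz
    have hzg : dist z g ≤ c ^ m * R := le_trans (Metric.mem_closedBall.mp hz) hr1
    set w : G := (β ^ (-m)) (z * g⁻¹) with hw
    have hwinv : (β ^ m) w = z * g⁻¹ := by
      rw [hw]
      have h1 : (β ^ m : MulAut G) * β ^ (-m) = 1 := by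
        rw [← zpow_add, add_neg_cancel, zpow_zero]
      have := congrArg (fun e : MulAut G => e (z * g⁻¹)) h1
      simpa [MulAut.mul_apply] using this
    have hone : (β ^ (-m)) (1 : G) = 1 := (β ^ (-m)).map_one
    have hdw : dist w 1 ≤ R := by
      have h1 : dist w 1 = c ^ (-m) * dist (z * g⁻¹) 1 := by
        have := hzpow (-m) (z * g⁻¹) 1
        rw [hone] at this
        rw [hw, this]
      have h2 : dist (z * g⁻¹) 1 = dist z g := by
        have := hright z g g⁻¹
        rwa [mul_inv_cancel] at this
      rw [h1, h2]
      have hcneg : (0 : ℝ) < c ^ (-m) := zpow_pos hc0 _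
      calc c ^ (-m) * dist z g ≤ c ^ (-m) * (c ^ m * R) := by
            exact mul_le_mul_of_nonneg_left hzg (le_of_lt hcneg)
        _ = R := by
            rw [← mul_assoc, ← zpow_add₀ (ne_of_gt hc0)]
            simp
    have hwK : w ∈ ⋃ y ∈ t, Metric.ball y (c * R / 2) := ht (Metric.mem_closedBall.mpr hdw)
    simp only [Set.mem_iUnion] at hwK
    obtain ⟨y, hyt, hwy⟩ := hwK
    rw [Metric.mem_ball] at hwy
    refine Set.mem_iUnion₂.mpr ⟨(β ^ m) y * g, Finset.mem_image_of_mem _ hyt, ?_⟩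
    rw [Metric.mem_closedBall]
    have hz' : z = (β ^ m) w * g := by rw [hwinv]; group
    calc dist z ((β ^ m) y * g) = dist ((β ^ m) w * g) ((β ^ m) y * g) := by rw [← hz']
      _ = dist ((β ^ m) w) ((β ^ m) y) := hright _ _ _
      _ = c ^ m * dist w y := hzpow m w y
      _ ≤ c ^ m * (c * R / 2) := mul_le_mul_of_nonneg_left (le_of_lt hwy) (le_of_lt hcmpos)
      _ = c ^ (m + 1) * R / 2 := by rw [zpow_add₀ (ne_of_gt hc0), zpow_one]; ring
      _ ≤ r / 2 := by linarith
end

section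
/- Let Y be a doubling metric space. Then there exists a finite constant D such that for every Borel probability measure μ on Y and μ-almost every y ∈ Y, the lower pointwise dimension of μ at y satisfies liminf_{ρ→0⁺} log μ(B(y,ρ))/log ρ ≤ D. -/
open MeasureTheory Filter Topology

/-- The lower pointwise dimension of a measure `m` at a point `w`:
`liminf_{ρ → 0⁺} log m(B(w,ρ)) / log ρ`, where `B(w,ρ)` is the closed ball. -/
noncomputable def lowerPointwiseDim {W : Type*} [MetricSpace W] [MeasurableSpace W]
    (m : Measure W) (w : W) : ℝ :=
  liminf (fun ρ : ℝ => Real.log (m (Metric.closedBall w ρ)).toReal / Real.log ρ)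
    (𝓝[>] (0 : ℝ))

private lemma doubling_iterate' {Y : Type*} [MetricSpace Y] [DecidableEq Y] {N : ℕ}
    (hN : ∀ (y : Y) (r : ℝ), ∃ s : Finset Y, s.card ≤ N ∧
      Metric.closedBall y r ⊆ ⋃ z ∈ s, Metric.closedBall z (r / 2)) :
    ∀ (j : ℕ) (y : Y) (r : ℝ), ∃ s : Finset Y, s.card ≤ N ^ j ∧
      Metric.closedBall y r ⊆ ⋃ z ∈ s, Metric.closedBall z (r / 2 ^ j) := by
  intro j
  induction j with
  | zero => intro y r; exact ⟨{y}, by simp, by simp⟩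
  | succ j ih =>
    intro y r
    obtain ⟨s, hs, hsub⟩ := hN y r
    choose t ht htsub using fun z : Y => ih z (r / 2)
    refine ⟨s.biUnion t, ?_, ?_⟩
    · calc (s.biUnion t).card ≤ ∑ z ∈ s, (t z).card := Finset.card_biUnion_le
        _ ≤ ∑ _z ∈ s, N ^ j := Finset.sum_le_sum fun z _ => ht z
        _ = s.card * N ^ j := by simp [Finset.sum_const, mul_comm]
        _ ≤ N * N ^ j := Nat.mul_le_mul_right _ hs
        _ = N ^ (j + 1) := (pow_succ' N j).symm
    · intro x hx
      obtain ⟨z, hz, hxz⟩ := Set.mem_iUnion₂.1 (hsub hx)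
      obtain ⟨w, hw, hxw⟩ := Set.mem_iUnion₂.1 (htsub z hxz)
      refine Set.mem_iUnion₂.2 ⟨w, Finset.mem_biUnion.2 ⟨z, hz, hw⟩, ?_⟩
      have : r / 2 / 2 ^ j = r / 2 ^ (j + 1) := by ring
      rwa [this] at hxw

private lemma cover_estimate' {Y : Type*} [MetricSpace Y] [DecidableEq Y] [MeasurableSpace Y]
    {N : ℕ}
    (hiter : ∀ (j : ℕ) (y : Y) (r : ℝ), ∃ s : Finset Y, s.card ≤ N ^ j ∧
      Metric.closedBall y r ⊆ ⋃ z ∈ s, Metric.closedBall z (r / 2 ^ j))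
    (μ : Measure Y) {D : ℝ} {A : Set Y} {ε : ℝ}
    (hA : ∀ a ∈ A, ∀ ρ : ℝ, 0 < ρ → ρ ≤ ε → μ (Metric.closedBall a ρ) ≤ ENNReal.ofReal (ρ ^ D))
    (y₀ : Y) {R : ℝ} (hR : 0 < R) (j : ℕ) (hj : 2 * (R / 2 ^ j) ≤ ε) :
    μ (A ∩ Metric.closedBall y₀ R) ≤ (N ^ j : ℕ) * ENNReal.ofReal ((2 * (R / 2 ^ j)) ^ D) := by
  obtain ⟨s, hcard, hsub⟩ := hiter j y₀ R
  set ρ := R / 2 ^ j with hρdef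
  have hρpos : 0 < ρ := by positivity
  have key : ∀ z ∈ s, μ (A ∩ Metric.closedBall z ρ) ≤ ENNReal.ofReal ((2 * ρ) ^ D) := by
    intro z _
    rcases Set.eq_empty_or_nonempty (A ∩ Metric.closedBall z ρ) with h | ⟨a, haA, haz⟩
    · simp [h]
    · have hsub' : A ∩ Metric.closedBall z ρ ⊆ Metric.closedBall a (2 * ρ) := by
        rintro x ⟨-, hx⟩
        have := Metric.mem_closedBall.1 hx
        have hza := Metric.mem_closedBall.1 haz
        rw [Metric.mem_closedBall]
        calc dist x a ≤ dist x z + dist z a := dist_triangle x z a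
          _ ≤ ρ + ρ := add_le_add this (dist_comm a z ▸ hza)
          _ = 2 * ρ := by ring
      exact le_trans (measure_mono hsub') (hA a haA (2 * ρ) (by positivity) hj)
  calc μ (A ∩ Metric.closedBall y₀ R)
      ≤ μ (⋃ z ∈ s, A ∩ Metric.closedBall z ρ) := by
        refine measure_mono fun x ⟨hxA, hxB⟩ => ?_
        obtain ⟨z, hz, hxz⟩ := Set.mem_iUnion₂.1 (hsub hxB)
        exact Set.mem_iUnion₂.2 ⟨z, hz, hxA, hxz⟩
    _ ≤ ∑ z ∈ s, μ (A ∩ Metric.closedBall z ρ) := MeasureTheory.measure_biUnion_finset_le s _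
    _ ≤ ∑ _z ∈ s, ENNReal.ofReal ((2 * ρ) ^ D) := Finset.sum_le_sum key
    _ = s.card * ENNReal.ofReal ((2 * ρ) ^ D) := by simp [Finset.sum_const, mul_comm]
    _ ≤ (N ^ j : ℕ) * ENNReal.ofReal ((2 * ρ) ^ D) :=
        mul_le_mul_left (by exact_mod_cast hcard) _

private lemma geom_limit' {N : ℕ} (hN1 : 1 ≤ N) {R : ℝ} (hR : 0 < R) :
    Tendsto (fun j : ℕ => (N ^ j : ℕ) * ENNReal.ofReal ((2 * (R / 2 ^ j)) ^ (Real.logb 2 N + 1)))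
      atTop (𝓝 0) := by
  set D : ℝ := Real.logb 2 N + 1 with hD
  have hNpos : (0 : ℝ) < N := by exact_mod_cast hN1
  have hbase : (N : ℝ) = (2 : ℝ) ^ (D - 1) := by
    rw [hD, add_sub_cancel_right, Real.rpow_logb two_pos (by norm_num) hNpos]
  have hc : ∀ j : ℕ, ((N ^ j : ℕ) : ℝ) * (2 * (R / 2 ^ j)) ^ D
      = (2 * R) ^ D * (2⁻¹ : ℝ) ^ j := by
    intro j
    have h2j : (0 : ℝ) < 2 ^ j := by positivity
    have h1 : 2 * (R / 2 ^ j) = (2 * R) * ((2 : ℝ)⁻¹) ^ j := by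
      rw [inv_pow]; field_simp
    have h2 : ((2 : ℝ)⁻¹) ^ j = (2 : ℝ) ^ (-(j : ℝ)) := by
      rw [Real.rpow_neg (by norm_num), Real.rpow_natCast]; exact inv_pow 2 j
    have h3 : ((N ^ j : ℕ) : ℝ) = (2 : ℝ) ^ ((D - 1) * j) := by
      push_cast
      rw [hbase, ← Real.rpow_natCast ((2:ℝ) ^ (D-1)) j, ← Real.rpow_mul (by norm_num)]
    rw [h1, Real.mul_rpow (by positivity) (by positivity), h2,
      ← Real.rpow_mul (by norm_num : (0:ℝ) ≤ 2), h3, ← mul_assoc,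
      mul_comm ((2:ℝ) ^ ((D-1)*(j:ℝ))) ((2*R) ^ D), mul_assoc,
      ← Real.rpow_add two_pos]
    have : (D - 1) * (j : ℝ) + (-(j : ℝ)) * D = -(j : ℝ) := by ring
    rw [this, ← h2]
  have hgeo : Tendsto (fun j : ℕ => (2 * R) ^ D * (2⁻¹ : ℝ) ^ j) atTop (𝓝 0) := by
    have := tendsto_pow_atTop_nhds_zero_of_lt_one (by norm_num : (0:ℝ) ≤ 2⁻¹)
      (by norm_num : (2⁻¹ : ℝ) < 1)
    simpa using this.const_mul ((2 * R) ^ D)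
  have : Tendsto (fun j : ℕ => ENNReal.ofReal (((N ^ j : ℕ) : ℝ) * (2 * (R / 2 ^ j)) ^ D))
      atTop (𝓝 0) := by
    rw [← ENNReal.ofReal_zero]
    apply ENNReal.tendsto_ofReal
    simpa only [hc] using hgeo
  convert this using 2 with j
  rw [ENNReal.ofReal_mul (by positivity), ENNReal.ofReal_natCast]

private lemma small_ball' {Y : Type*} [MetricSpace Y] [MeasurableSpace Y] (μ : Measure Y)
    [IsFiniteMeasure μ] {D ρ : ℝ} (hρ : 0 < ρ) (hρ1 : ρ < 1) (y : Y)
    (h : D < Real.log (μ (Metric.closedBall y ρ)).toReal / Real.log ρ) :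
    μ (Metric.closedBall y ρ) ≤ ENNReal.ofReal (ρ ^ D) := by
  set t := (μ (Metric.closedBall y ρ)).toReal with ht
  have hlogρ : Real.log ρ < 0 := Real.log_neg hρ hρ1
  have hlt : Real.log t < D * Real.log ρ := (lt_div_iff_of_neg hlogρ).1 h
  have hlt' : Real.log t < Real.log (ρ ^ D) := by rwa [Real.log_rpow hρ]
  have htlt : t < ρ ^ D := by
    rcases le_or_gt t 0 with h0 | h0
    · exact lt_of_le_of_lt h0 (Real.rpow_pos_of_pos hρ D)
    · calc t = Real.exp (Real.log t) := (Real.exp_log h0).symm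
        _ < Real.exp (Real.log (ρ ^ D)) := Real.exp_lt_exp.2 hlt'
        _ = ρ ^ D := Real.exp_log (Real.rpow_pos_of_pos hρ D)
  calc μ (Metric.closedBall y ρ) = ENNReal.ofReal t :=
        (ENNReal.ofReal_toReal (measure_ne_top μ _)).symm
    _ ≤ ENNReal.ofReal (ρ ^ D) := ENNReal.ofReal_le_ofReal htlt.le

/-- In a doubling metric space `Y` there is a finite constant `D` such
that for every Borel probability measure `μ` on `Y`, the lower pointwise dimension of
`μ` is at most `D` at `μ`-almost every point. -/
theorem lowerPointwiseDim_le_of_doubling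
    {Y : Type*} [MetricSpace Y] [MeasurableSpace Y] [BorelSpace Y]
    (hdoub : ∃ N : ℕ, ∀ (y : Y) (r : ℝ), ∃ s : Finset Y,
      s.card ≤ N ∧ Metric.closedBall y r ⊆ ⋃ z ∈ s, Metric.closedBall z (r / 2)) :
    ∃ D : ℝ, ∀ μ : Measure Y, IsProbabilityMeasure μ →
      ∀ᵐ y ∂μ, lowerPointwiseDim μ y ≤ D := by
  classical
  obtain ⟨N, hN⟩ := hdoub
  rcases isEmpty_or_nonempty Y with hY | hY
  · refine ⟨1, fun μ hμ => ?_⟩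
    exfalso
    have h1 : μ Set.univ = 1 := measure_univ
    rw [Set.univ_eq_empty_iff.2 hY, measure_empty] at h1
    exact zero_ne_one h1
  obtain ⟨y₀⟩ := hY
  have hN1 : 1 ≤ N := by
    rcases Nat.eq_zero_or_pos N with h0 | h; swap; · exact h
    obtain ⟨s, hs, hsub⟩ := hN y₀ 1
    have hy : y₀ ∈ ⋃ z ∈ s, Metric.closedBall z (1/2) :=
      hsub (Metric.mem_closedBall_self zero_le_one)
    have hse : s = ∅ := Finset.card_eq_zero.1 (by omega)
    rw [hse] at hy
    simp at hy
  have hiter := doubling_iterate' hN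
  set D : ℝ := Real.logb 2 N + 1 with hD
  refine ⟨D, fun μ hμ => ?_⟩
  rw [ae_iff]
  set A : ℕ → Set Y := fun m => {y | ∀ ρ : ℝ, 0 < ρ → ρ ≤ 1 / (m + 1) →
    μ (Metric.closedBall y ρ) ≤ ENNReal.ofReal (ρ ^ D)} with hAdef
  -- the bad set is contained in the union of the A m
  have hsubBad : {y | ¬ lowerPointwiseDim μ y ≤ D} ⊆ ⋃ m, A m := by
    intro y hy
    simp only [Set.mem_setOf_eq, not_le, lowerPointwiseDim] at hy
    have hmem : ∀ᶠ ρ in 𝓝[>] (0:ℝ), ρ ∈ Set.Ioo (0:ℝ) 1 :=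
      eventually_of_mem (Ioo_mem_nhdsGT_of_mem (Set.mem_Ico.2 ⟨le_rfl, one_pos⟩))
        fun x hx => hx
    have hbdd : IsBoundedUnder (· ≥ ·) (𝓝[>] (0:ℝ))
        (fun ρ : ℝ => Real.log (μ (Metric.closedBall y ρ)).toReal / Real.log ρ) := by
      refine ⟨0, ?_⟩
      rw [Filter.eventually_map]
      filter_upwards [hmem] with ρ hρ
      have htle : (μ (Metric.closedBall y ρ)).toReal ≤ 1 := by
        have := ENNReal.toReal_mono ENNReal.one_ne_top (prob_le_one (μ := μ)
          (s := Metric.closedBall y ρ))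
        simpa using this
      have h1 : Real.log (μ (Metric.closedBall y ρ)).toReal ≤ 0 :=
        Real.log_nonpos ENNReal.toReal_nonneg htle
      have h2 : Real.log ρ < 0 := Real.log_neg hρ.1 hρ.2
      rw [ge_iff_le, le_div_iff_of_neg h2]
      simpa using h1.trans (by norm_num)
    have hev := eventually_lt_of_lt_liminf hy hbdd
    have hE : {ρ : ℝ | (D < Real.log (μ (Metric.closedBall y ρ)).toReal / Real.log ρ)
        ∧ ρ ∈ Set.Ioo (0:ℝ) 1} ∈ 𝓝[>] (0:ℝ) := hev.and hmem
    obtain ⟨ε, hε, hIoc⟩ := mem_nhdsGT_iff_exists_Ioc_subset.1 hE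
    obtain ⟨m, hm⟩ := exists_nat_one_div_lt (Set.mem_Ioi.1 hε)
    refine Set.mem_iUnion.2 ⟨m, fun ρ hρ0 hρm => ?_⟩
    have hρε : ρ ≤ ε := hρm.trans hm.le
    obtain ⟨hfρ, hρIoo⟩ := hIoc ⟨hρ0, hρε⟩
    exact small_ball' μ hρ0 hρIoo.2 y hfρ
  -- each A m is null
  have hAnull : ∀ m : ℕ, μ (A m) = 0 := by
    intro m
    have hεm : (0:ℝ) < 1 / (m + 1) := by positivity
    have hA' : ∀ a ∈ A m, ∀ ρ : ℝ, 0 < ρ → ρ ≤ 1 / (m + 1) →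
        μ (Metric.closedBall a ρ) ≤ ENNReal.ofReal (ρ ^ D) := fun a ha => ha
    have hcover : A m ⊆ ⋃ R : ℕ, (A m ∩ Metric.closedBall y₀ ((R:ℝ) + 1)) := by
      intro y hy
      refine Set.mem_iUnion.2 ⟨⌈dist y y₀⌉₊, hy, ?_⟩
      rw [Metric.mem_closedBall]
      exact (Nat.le_ceil _).trans (by linarith)
    refine measure_mono_null hcover (measure_iUnion_null fun R => ?_)
    have hRpos : (0:ℝ) < (R:ℝ) + 1 := by positivity
    refine le_antisymm ?_ zero_le
    refine ge_of_tendsto (geom_limit' hN1 hRpos) ?_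
    have htend : Tendsto (fun j : ℕ => 2 * (((R:ℝ) + 1) / 2 ^ j)) atTop (𝓝 0) := by
      have h0 := (tendsto_pow_atTop_nhds_zero_of_lt_one (by norm_num : (0:ℝ) ≤ 2⁻¹)
        (by norm_num : (2⁻¹:ℝ) < 1)).const_mul (2 * ((R:ℝ) + 1))
      simp only [mul_zero] at h0
      convert h0 using 2 with j
      rw [inv_pow]
      ring
    filter_upwards [htend.eventually (eventually_le_nhds hεm)] with j hj
    exact cover_estimate' hiter μ hA' y₀ hRpos j hj
  exact measure_mono_null hsubBad (measure_iUnion_null hAnull)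
end

section
/- Let Y be a complete separable metric space satisfying the Besicovitch covering property. Then there exists a constant C (depending only on Y) such that for every finite Borel measure μ on Y and every Borel measure ν on Y, setting φ_*(y) = inf_{ρ>0} ν(B(y,ρ))/μ(B(y,ρ)) ∈ [0,∞] (with the convention that the quotient equals ∞ whenever μ(B(y,ρ)) = 0, and where B(y,ρ) is the closed ball of radius ρ centred at y), one has ∫_Y max(0, −log φ_*(y)) dν(y) ≤ C·μ(Y). In particular the nonnegative Borel function max(0, −log φ_*) is ν-integrable whenever μ(Y) < ∞. -/
open MeasureTheory

/-- `φ_ρ(y) = ν(B(y,ρ)) / μ(B(y,ρ))`, with the convention that the quotient is `∞`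
whenever `μ(B(y,ρ)) = 0`.  Here `B(y,ρ)` is the closed ball of radius `ρ` about `y`. -/
noncomputable def ballRatio {Y : Type*} [MetricSpace Y] [MeasurableSpace Y]
    (μ ν : Measure Y) (y : Y) (ρ : ℝ) : ENNReal :=
  if μ (Metric.closedBall y ρ) = 0 then ⊤
  else ν (Metric.closedBall y ρ) / μ (Metric.closedBall y ρ)

/-- `φ_*(y) = inf_{ρ > 0} φ_ρ(y)`. -/
noncomputable def phiStar {Y : Type*} [MetricSpace Y] [MeasurableSpace Y]
    (μ ν : Measure Y) (y : Y) : ENNReal :=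
  ⨅ ρ ∈ Set.Ioi (0 : ℝ), ballRatio μ ν y ρ

/-- `negLogENN x = max (0, - log x)`, valued in `[0,∞]`: it is `∞` when `x = 0`,
`ENNReal.ofReal (- log x)` for `0 < x < ∞` (which is `max 0 (- log x)`), and `0` when
`x = ∞`. -/
noncomputable def negLogENN (x : ENNReal) : ENNReal :=
  if x = 0 then ⊤ else ENNReal.ofReal (- Real.log x.toReal)

open Metric in
lemma besicovitch_aux {Y : Type*} [MetricSpace Y] [MeasurableSpace Y] [BorelSpace Y]
    {N : ℕ} {τ : ℝ} (hτ : 1 < τ) (hN : IsEmpty (Besicovitch.SatelliteConfig Y N τ))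
    (μ ν : Measure Y) [IsFiniteMeasure μ] (t : ENNReal) (R : ℝ) (s : Set Y)
    (hs : ∀ y ∈ s, ∃ ρ : ℝ, 0 < ρ ∧ ρ ≤ R ∧ μ (closedBall y ρ) ≠ 0 ∧
      ν (closedBall y ρ) ≤ t * μ (closedBall y ρ)) :
    ν s ≤ N * (t * μ Set.univ) := by
  choose r hr1 hr2 hr3 hr4 using fun b : s => hs b b.2
  have hr : ∀ b : s, 0 < r b ∧ r b ≤ R ∧ μ (closedBall (b : Y) (r b)) ≠ 0 ∧
      ν (closedBall (b : Y) (r b)) ≤ t * μ (closedBall (b : Y) (r b)) :=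
    fun b => ⟨hr1 b, hr2 b, hr3 b, hr4 b⟩
  let q : Besicovitch.BallPackage s Y :=
    { c := Subtype.val
      r := r
      rpos := fun b => (hr b).1
      r_bound := R
      r_le := fun b => (hr b).2.1 }
  obtain ⟨u, hu, hu'⟩ := Besicovitch.exist_disjoint_covering_families hτ hN q
  have hcnt : ∀ i, (u i).Countable := by
    intro i
    rw [← Set.countable_coe_iff]
    have := MeasureTheory.Measure.countable_meas_pos_of_disjoint_iUnion (μ := μ)
      (As := fun j : u i => closedBall (j : Y) (r j))
      (fun j => measurableSet_closedBall)
      (fun j k hjk => hu i j.2 k.2 (fun h => hjk (Subtype.ext h)))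
    have heq : {j : u i | 0 < μ (closedBall ((j : s) : Y) (r j))} = Set.univ := by
      ext j; simpa [pos_iff_ne_zero] using (hr j).2.2.1
    rw [heq, Set.countable_univ_iff] at this
    exact this
  have key : ∀ i, ν (⋃ j ∈ u i, closedBall ((j : s) : Y) (r j)) ≤ t * μ Set.univ := by
    intro i
    calc ν (⋃ j ∈ u i, closedBall ((j : s) : Y) (r j))
        ≤ ∑' j : u i, ν (closedBall ((j : s) : Y) (r j)) :=
          measure_biUnion_le ν (hcnt i) _
      _ ≤ ∑' j : u i, t * μ (closedBall ((j : s) : Y) (r j)) :=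
          ENNReal.tsum_le_tsum fun j => (hr j).2.2.2
      _ = t * ∑' j : u i, μ (closedBall ((j : s) : Y) (r j)) := ENNReal.tsum_mul_left
      _ = t * μ (⋃ j ∈ u i, closedBall ((j : s) : Y) (r j)) := by
          rw [measure_biUnion (hcnt i) (hu i) (fun b _ => measurableSet_closedBall)]
      _ ≤ t * μ Set.univ := mul_le_mul_right (measure_mono (Set.subset_univ _)) t
  calc ν s ≤ ν (⋃ i : Fin N, ⋃ j ∈ u i, ball ((j : s) : Y) (r j)) := by
        apply measure_mono
        intro y hy
        exact hu' (show y ∈ Set.range q.c by rwa [Subtype.range_val])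
    _ ≤ ∑' i : Fin N, ν (⋃ j ∈ u i, ball ((j : s) : Y) (r j)) := measure_iUnion_le _
    _ ≤ ∑' i : Fin N, (t * μ Set.univ) := by
        refine ENNReal.tsum_le_tsum fun i => ?_
        refine le_trans (measure_mono ?_) (key i)
        exact Set.iUnion₂_mono fun j _ => ball_subset_closedBall
    _ = N * (t * μ Set.univ) := by
        rw [tsum_fintype]
        simp [Finset.sum_const, nsmul_eq_mul]

open Metric in
lemma meas_phiStar_lt_le {Y : Type*} [MetricSpace Y] [MeasurableSpace Y] [BorelSpace Y]
    {N : ℕ} {τ : ℝ} (hτ : 1 < τ) (hN : IsEmpty (Besicovitch.SatelliteConfig Y N τ))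
    (μ ν : Measure Y) [IsFiniteMeasure μ] (t : ENNReal) :
    ν {y | phiStar μ ν y < t} ≤ N * (t * μ Set.univ) := by
  set S : ℕ → Set Y := fun n => {y | ∃ ρ : ℝ, 0 < ρ ∧ ρ ≤ n + 1 ∧
      μ (closedBall y ρ) ≠ 0 ∧ ν (closedBall y ρ) ≤ t * μ (closedBall y ρ)} with hS
  have hsub : {y | phiStar μ ν y < t} ⊆ ⋃ n, S n := by
    intro y hy
    obtain ⟨ρ, hρpos, hlt⟩ : ∃ ρ, 0 < ρ ∧ ballRatio μ ν y ρ < t := by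
      have := hy
      simp only [Set.mem_setOf_eq, phiStar, iInf_lt_iff, Set.mem_Ioi] at this
      obtain ⟨ρ, hρ, h⟩ := this
      exact ⟨ρ, hρ, h⟩
    have h0 : μ (closedBall y ρ) ≠ 0 := by
      intro h
      rw [ballRatio, if_pos h] at hlt
      exact not_top_lt hlt
    rw [ballRatio, if_neg h0] at hlt
    have hle : ν (closedBall y ρ) ≤ t * μ (closedBall y ρ) :=
      ((ENNReal.div_lt_iff (Or.inl h0) (Or.inl (measure_ne_top μ _))).1 hlt).le
    exact Set.mem_iUnion.2 ⟨⌈ρ⌉₊, ρ, hρpos,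
      (Nat.le_ceil ρ).trans (by linarith [Nat.cast_nonneg (α := ℝ) ⌈ρ⌉₊]), h0, hle⟩
  have hmono : Monotone S := by
    intro n m hnm y hy
    obtain ⟨ρ, h1, h2, h3, h4⟩ := hy
    refine ⟨ρ, h1, h2.trans ?_, h3, h4⟩
    have : (n:ℝ) ≤ (m:ℝ) := Nat.cast_le.2 hnm
    linarith
  calc ν {y | phiStar μ ν y < t} ≤ ν (⋃ n, S n) := measure_mono hsub
    _ = ⨆ n, ν (S n) := (hmono.directed_le).measure_iUnion
    _ ≤ N * (t * μ Set.univ) := by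
        refine iSup_le fun n => ?_
        exact besicovitch_aux hτ hN μ ν t (n + 1) (S n) (fun y hy => hy)

lemma negLogENN_le_tsum (x : ENNReal) :
    negLogENN x ≤ ∑' n : ℕ,
      (if x ≤ ENNReal.ofReal (Real.exp (-(n : ℝ))) then (1 : ENNReal) else 0) := by
  rcases eq_or_ne x 0 with rfl | hx0
  · have : ∀ n : ℕ, (if (0:ENNReal) ≤ ENNReal.ofReal (Real.exp (-(n : ℝ))) then (1 : ENNReal)
        else 0) = 1 := fun n => if_pos zero_le
    simp only [this]
    rw [ENNReal.tsum_const_eq_top_of_ne_zero one_ne_zero]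
    exact le_top
  rcases eq_or_ne x ⊤ with rfl | hxtop
  · simp [negLogENN]
  have hxr : 0 < x.toReal := ENNReal.toReal_pos hx0 hxtop
  rw [negLogENN, if_neg hx0]
  rcases le_or_gt (- Real.log x.toReal) 0 with h | h
  · simp [ENNReal.ofReal_of_nonpos h]
  set L : ℝ := - Real.log x.toReal with hL
  set m : ℕ := ⌊L⌋₊ with hm
  have hcond : ∀ n : ℕ, n ≤ m → x ≤ ENNReal.ofReal (Real.exp (-(n : ℝ))) := by
    intro n hn
    have h1 : (n : ℝ) ≤ L := le_trans (Nat.cast_le.2 hn) (Nat.floor_le h.le)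
    have h2 : Real.log x.toReal ≤ -(n : ℝ) := by rw [hL] at h1; linarith
    have h3 : x.toReal ≤ Real.exp (-(n : ℝ)) := (Real.log_le_iff_le_exp hxr).1 h2
    calc x = ENNReal.ofReal x.toReal := (ENNReal.ofReal_toReal hxtop).symm
      _ ≤ _ := ENNReal.ofReal_le_ofReal h3
  calc ENNReal.ofReal L ≤ ENNReal.ofReal ((m : ℝ) + 1) :=
        ENNReal.ofReal_le_ofReal (Nat.lt_floor_add_one L).le
    _ = ((m + 1 : ℕ) : ENNReal) := by
        rw [← ENNReal.ofReal_natCast (m + 1)]; push_cast; ring_nf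
    _ = ∑ n ∈ Finset.range (m + 1),
          (if x ≤ ENNReal.ofReal (Real.exp (-(n : ℝ))) then (1 : ENNReal) else 0) := by
        rw [Finset.sum_congr rfl (fun n hn => if_pos (hcond n
          (Nat.lt_succ_iff.1 (Finset.mem_range.1 hn))))]
        simp
    _ ≤ _ := ENNReal.sum_le_tsum _

lemma tsum_exp_one_sub_le : ∑' n : ℕ, ENNReal.ofReal (Real.exp (1 - (n : ℝ))) ≤ 6 := by
  have h1 : ∀ n : ℕ, ENNReal.ofReal (Real.exp (1 - (n : ℝ))) ≤ 3 * (2⁻¹ : ENNReal) ^ n := by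
    intro n
    have he1 : Real.exp 1 ≤ 3 := by linarith [Real.exp_one_lt_d9.le]
    have he2 : Real.exp (-1) ≤ 2⁻¹ := by
      rw [Real.exp_neg]
      have h2 : (2 : ℝ) ≤ Real.exp 1 := by linarith [Real.exp_one_gt_d9.le]
      exact inv_anti₀ (by norm_num) h2
    have hsplit : Real.exp (1 - (n : ℝ)) = Real.exp 1 * (Real.exp (-1)) ^ n := by
      rw [← Real.exp_nat_mul, ← Real.exp_add]
      ring_nf
    have hreal : Real.exp (1 - (n : ℝ)) ≤ 3 * (2⁻¹ : ℝ) ^ n := by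
      rw [hsplit]
      exact mul_le_mul he1 (pow_le_pow_left₀ (Real.exp_pos _).le he2 n)
        (pow_nonneg (Real.exp_pos _).le n) (by norm_num)
    calc ENNReal.ofReal (Real.exp (1 - (n : ℝ))) ≤ ENNReal.ofReal (3 * (2⁻¹ : ℝ) ^ n) :=
          ENNReal.ofReal_le_ofReal hreal
      _ = ENNReal.ofReal 3 * (ENNReal.ofReal 2⁻¹) ^ n := by
          rw [ENNReal.ofReal_mul (by norm_num), ENNReal.ofReal_pow (by norm_num)]
      _ = 3 * (2⁻¹ : ENNReal) ^ n := by
          rw [ENNReal.ofReal_inv_of_pos (by norm_num)]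
          norm_num
  calc ∑' n : ℕ, ENNReal.ofReal (Real.exp (1 - (n : ℝ)))
      ≤ ∑' n : ℕ, 3 * (2⁻¹ : ENNReal) ^ n := ENNReal.tsum_le_tsum h1
    _ = 3 * (1 - 2⁻¹)⁻¹ := by rw [ENNReal.tsum_mul_left, ENNReal.tsum_geometric]
    _ = 6 := by rw [ENNReal.one_sub_inv_two, inv_inv]; norm_num

/-- Let `Y` be a complete separable metric space with the Besicovitch
covering property. There is a constant `C`, depending only on `Y`, such that for every
finite Borel measure `μ` and every Borel measure `ν` on `Y`,
`∫ max (0, - log φ_*) dν ≤ C * μ(Y)`. -/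
theorem lintegral_negLog_phiStar_le
    {Y : Type*} [MetricSpace Y] [CompleteSpace Y] [TopologicalSpace.SeparableSpace Y]
    [MeasurableSpace Y] [BorelSpace Y] [HasBesicovitchCovering Y] :
    ∃ C : NNReal, ∀ μ ν : Measure Y, IsFiniteMeasure μ →
      ∫⁻ y, negLogENN (phiStar μ ν y) ∂ν ≤ (C : ENNReal) * μ Set.univ := by
  obtain ⟨N, τ, hτ, hN⟩ := HasBesicovitchCovering.no_satelliteConfig (α := Y)
  refine ⟨6 * N, fun μ ν hμ => ?_⟩
  haveI := hμ
  set S : ℕ → Set Y := fun n => {y | phiStar μ ν y ≤ ENNReal.ofReal (Real.exp (-(n : ℝ)))}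
    with hS
  set T : ℕ → Set Y := fun n => toMeasurable ν (S n) with hT
  have step1 : ∫⁻ y, negLogENN (phiStar μ ν y) ∂ν ≤ ∑' n : ℕ, ν (T n) := by
    calc ∫⁻ y, negLogENN (phiStar μ ν y) ∂ν
        ≤ ∫⁻ y, ∑' n : ℕ, (T n).indicator (fun _ => (1 : ENNReal)) y ∂ν := by
          refine lintegral_mono fun y => le_trans (negLogENN_le_tsum _) ?_
          refine ENNReal.tsum_le_tsum fun n => ?_
          by_cases h : phiStar μ ν y ≤ ENNReal.ofReal (Real.exp (-(n : ℝ)))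
          · rw [if_pos h]
            have hy : y ∈ T n := subset_toMeasurable ν (S n) h
            simp [Set.indicator_of_mem hy]
          · simp [if_neg h]
      _ = ∑' n : ℕ, ∫⁻ y, (T n).indicator (fun _ => (1 : ENNReal)) y ∂ν :=
          lintegral_tsum fun n =>
            (measurable_const.indicator (measurableSet_toMeasurable ν _)).aemeasurable
      _ = ∑' n : ℕ, ν (T n) := by
          exact tsum_congr fun n =>
            lintegral_indicator_one (measurableSet_toMeasurable ν _)
  have step2 : ∀ n : ℕ, ν (T n) ≤
      (N : ENNReal) * (ENNReal.ofReal (Real.exp (1 - (n : ℝ))) * μ Set.univ) := by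
    intro n
    rw [hT, measure_toMeasurable]
    refine le_trans (measure_mono ?_) (meas_phiStar_lt_le hτ hN μ ν _)
    intro y hy
    exact lt_of_le_of_lt hy
      ((ENNReal.ofReal_lt_ofReal_iff (Real.exp_pos _)).2 (Real.exp_lt_exp.2 (by linarith)))
  calc ∫⁻ y, negLogENN (phiStar μ ν y) ∂ν
      ≤ ∑' n : ℕ, (N : ENNReal) * (ENNReal.ofReal (Real.exp (1 - (n : ℝ))) * μ Set.univ) :=
        step1.trans (ENNReal.tsum_le_tsum step2)
    _ = (N : ENNReal) * μ Set.univ * ∑' n : ℕ, ENNReal.ofReal (Real.exp (1 - (n : ℝ))) := by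
        rw [← ENNReal.tsum_mul_left]
        exact tsum_congr fun n => by ring
    _ ≤ (N : ENNReal) * μ Set.univ * 6 :=
        mul_le_mul_right tsum_exp_one_sub_le _
    _ = ((6 * N : NNReal) : ENNReal) * μ Set.univ := by push_cast; ring
end

section
/- Let Y be a complete separable metric space satisfying the Besicovitch covering property, Z a complete separable metric space, and π : Y → Z a Lipschitz map. Let μ be a Borel probability measure on Y, let ν = π_*μ be its push-forward, and let (μ_z)_{z∈Z} be a disintegration of μ over ν along π. Assume there exist a constant γ ≥ 0 and a Borel map δ : Z → [0,∞) such that for μ-almost every y ∈ Y: (i) the lower pointwise dimension of μ_{π(y)} at y is ≥ γ, and (ii) the lower pointwise dimension of ν at π(y) is ≥ δ(π(y)). Then for μ-almost every y ∈ Y, the lower pointwise dimension of μ at y is ≥ γ + δ(π(y)). -/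
open MeasureTheory Filter Topology

open Metric
open scoped ENNReal

section Aux

noncomputable def dimQuot {W : Type*} [MetricSpace W] [MeasurableSpace W]
    (m : Measure W) (w : W) (ρ : ℝ) : ℝ :=
  Real.log (m (Metric.closedBall w ρ)).toReal / Real.log ρ


lemma dimQuot_eventually_nonneg {W : Type*} [MetricSpace W] [MeasurableSpace W]
    (m : Measure W) [IsProbabilityMeasure m] (w : W) :
    ∀ᶠ ρ in 𝓝[>] (0:ℝ), 0 ≤ dimQuot m w ρ := by
  filter_upwards [Ioo_mem_nhdsGT (by norm_num : (0:ℝ) < 1)] with ρ hρ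
  have h1 : Real.log ρ < 0 := Real.log_neg hρ.1 hρ.2
  have h2 : Real.log (m (Metric.closedBall w ρ)).toReal ≤ 0 :=
    Real.log_nonpos ENNReal.toReal_nonneg
      (by simpa using ENNReal.toReal_mono (by simp) (prob_le_one (μ := m)))
  rw [dimQuot, div_nonneg_iff]
  exact Or.inr ⟨h2, h1.le⟩

lemma lowerPointwiseDim_eq {W : Type*} [MetricSpace W] [MeasurableSpace W]
    (m : Measure W) (w : W) :
    lowerPointwiseDim m w = sSup {a : ℝ | ∀ᶠ ρ in 𝓝[>] (0:ℝ), a ≤ dimQuot m w ρ} := by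
  rw [lowerPointwiseDim, liminf_eq]; rfl

/-- Extraction: from a lower bound on the lower pointwise dimension, an eventual
power bound on ball measures. -/
lemma eventually_measure_closedBall_le_rpow {W : Type*} [MetricSpace W] [MeasurableSpace W]
    (m : Measure W) [IsProbabilityMeasure m] (w : W) {c a : ℝ}
    (hc : c ≤ lowerPointwiseDim m w) (hac : a < c) :
    ∀ᶠ ρ in 𝓝[>] (0:ℝ), m (Metric.closedBall w ρ) ≤ ENNReal.ofReal (ρ ^ a) := by
  have key : ∀ᶠ ρ in 𝓝[>] (0:ℝ), a ≤ dimQuot m w ρ := by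
    by_cases H : ∃ b ∈ {b : ℝ | ∀ᶠ ρ in 𝓝[>] (0:ℝ), b ≤ dimQuot m w ρ}, a ≤ b
    · obtain ⟨b, hb, hab⟩ := H
      exact (Set.mem_setOf_eq ▸ hb).mono fun ρ h => hab.trans h
    · push_neg at H
      exfalso
      have hne : (0:ℝ) ∈ {b : ℝ | ∀ᶠ ρ in 𝓝[>] (0:ℝ), b ≤ dimQuot m w ρ} :=
        dimQuot_eventually_nonneg m w
      have hsup : sSup {b : ℝ | ∀ᶠ ρ in 𝓝[>] (0:ℝ), b ≤ dimQuot m w ρ} ≤ a :=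
        csSup_le ⟨0, hne⟩ fun b hb => (H b hb).le
      rw [lowerPointwiseDim_eq] at hc
      linarith
  filter_upwards [key, Ioo_mem_nhdsGT (by norm_num : (0:ℝ) < 1)] with ρ hq hρ
  have hlogρ : Real.log ρ < 0 := Real.log_neg hρ.1 hρ.2
  rcases eq_or_lt_of_le (show (0:ℝ) ≤ (m (Metric.closedBall w ρ)).toReal from
    ENNReal.toReal_nonneg) with h0 | hpos
  · have : m (Metric.closedBall w ρ) = 0 := by
      have := measure_ne_top m (Metric.closedBall w ρ)
      simpa [ENNReal.toReal_eq_zero_iff, this] using h0.symm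
    simp [this]
  · -- a ≤ log t / log ρ with log ρ < 0  ⇒  log t ≤ a log ρ
    rw [dimQuot, le_div_iff_of_neg hlogρ] at hq
    have : (m (Metric.closedBall w ρ)).toReal ≤ ρ ^ a := by
      have := Real.exp_le_exp.2 hq
      rw [Real.exp_log hpos] at this
      rwa [Real.rpow_def_of_pos hρ.1, mul_comm]
    calc m (Metric.closedBall w ρ) = ENNReal.ofReal (m (Metric.closedBall w ρ)).toReal := by
          rw [ENNReal.ofReal_toReal (measure_ne_top m _)]
      _ ≤ ENNReal.ofReal (ρ ^ a) := ENNReal.ofReal_le_ofReal this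

lemma le_lowerPointwiseDim {W : Type*} [MetricSpace W] [MeasurableSpace W]
    (m : Measure W) (w : W) {a C : ℝ}
    (hev : ∀ᶠ ρ in 𝓝[>] (0:ℝ), a ≤ dimQuot m w ρ)
    (hfr : ∃ᶠ ρ in 𝓝[>] (0:ℝ), dimQuot m w ρ ≤ C) :
    a ≤ lowerPointwiseDim m w := by
  rw [lowerPointwiseDim_eq]
  refine le_csSup ⟨C, ?_⟩ hev
  rintro b hb
  have hb' : ∀ᶠ ρ in 𝓝[>] (0:ℝ), b ≤ dimQuot m w ρ := hb
  obtain ⟨ρ, h1, h2⟩ := (hb'.and_frequently hfr).exists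
  linarith

variable {Y : Type*} [MetricSpace Y]

/-- In a space with no `(N, τ)` satellite configuration, at most `N` points can lie in the
annulus `σ ≤ dist p x ≤ 2σ` while being pairwise `σ`-separated. -/
lemma annulus_card_le {N : ℕ} {τ : ℝ} (hτ : 1 < τ)
    (hE : IsEmpty (Besicovitch.SatelliteConfig Y N τ)) (x : Y) {σ : ℝ} (hσ : 0 < σ)
    (F : Finset Y) (hd : ∀ p ∈ F, σ ≤ dist p x ∧ dist p x ≤ 2 * σ)
    (hsep : ∀ p ∈ F, ∀ q ∈ F, p ≠ q → σ ≤ dist p q) : F.card ≤ N := by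
  by_contra hcard
  push_neg at hcard
  obtain ⟨s, hsF, hscard⟩ := Finset.exists_subset_card_eq hcard.le
  set e : Fin N → Y := fun i => (s.equivFin.symm (Fin.cast hscard.symm i) : Y) with he_def
  have he : ∀ i, e i ∈ s := fun i => (s.equivFin.symm (Fin.cast hscard.symm i)).2
  have heinj : Function.Injective e := by
    intro i j hij
    rw [he_def] at hij
    have h2 := s.equivFin.symm.injective (Subtype.val_injective hij)
    simpa using congrArg (Fin.cast hscard) h2
  set c : Fin (N + 1) → Y := Fin.snoc e x with hc
  set r : Fin (N + 1) → ℝ := Fin.snoc (fun _ => σ) (τ * σ) with hr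
  have hcs : ∀ a : Fin N, c a.castSucc = e a := fun a => Fin.snoc_castSucc _ _ _
  have hcl : c (Fin.last N) = x := Fin.snoc_last _ _
  have hrs : ∀ a : Fin N, r a.castSucc = σ := fun a => Fin.snoc_castSucc _ _ _
  have hrl : r (Fin.last N) = τ * σ := Fin.snoc_last _ _
  refine hE.elim' ?_
  refine ⟨c, r, ?_, ?_, ?_, ?_⟩
  · intro i
    rcases Fin.eq_castSucc_or_eq_last i with ⟨a, rfl⟩ | rfl
    · rw [hrs]; exact hσ
    · rw [hrl]; positivity
  · intro i j hij
    rcases Fin.eq_castSucc_or_eq_last i with ⟨a, rfl⟩ | rfl <;>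
      rcases Fin.eq_castSucc_or_eq_last j with ⟨b, rfl⟩ | rfl
    · left
      have hab : a ≠ b := fun h => hij (by rw [h])
      rw [hcs, hcs, hrs, hrs]
      refine ⟨hsep _ (hsF (he a)) _ (hsF (he b)) (fun h => hab (heinj h)), ?_⟩
      nlinarith
    · left
      rw [hcs, hcl, hrs, hrl]
      exact ⟨(hd _ (hsF (he a))).1, le_refl _⟩
    · right
      rw [hcs, hcl, hrs, hrl]
      exact ⟨(hd _ (hsF (he b))).1, le_refl _⟩
    · exact absurd rfl hij
  · intro i hi
    rcases Fin.eq_castSucc_or_eq_last i with ⟨a, rfl⟩ | rfl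
    · rw [hcs, hcl, hrs, hrl]
      exact ⟨(hd _ (hsF (he a))).1, le_refl _⟩
    · exact absurd rfl (Fin.ne_of_lt hi)
  · intro i hi
    rcases Fin.eq_castSucc_or_eq_last i with ⟨a, rfl⟩ | rfl
    · rw [hcs, hcl, hrs, hrl]
      have := (hd _ (hsF (he a))).2
      nlinarith
    · exact absurd rfl (Fin.ne_of_lt hi)

/-- At most `2N+1` pairwise `σ`-separated points fit in a closed ball of radius `2σ`. -/
lemma doubleBall_card_le {N : ℕ} {τ : ℝ} (hτ : 1 < τ)
    (hE : IsEmpty (Besicovitch.SatelliteConfig Y N τ)) (x : Y) {σ : ℝ} (hσ : 0 < σ)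
    (F : Finset Y) (hd : ∀ p ∈ F, dist p x ≤ 2 * σ)
    (hsep : ∀ p ∈ F, ∀ q ∈ F, p ≠ q → σ ≤ dist p q) : F.card ≤ 2 * N + 1 := by
  classical
  set F₁ : Finset Y := F.filter (fun p => dist p x < σ) with hF₁
  set F₂ : Finset Y := F.filter (fun p => ¬ dist p x < σ) with hF₂
  have hsplit : F₁.card + F₂.card = F.card := Finset.card_filter_add_card_filter_not _
  have h₂ : F₂.card ≤ N := by
    refine annulus_card_le hτ hE x hσ F₂ ?_ ?_
    · intro p hp
      rw [hF₂, Finset.mem_filter] at hp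
      exact ⟨not_lt.mp hp.2, hd p hp.1⟩
    · intro p hp q hq hpq
      exact hsep p (Finset.filter_subset _ _ hp) q (Finset.filter_subset _ _ hq) hpq
  have h₁ : F₁.card ≤ N + 1 := by
    rcases Finset.eq_empty_or_nonempty F₁ with h | ⟨p₀, hp₀⟩
    · simp [h]
    · have hp₀F : p₀ ∈ F := Finset.filter_subset _ _ hp₀
      have hp₀x : dist p₀ x < σ := (Finset.mem_filter.mp hp₀).2
      have : (F₁.erase p₀).card ≤ N := by
        refine annulus_card_le hτ hE p₀ hσ _ ?_ ?_
        · intro p hp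
          have hpF₁ : p ∈ F₁ := Finset.erase_subset _ _ hp
          have hpF : p ∈ F := Finset.filter_subset _ _ hpF₁
          have hpx : dist p x < σ := (Finset.mem_filter.mp hpF₁).2
          have hne : p ≠ p₀ := Finset.ne_of_mem_erase hp
          refine ⟨hsep p hpF p₀ hp₀F hne, ?_⟩
          calc dist p p₀ ≤ dist p x + dist x p₀ := dist_triangle _ _ _
            _ ≤ 2 * σ := by rw [dist_comm x p₀]; linarith
        · intro p hp q hq hpq
          exact hsep p (Finset.filter_subset _ _ (Finset.erase_subset _ _ hp)) q
            (Finset.filter_subset _ _ (Finset.erase_subset _ _ hq)) hpq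
      have hce : F₁.card ≤ (F₁.erase p₀).card + 1 := by
        rw [Finset.card_erase_of_mem hp₀]
        omega
      omega
  omega

/-- Iterated packing bound: at most `(2N+1)^(k+1)` pairwise `σ`-separated points fit in a
closed ball of radius `2^k * σ`. -/
lemma packing_card_le {N : ℕ} {τ : ℝ} (hτ : 1 < τ)
    (hE : IsEmpty (Besicovitch.SatelliteConfig Y N τ)) :
    ∀ (k : ℕ) (x : Y) (σ : ℝ), 0 < σ → ∀ F : Finset Y, (∀ p ∈ F, dist p x ≤ 2 ^ k * σ) →
      (∀ p ∈ F, ∀ q ∈ F, p ≠ q → σ ≤ dist p q) → F.card ≤ (2 * N + 1) ^ (k + 1) := by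
  classical
  intro k
  induction k with
  | zero =>
    intro x σ hσ F hd hsep
    rw [pow_one]
    exact doubleBall_card_le hτ hE x hσ F (fun p hp => by
      have := hd p hp; rw [pow_zero, one_mul] at this; linarith) hsep
  | succ k ih =>
    intro x σ hσ F hd hsep
    set β : ℝ := 2 ^ k * σ with hβ
    have hβpos : 0 < β := by positivity
    set P : Finset (Finset Y) :=
      F.powerset.filter (fun G => ∀ p ∈ G, ∀ q ∈ G, p ≠ q → β ≤ dist p q) with hP
    have hPne : P.Nonempty := ⟨∅, by simp [hP]⟩
    obtain ⟨G, hGP, hGmax⟩ := P.exists_max_image Finset.card hPne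
    rw [hP, Finset.mem_filter, Finset.mem_powerset] at hGP
    obtain ⟨hGF, hGsep⟩ := hGP
    have hcover : ∀ p ∈ F, ∃ g ∈ G, dist p g ≤ β := by
      intro p hp
      by_contra hno
      push_neg at hno
      have hpG : p ∉ G := fun h => absurd (hno p h) (by simp [hβpos.not_gt])
      have hmem : insert p G ∈ P := by
        rw [hP, Finset.mem_filter, Finset.mem_powerset]
        refine ⟨Finset.insert_subset hp hGF, ?_⟩
        intro a ha b hb hab
        rcases Finset.mem_insert.mp ha with rfl | ha'
        · rcases Finset.mem_insert.mp hb with rfl | hb'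
          · exact absurd rfl hab
          · exact (hno b hb').le
        · rcases Finset.mem_insert.mp hb with rfl | hb'
          · rw [dist_comm]; exact (hno a ha').le
          · exact hGsep a ha' b hb' hab
      have := hGmax _ hmem
      rw [Finset.card_insert_of_notMem hpG] at this
      omega
    have hsub : F ⊆ G.biUnion (fun g => F.filter fun p => dist p g ≤ β) := by
      intro p hp
      obtain ⟨g, hg, hdist⟩ := hcover p hp
      exact Finset.mem_biUnion.mpr ⟨g, hg, Finset.mem_filter.mpr ⟨hp, hdist⟩⟩
    have hGcard : G.card ≤ 2 * N + 1 := by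
      refine doubleBall_card_le hτ hE x hβpos G ?_ hGsep
      intro p hp
      have := hd p (hGF hp)
      rw [hβ]; rw [pow_succ] at this; linarith
    have hfil : ∀ g ∈ G, (F.filter fun p => dist p g ≤ β).card ≤ (2 * N + 1) ^ (k + 1) := by
      intro g hg
      refine ih g σ hσ _ (fun p hp => (Finset.mem_filter.mp hp).2) ?_
      intro p hp q hq hpq
      exact hsep p (Finset.filter_subset _ _ hp) q (Finset.filter_subset _ _ hq) hpq
    calc F.card ≤ (G.biUnion (fun g => F.filter fun p => dist p g ≤ β)).card :=
          Finset.card_le_card hsub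
      _ ≤ ∑ g ∈ G, (F.filter fun p => dist p g ≤ β).card := Finset.card_biUnion_le
      _ ≤ ∑ _g ∈ G, (2 * N + 1) ^ (k + 1) := Finset.sum_le_sum hfil
      _ = G.card * (2 * N + 1) ^ (k + 1) := by rw [Finset.sum_const, smul_eq_mul]
      _ ≤ (2 * N + 1) * (2 * N + 1) ^ (k + 1) := by
          exact Nat.mul_le_mul_right _ hGcard
      _ = (2 * N + 1) ^ (k + 2) := by ring

variable [MeasurableSpace Y]

lemma badBall_null {N : ℕ} {τ : ℝ} (hτ : 1 < τ)
    (hE : IsEmpty (Besicovitch.SatelliteConfig Y N τ))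
    (hpack : ∀ (k : ℕ) (x : Y) (σ : ℝ), 0 < σ → ∀ F : Finset Y,
      (∀ p ∈ F, dist p x ≤ 2 ^ k * σ) →
      (∀ p ∈ F, ∀ q ∈ F, p ≠ q → σ ≤ dist p q) → F.card ≤ (2 * N + 1) ^ (k + 1))
    (μ : Measure Y) {s₀ : ℕ} (hs₀ : 2 * (2 * N + 1) ≤ 2 ^ s₀)
    {r : ℝ} (hr : 0 < r) (x : Y) :
    μ ({y | ∀ ρ, 0 < ρ → ρ ≤ r → μ (Metric.closedBall y ρ) < ENNReal.ofReal (ρ ^ s₀)}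
        ∩ Metric.closedBall x r) = 0 := by
  classical
  set M : ℕ := 2 * N + 1 with hM
  set T : Set Y := {y | ∀ ρ, 0 < ρ → ρ ≤ r → μ (Metric.closedBall y ρ) < ENNReal.ofReal (ρ ^ s₀)}
      ∩ Metric.closedBall x r with hT
  have key : ∀ k : ℕ, μ T ≤ (M : ℝ≥0∞) ^ (k + 1) * ENNReal.ofReal ((r / 2 ^ k) ^ s₀) := by
    intro k
    set ρk : ℝ := r / 2 ^ k with hρk
    have h2k : (0:ℝ) < 2 ^ k := by positivity
    have hρkpos : 0 < ρk := by positivity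
    have h1le : (1:ℝ) ≤ 2 ^ k := one_le_pow₀ (by norm_num)
    have hρkr : ρk ≤ r := by
      rw [hρk, div_le_iff₀ h2k]
      nlinarith
    have hrad : r = 2 ^ k * ρk := by
      rw [hρk]; field_simp
    have hcount : ∀ F : Finset Y, ↑F ⊆ T →
        (∀ p ∈ F, ∀ q ∈ F, p ≠ q → ρk ≤ dist p q) → F.card ≤ M ^ (k + 1) := by
      intro F hFT hFsep
      refine hpack k x ρk hρkpos F (fun p hp => ?_) hFsep
      have h2 := (hFT hp).2
      rw [Metric.mem_closedBall] at h2
      linarith [hrad.le]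
    set Q : ℕ → Prop := fun n => ∃ F : Finset Y, ↑F ⊆ T ∧
      (∀ p ∈ F, ∀ q ∈ F, p ≠ q → ρk ≤ dist p q) ∧ F.card = n with hQ
    have hQ0 : Q 0 := ⟨∅, by simp⟩
    have hQle : ∀ n, Q n → n ≤ M ^ (k + 1) := by
      rintro n ⟨F, h1, h2, rfl⟩
      exact hcount F h1 h2
    obtain ⟨F, hFT, hFsep, hFcard⟩ :
        Q (Nat.findGreatest Q (M ^ (k + 1))) := Nat.findGreatest_spec (Nat.zero_le _) hQ0
    -- maximality gives a covering of T by the balls of radius ρk centred at F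
    have hcover : T ⊆ ⋃ p ∈ F, Metric.closedBall p ρk := by
      intro t ht
      by_contra hno
      simp only [Set.mem_iUnion, Metric.mem_closedBall, not_exists] at hno
      have htF : t ∉ F := fun h => by
        have := hno t h
        simp only [dist_self] at this
        exact this hρkpos.le
      have hQins : Q (F.card + 1) := by
        refine ⟨insert t F, ?_, ?_, by rw [Finset.card_insert_of_notMem htF]⟩
        · intro p hp
          rcases Finset.mem_insert.mp (by exact_mod_cast hp) with rfl | hpF
          · exact ht
          · exact hFT hpF
        · intro p hp q hq hpq
          rcases Finset.mem_insert.mp hp with rfl | hp'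
          · rcases Finset.mem_insert.mp hq with rfl | hq'
            · exact absurd rfl hpq
            · exact (not_le.mp (hno q hq')).le
          · rcases Finset.mem_insert.mp hq with rfl | hq'
            · rw [dist_comm]; exact (not_le.mp (hno p hp')).le
            · exact hFsep p hp' q hq' hpq
      have := Nat.le_findGreatest (m := F.card + 1) (by
        have := hQle _ hQins; exact this) hQins
      omega
    have hμT : μ T ≤ ∑ p ∈ F, μ (Metric.closedBall p ρk) := by
      calc μ T ≤ μ (⋃ p ∈ F, Metric.closedBall p ρk) := measure_mono hcover
        _ ≤ ∑ p ∈ F, μ (Metric.closedBall p ρk) := measure_biUnion_finset_le _ _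
    have hball : ∀ p ∈ F, μ (Metric.closedBall p ρk) ≤ ENNReal.ofReal (ρk ^ s₀) := by
      intro p hp
      exact ((hFT hp).1 ρk hρkpos hρkr).le
    calc μ T ≤ ∑ p ∈ F, μ (Metric.closedBall p ρk) := hμT
      _ ≤ ∑ _p ∈ F, ENNReal.ofReal (ρk ^ s₀) := Finset.sum_le_sum hball
      _ = (F.card : ℝ≥0∞) * ENNReal.ofReal (ρk ^ s₀) := by
          rw [Finset.sum_const, nsmul_eq_mul]
      _ ≤ (M : ℝ≥0∞) ^ (k + 1) * ENNReal.ofReal (ρk ^ s₀) := by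
          have hc : (F.card : ℝ≥0∞) ≤ (M : ℝ≥0∞) ^ (k + 1) := by
            exact_mod_cast hQle _ ⟨F, hFT, hFsep, rfl⟩
          exact mul_le_mul_left hc _
  -- step 2: the bound tends to zero
  have hμT0 : μ T = 0 := by
    have hb : ∀ k : ℕ, (M : ℝ≥0∞) ^ (k + 1) * ENNReal.ofReal ((r / 2 ^ k) ^ s₀)
        ≤ ENNReal.ofReal ((M : ℝ) * r ^ s₀ * (1 / 2 : ℝ) ^ k) := by
      intro k
      have hMpos : (0:ℝ) < M := by positivity
      rw [show ((M : ℝ≥0∞) ^ (k+1)) = ENNReal.ofReal ((M:ℝ) ^ (k+1)) by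
            rw [ENNReal.ofReal_pow hMpos.le]; norm_cast]
      rw [← ENNReal.ofReal_mul (by positivity)]
      apply ENNReal.ofReal_le_ofReal
      have hpow : ((M:ℝ) * 2) ^ k ≤ (2:ℝ) ^ (k * s₀) := by
        calc ((M:ℝ) * 2) ^ k ≤ ((2:ℝ) ^ s₀) ^ k := by
              apply pow_le_pow_left₀ (by positivity)
              have h2 : ((2 * M : ℕ) : ℝ) ≤ ((2 ^ s₀ : ℕ) : ℝ) := by exact_mod_cast hs₀
              have hMc : ((2 * M : ℕ) : ℝ) = 2 * (M:ℝ) := by push_cast; ring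
              have h2s : ((2 ^ s₀ : ℕ) : ℝ) = (2:ℝ) ^ s₀ := by push_cast; ring
              rw [hMc, h2s] at h2
              linarith
          _ = (2:ℝ) ^ (k * s₀) := by rw [← pow_mul, mul_comm]
      have hfrac : (M:ℝ) ^ k / (2:ℝ) ^ (k * s₀) ≤ ((1:ℝ) / 2) ^ k := by
        rw [div_le_iff₀ (by positivity), div_pow, one_pow]
        rw [div_mul_eq_mul_div, le_div_iff₀ (by positivity)]
        calc (M:ℝ) ^ k * 2 ^ k = ((M:ℝ) * 2) ^ k := (mul_pow _ _ _).symm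
          _ ≤ (2:ℝ) ^ (k * s₀) := hpow
          _ = 1 * (2:ℝ) ^ (k * s₀) := (one_mul _).symm
      have heq : (M:ℝ) ^ (k + 1) * (r / 2 ^ k) ^ s₀
          = (M:ℝ) * r ^ s₀ * ((M:ℝ) ^ k / (2:ℝ) ^ (k * s₀)) := by
        rw [div_pow, ← pow_mul, pow_succ]
        field_simp
      rw [heq]
      gcongr
    have htend : Tendsto (fun k : ℕ => ENNReal.ofReal ((M : ℝ) * r ^ s₀ * (1 / 2 : ℝ) ^ k))
        atTop (𝓝 0) := by
      rw [show (0:ℝ≥0∞) = ENNReal.ofReal 0 by simp]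
      apply ENNReal.tendsto_ofReal
      have : Tendsto (fun k : ℕ => ((1:ℝ) / 2) ^ k) atTop (𝓝 0) :=
        tendsto_pow_atTop_nhds_zero_of_lt_one (by norm_num) (by norm_num)
      simpa using this.const_mul ((M : ℝ) * r ^ s₀)
    have hle : μ T ≤ 0 :=
      ge_of_tendsto htend (Eventually.of_forall fun k => (key k).trans (hb k))
    exact le_antisymm hle zero_le
  exact hμT0

lemma ae_frequently_pow_le_measure_closedBall [TopologicalSpace.SeparableSpace Y]
    {N : ℕ} {τ : ℝ} (hτ : 1 < τ)
    (hE : IsEmpty (Besicovitch.SatelliteConfig Y N τ))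
    (hpack : ∀ (k : ℕ) (x : Y) (σ : ℝ), 0 < σ → ∀ F : Finset Y,
      (∀ p ∈ F, dist p x ≤ 2 ^ k * σ) →
      (∀ p ∈ F, ∀ q ∈ F, p ≠ q → σ ≤ dist p q) → F.card ≤ (2 * N + 1) ^ (k + 1))
    (μ : Measure Y) {s₀ : ℕ} (hs₀ : 2 * (2 * N + 1) ≤ 2 ^ s₀) :
    ∀ᵐ y ∂μ, ∃ᶠ ρ in 𝓝[>] (0:ℝ), ENNReal.ofReal (ρ ^ s₀) ≤ μ (Metric.closedBall y ρ) := by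
  obtain ⟨D, hDcount, hDdense⟩ := TopologicalSpace.exists_countable_dense Y
  set Bad : ℝ → Set Y := fun r =>
    {y | ∀ ρ, 0 < ρ → ρ ≤ r → μ (Metric.closedBall y ρ) < ENNReal.ofReal (ρ ^ s₀)} with hBad
  have hrj : ∀ j : ℕ, (0:ℝ) < 1 / (j + 1) := fun j => by positivity
  have hnull : μ (⋃ j : ℕ, ⋃ x ∈ D, (Bad (1 / (j + 1)) ∩ Metric.closedBall x (1 / (j + 1)))) = 0 := by
    refine measure_iUnion_null fun j => ?_
    refine (measure_biUnion_null_iff hDcount).mpr fun x _ => ?_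
    exact badBall_null hτ hE hpack μ hs₀ (hrj j) x
  filter_upwards [measure_eq_zero_iff_ae_notMem.mp hnull] with y hy
  have hyj : ∀ j : ℕ, ∃ ρ : ℝ, 0 < ρ ∧ ρ ≤ 1 / ((j:ℝ) + 1) ∧
      ENNReal.ofReal (ρ ^ s₀) ≤ μ (Metric.closedBall y ρ) := by
    intro j
    by_contra h
    push_neg at h
    have hyBad : y ∈ Bad (1 / (j + 1)) := by
      intro ρ h1 h2
      exact lt_of_not_ge fun hc => absurd hc (not_le.mpr (h ρ h1 h2))
    obtain ⟨x, hxD, hxdist⟩ := hDdense.exists_dist_lt y (hrj j)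
    exact hy (Set.mem_iUnion.mpr ⟨j, Set.mem_biUnion hxD
      ⟨hyBad, Metric.mem_closedBall.mpr hxdist.le⟩⟩)
  rw [Filter.frequently_iff]
  intro U hU
  obtain ⟨u, hu, hsub⟩ := mem_nhdsGT_iff_exists_Ioo_subset.mp hU
  obtain ⟨j, hj⟩ := exists_nat_one_div_lt (show (0:ℝ) < u from hu)
  obtain ⟨ρ, h1, h2, h3⟩ := hyj j
  exact ⟨ρ, hsub ⟨h1, lt_of_le_of_lt h2 hj⟩, h3⟩


/-- Rational radii control all radii. -/
lemma le_ofReal_rpow_of_forall_rat {W : Type*} [MetricSpace W] [MeasurableSpace W]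
    (mW : Measure W) (w : W) {a c : ℝ}
    (h : ∀ q : ℚ, (q : ℝ) ∈ Set.Ioo (0:ℝ) c → mW (Metric.closedBall w q) ≤
      ENNReal.ofReal ((q : ℝ) ^ a)) :
    ∀ t ∈ Set.Ioo (0:ℝ) c, mW (Metric.closedBall w t) ≤ ENNReal.ofReal (t ^ a) := by
  intro t ht
  have hq : ∀ j : ℕ, ∃ q : ℚ, t < q ∧ (q : ℝ) < min c (t + 1 / (j + 1)) := by
    intro j
    apply exists_rat_btwn
    refine lt_min ht.2 ?_
    have : (0:ℝ) < 1 / (j + 1) := by positivity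
    linarith
  choose q hq1 hq2 using hq
  have hqt : Filter.Tendsto (fun j : ℕ => (q j : ℝ)) atTop (𝓝 t) := by
    refine tendsto_of_tendsto_of_tendsto_of_le_of_le
      (g := fun _ : ℕ => t) (h := fun j : ℕ => t + 1 / (j + 1))
      tendsto_const_nhds ?_ (fun j => (hq1 j).le) (fun j => ((hq2 j).trans_le (min_le_right _ _)).le)
    have h0 : Filter.Tendsto (fun j : ℕ => 1 / ((j:ℝ) + 1)) atTop (𝓝 0) :=
      tendsto_one_div_add_atTop_nhds_zero_nat
    simpa using tendsto_const_nhds.add h0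
  have hcont : Filter.Tendsto (fun j : ℕ => ENNReal.ofReal ((q j : ℝ) ^ a)) atTop
      (𝓝 (ENNReal.ofReal (t ^ a))) := by
    apply (ENNReal.continuous_ofReal.continuousAt.comp
      (Real.continuousAt_rpow_const t a (Or.inl (ne_of_gt ht.1)))).tendsto.comp hqt
  refine ge_of_tendsto hcont (Eventually.of_forall fun j => ?_)
  calc mW (Metric.closedBall w t) ≤ mW (Metric.closedBall w (q j)) :=
        measure_mono (Metric.closedBall_subset_closedBall (hq1 j).le)
    _ ≤ ENNReal.ofReal ((q j : ℝ) ^ a) :=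
        h (q j) ⟨lt_trans ht.1 (hq1 j), lt_of_lt_of_le (hq2 j) (min_le_left _ _)⟩

/-- A frequent polynomial lower bound on ball measures gives a frequent upper bound on the
dimension quotient. -/
lemma frequently_dimQuot_le {W : Type*} [MetricSpace W] [MeasurableSpace W]
    (m : Measure W) [IsFiniteMeasure m] (w : W) {s₀ : ℕ}
    (h : ∃ᶠ ρ in 𝓝[>] (0:ℝ), ENNReal.ofReal (ρ ^ s₀) ≤ m (Metric.closedBall w ρ)) :
    ∃ᶠ ρ in 𝓝[>] (0:ℝ), dimQuot m w ρ ≤ (s₀ : ℝ) := by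
  refine (h.and_eventually (Ioo_mem_nhdsGT (by norm_num : (0:ℝ) < 1))).mono ?_
  rintro ρ ⟨hle, hρ0, hρ1⟩
  have hlogρ : Real.log ρ < 0 := Real.log_neg hρ0 hρ1
  have hpow : (0:ℝ) < ρ ^ s₀ := by positivity
  have htR : ρ ^ s₀ ≤ (m (Metric.closedBall w ρ)).toReal :=
    (ENNReal.ofReal_le_iff_le_toReal (measure_ne_top m _)).mp hle
  have hlog : (s₀ : ℝ) * Real.log ρ ≤ Real.log (m (Metric.closedBall w ρ)).toReal := by
    calc (s₀ : ℝ) * Real.log ρ = Real.log (ρ ^ s₀) := by rw [Real.log_pow]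
      _ ≤ _ := Real.log_le_log hpow htR
  rw [dimQuot, div_le_iff_of_neg hlogρ]
  linarith
end Aux

/-- Let `Y` be a complete separable metric space with the Besicovitch
covering property, `Z` a complete separable metric space, `π : Y → Z` Lipschitz, `μ` a
Borel probability measure on `Y`, `ν = π_*μ` and `(μz z)` a disintegration of `μ` over
`ν` along `π`.  If for `μ`-a.e. `y` the lower pointwise dimension of `μz (π y)` at `y`
is `≥ γ` and the lower pointwise dimension of `ν` at `π y` is `≥ δ (π y)`, then for
`μ`-a.e. `y` the lower pointwise dimension of `μ` at `y` is `≥ γ + δ (π y)`. -/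
theorem lowerDim_superadditive_besicovitch
    {Y Z : Type*}
    [MetricSpace Y] [CompleteSpace Y] [TopologicalSpace.SeparableSpace Y]
    [MeasurableSpace Y] [BorelSpace Y] [HasBesicovitchCovering Y]
    [MetricSpace Z] [CompleteSpace Z] [TopologicalSpace.SeparableSpace Z]
    [MeasurableSpace Z] [BorelSpace Z]
    (π : Y → Z) (K : NNReal) (hπ : LipschitzWith K π)
    (μ : Measure Y) [IsProbabilityMeasure μ]
    (μz : Z → Measure Y)
    (hfam : ∀ s : Set Y, MeasurableSet s → Measurable fun z => μz z s)
    (hprob : ∀ z, IsProbabilityMeasure (μz z))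
    (hfiber : ∀ᵐ z ∂(μ.map π), μz z ((π ⁻¹' {z})ᶜ) = 0)
    (hdis : ∀ s : Set Y, MeasurableSet s → μ s = ∫⁻ z, μz z s ∂(μ.map π))
    (γ : ℝ) (hγ : 0 ≤ γ)
    (δ : Z → ℝ) (hδm : Measurable δ) (hδ0 : ∀ z, 0 ≤ δ z)
    (hi : ∀ᵐ y ∂μ, γ ≤ lowerPointwiseDim (μz (π y)) y)
    (hii : ∀ᵐ y ∂μ, δ (π y) ≤ lowerPointwiseDim (μ.map π) (π y)) :
    ∀ᵐ y ∂μ, γ + δ (π y) ≤ lowerPointwiseDim μ y := by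
  classical
  obtain ⟨N, τ, hτ, hE⟩ := ‹HasBesicovitchCovering Y›.no_satelliteConfig
  have hpack := packing_card_le hτ hE
  haveI : SecondCountableTopology Y := UniformSpace.secondCountable_of_separable Y
  have hπm : Measurable π := hπ.continuous.measurable
  haveI hνprob : IsProbabilityMeasure (μ.map π) := Measure.isProbabilityMeasure_map hπm.aemeasurable
  set ν : Measure Z := μ.map π with hν
  -- kernel packaging for measurability
  set κ : ProbabilityTheory.Kernel Z Y :=
    ⟨μz, Measure.measurable_of_measurable_coe _ (fun s hs => hfam s hs)⟩ with hκ
  haveI : ProbabilityTheory.IsMarkovKernel κ := ⟨fun z => hprob z⟩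
  have hmeasf : ∀ t : ℝ, Measurable fun y => μz (π y) (Metric.closedBall y t) := by
    intro t
    have hset : MeasurableSet {p : Y × Y | dist p.2 p.1 ≤ t} :=
      (isClosed_le (continuous_dist.comp (continuous_snd.prodMk continuous_fst))
        continuous_const).measurableSet
    have h2 := ProbabilityTheory.Kernel.measurable_kernel_prodMk_left
      (κ := κ.comap π hπm) hset
    have heq : (fun a : Y => (κ.comap π hπm) a (Prod.mk a ⁻¹' {p : Y × Y | dist p.2 p.1 ≤ t}))
        = fun y => μz (π y) (Metric.closedBall y t) := by
      funext y
      rw [ProbabilityTheory.Kernel.comap_apply]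
      rfl
    rwa [heq] at h2
  -- choice of the coboundedness exponent
  set M : ℕ := 2 * N + 1 with hM
  set s₀ : ℕ := M + 1 with hs₀def
  have hs₀ : 2 * M ≤ 2 ^ s₀ := by
    have h1 : M < 2 ^ M := Nat.lt_two_pow_self
    calc 2 * M ≤ 2 * 2 ^ M := by omega
      _ = 2 ^ s₀ := by rw [hs₀def, pow_succ]; ring
  have hfreq : ∀ᵐ y ∂μ, ∃ᶠ ρ in 𝓝[>] (0:ℝ), dimQuot μ y ρ ≤ (s₀ : ℝ) := by
    filter_upwards [ae_frequently_pow_le_measure_closedBall hτ hE hpack μ hs₀] with y hy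
    exact frequently_dimQuot_le μ y hy
  have hεpos : ∀ n : ℕ, (0:ℝ) < 1 / (n + 1) := fun n => by positivity
  -- good sets for the fibre measures
  set A : ℕ → ℕ → Set Y := fun n m =>
    ⋂ q : ℚ, {y | (q:ℝ) ∈ Set.Ioo (0:ℝ) (1/(m+1)) →
      μz (π y) (Metric.closedBall y q) ≤ ENNReal.ofReal ((q:ℝ) ^ (γ - 1/(n+1)))} with hA
  have hAmeas : ∀ n m, MeasurableSet (A n m) := by
    intro n m
    refine MeasurableSet.iInter fun q => ?_
    by_cases hq : (q:ℝ) ∈ Set.Ioo (0:ℝ) (1/(m+1))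
    · have : {y : Y | (q:ℝ) ∈ Set.Ioo (0:ℝ) (1/(m+1)) →
          μz (π y) (Metric.closedBall y q) ≤ ENNReal.ofReal ((q:ℝ) ^ (γ - 1/(n+1)))}
          = {y : Y | μz (π y) (Metric.closedBall y q) ≤ ENNReal.ofReal ((q:ℝ) ^ (γ - 1/(n+1)))} := by
        ext y; exact ⟨fun h => h hq, fun h _ => h⟩
      rw [this]
      exact measurableSet_le (hmeasf q) measurable_const
    · have : {y : Y | (q:ℝ) ∈ Set.Ioo (0:ℝ) (1/(m+1)) →
          μz (π y) (Metric.closedBall y q) ≤ ENNReal.ofReal ((q:ℝ) ^ (γ - 1/(n+1)))}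
          = Set.univ := by
        ext y
        simp only [Set.mem_setOf_eq, Set.mem_univ, iff_true]
        exact fun h => absurd h hq
      rw [this]
      exact MeasurableSet.univ
  have hAbound : ∀ n m (y : Y), y ∈ A n m → ∀ t ∈ Set.Ioo (0:ℝ) (1/(m+1)),
      μz (π y) (Metric.closedBall y t) ≤ ENNReal.ofReal (t ^ (γ - 1/(n+1))) := by
    intro n m y hy
    exact le_ofReal_rpow_of_forall_rat (μz (π y)) y (fun q hq => (Set.mem_iInter.mp hy q) hq)
  -- a.e. every point lies in some good set
  have hiA : ∀ n : ℕ, ∀ᵐ y ∂μ, ∃ m : ℕ, y ∈ A n m := by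
    intro n
    filter_upwards [hi] with y hy
    haveI := hprob (π y)
    have hev := eventually_measure_closedBall_le_rpow (μz (π y)) y hy
      (show γ - 1/(n+1) < γ by linarith [hεpos n])
    obtain ⟨u, hu, hsub⟩ := mem_nhdsGT_iff_exists_Ioo_subset.mp hev
    obtain ⟨m, hm⟩ := exists_nat_one_div_lt (show (0:ℝ) < u from hu)
    exact ⟨m, Set.mem_iInter.mpr fun q hq => hsub ⟨hq.1, hq.2.trans hm⟩⟩
  -- a.e. eventual bound for the base measure
  have hiiB : ∀ n : ℕ, ∀ᵐ y ∂μ, ∀ᶠ t in 𝓝[>] (0:ℝ),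
      ν (Metric.closedBall (π y) t) ≤ ENNReal.ofReal (t ^ (δ (π y) - 1/(n+1))) := by
    intro n
    filter_upwards [hii] with y hy
    exact eventually_measure_closedBall_le_rpow ν (π y) hy (by linarith [hεpos n])
  -- Lipschitz constant bounded below by 1
  set K' : NNReal := max K 1 with hK'
  have hπ' : LipschitzWith K' π := hπ.weaken (le_max_left _ _)
  have hK'1 : (1:ℝ) ≤ (K' : ℝ) := by exact_mod_cast le_max_right K 1
  have hK'0 : (0:ℝ) < (K' : ℝ) := lt_of_lt_of_le one_pos hK'1
  -- the key disintegration estimate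
  have hL9 : ∀ (n m : ℕ) (y : Y) (ρ : ℝ), 0 < ρ → 2*ρ < 1/(m+1) →
      μ (Metric.closedBall y ρ ∩ A n m) ≤
        ENNReal.ofReal ((2*ρ) ^ (γ - 1/(n+1))) * ν (Metric.closedBall (π y) ((K':ℝ) * ρ)) := by
    intro n m y ρ hρ h2ρ
    have hSmeas : MeasurableSet (Metric.closedBall y ρ ∩ A n m) :=
      measurableSet_closedBall.inter (hAmeas n m)
    rw [hdis _ hSmeas]
    have hb : ∀ᵐ z ∂ν, μz z (Metric.closedBall y ρ ∩ A n m) ≤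
        (Metric.closedBall (π y) ((K':ℝ) * ρ)).indicator
          (fun _ => ENNReal.ofReal ((2*ρ) ^ (γ - 1/(n+1)))) z := by
      filter_upwards [hfiber] with z hz
      by_cases hzball : z ∈ Metric.closedBall (π y) ((K':ℝ) * ρ)
      · rw [Set.indicator_of_mem hzball]
        by_cases hex : ∃ y', y' ∈ Metric.closedBall y ρ ∩ A n m ∧ π y' = z
        · obtain ⟨y', ⟨hy'ball, hy'A⟩, hy'z⟩ := hex
          have hsub2 : Metric.closedBall y ρ ∩ A n m ⊆ Metric.closedBall y' (2*ρ) := by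
            intro w hw
            rw [Metric.mem_closedBall]
            have hw1 : dist w y ≤ ρ := Metric.mem_closedBall.mp hw.1
            have hw2 : dist y y' ≤ ρ := by
              rw [dist_comm]; exact Metric.mem_closedBall.mp hy'ball
            calc dist w y' ≤ dist w y + dist y y' := dist_triangle _ _ _
              _ ≤ 2*ρ := by linarith
          calc μz z (Metric.closedBall y ρ ∩ A n m)
              ≤ μz z (Metric.closedBall y' (2*ρ)) := measure_mono hsub2
            _ ≤ ENNReal.ofReal ((2*ρ) ^ (γ - 1/(n+1))) := by
                have hb2 := hAbound n m y' hy'A (2*ρ) ⟨by linarith, h2ρ⟩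
                rwa [hy'z] at hb2
        · have hsubc : Metric.closedBall y ρ ∩ A n m ⊆ (π ⁻¹' {z})ᶜ := by
            intro w hw hwz
            exact hex ⟨w, hw, hwz⟩
          calc μz z (Metric.closedBall y ρ ∩ A n m) ≤ μz z ((π ⁻¹' {z})ᶜ) := measure_mono hsubc
            _ = 0 := hz
            _ ≤ _ := zero_le
      · rw [Set.indicator_of_notMem hzball]
        have hsubc : Metric.closedBall y ρ ∩ A n m ⊆ (π ⁻¹' {z})ᶜ := by
          intro w hw hwz
          apply hzball
          rw [← show π w = z from hwz]
          rw [Metric.mem_closedBall]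
          calc dist (π w) (π y) ≤ (K':ℝ) * dist w y := hπ'.dist_le_mul w y
            _ ≤ (K':ℝ) * ρ := by
                have := Metric.mem_closedBall.mp hw.1
                exact mul_le_mul_of_nonneg_left this hK'0.le
        calc μz z (Metric.closedBall y ρ ∩ A n m) ≤ μz z ((π ⁻¹' {z})ᶜ) := measure_mono hsubc
          _ = 0 := hz
          _ ≤ _ := le_refl _
    calc ∫⁻ z, μz z (Metric.closedBall y ρ ∩ A n m) ∂ν
        ≤ ∫⁻ z, (Metric.closedBall (π y) ((K':ℝ) * ρ)).indicator
            (fun _ => ENNReal.ofReal ((2*ρ) ^ (γ - 1/(n+1)))) z ∂ν := lintegral_mono_ae hb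
      _ = ENNReal.ofReal ((2*ρ) ^ (γ - 1/(n+1))) * ν (Metric.closedBall (π y) ((K':ℝ) * ρ)) :=
          lintegral_indicator_const measurableSet_closedBall _
  -- density points
  have hdens : ∀ n m : ℕ, ∀ᵐ y ∂μ, y ∈ A n m →
      Filter.Tendsto (fun ρ => μ (A n m ∩ Metric.closedBall y ρ) / μ (Metric.closedBall y ρ))
        (𝓝[>] 0) (𝓝 1) := by
    intro n m
    filter_upwards [Besicovitch.ae_tendsto_measure_inter_div_of_measurableSet μ (hAmeas n m)]
      with y hy hyA
    simpa [Set.indicator_of_mem hyA] using hy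
  -- the main estimate, for each n
  have main : ∀ n : ℕ, ∀ᵐ y ∂μ, γ + δ (π y) - 3*(1/(n+1)) ≤ lowerPointwiseDim μ y := by
    intro n
    have hdens' : ∀ᵐ y ∂μ, ∀ m : ℕ, y ∈ A n m →
        Filter.Tendsto (fun ρ => μ (A n m ∩ Metric.closedBall y ρ) / μ (Metric.closedBall y ρ))
          (𝓝[>] 0) (𝓝 1) := ae_all_iff.mpr (hdens n)
    filter_upwards [hiA n, hiiB n, hdens', hfreq] with y hyA hyν hyd hyfreq
    obtain ⟨m, hm⟩ := hyA
    have hK't : Filter.Tendsto (fun ρ : ℝ => (K':ℝ) * ρ) (𝓝[>] (0:ℝ)) (𝓝[>] (0:ℝ)) := by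
      apply tendsto_nhdsWithin_of_tendsto_nhds_of_eventually_within
      · have h1 : Filter.Tendsto (fun ρ : ℝ => (K':ℝ) * ρ) (𝓝 (0:ℝ)) (𝓝 ((K':ℝ) * 0)) :=
          (continuous_const.mul continuous_id).tendsto 0
        rw [mul_zero] at h1
        exact h1.mono_left nhdsWithin_le_nhds
      · filter_upwards [self_mem_nhdsWithin] with ρ hρ
        have : (0:ℝ) < ρ := hρ
        exact Set.mem_Ioi.mpr (by positivity)
    have E1 : ∀ᶠ ρ in 𝓝[>] (0:ℝ),
        (1/2 : ℝ≥0∞) < μ (A n m ∩ Metric.closedBall y ρ) / μ (Metric.closedBall y ρ) :=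
      (hyd m hm).eventually (eventually_gt_nhds (by norm_num))
    have E3 : ∀ᶠ ρ in 𝓝[>] (0:ℝ), ρ ∈ Set.Ioo (0:ℝ) (min ((1/(m+1))/2) 1) :=
      Ioo_mem_nhdsGT (by positivity)
    have E4 : ∀ᶠ ρ in 𝓝[>] (0:ℝ), ν (Metric.closedBall (π y) ((K':ℝ)*ρ)) ≤
        ENNReal.ofReal (((K':ℝ)*ρ) ^ (δ (π y) - 1/(n+1))) := hK't.eventually hyν
    set c₀ : ℝ := Real.log 2 + (γ - 1/(n+1)) * Real.log 2 + (δ (π y) - 1/(n+1)) * Real.log (K':ℝ)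
      with hc₀def
    have E6 : ∀ᶠ ρ in 𝓝[>] (0:ℝ), -(1/(n+1):ℝ) ≤ c₀ / Real.log ρ := by
      have hlog : Filter.Tendsto Real.log (𝓝[>] (0:ℝ)) atBot :=
        Real.tendsto_log_nhdsGT_zero
      have hcomp := (tendsto_neg_atBot_atTop.comp hlog).inv_tendsto_atTop
      have h0 : Filter.Tendsto (fun ρ => c₀ / Real.log ρ) (𝓝[>] (0:ℝ)) (𝓝 0) := by
        have h1 := hcomp.const_mul (-c₀)
        rw [mul_zero] at h1
        refine h1.congr fun ρ => ?_
        show -c₀ * (-(Real.log ρ))⁻¹ = c₀ / Real.log ρ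
        rw [inv_neg, div_eq_mul_inv]
        ring
      exact h0.eventually (eventually_ge_nhds (by linarith [hεpos n]))
    have hev : ∀ᶠ ρ in 𝓝[>] (0:ℝ), γ + δ (π y) - 3*(1/(n+1)) ≤ dimQuot μ y ρ := by
      filter_upwards [E1, E3, E4, E6] with ρ h1 h3 h4 h6
      obtain ⟨hρ0, hρcap⟩ := h3
      have hρ1 : ρ < 1 := lt_of_lt_of_le hρcap (min_le_right _ _)
      have h2ρ : 2*ρ < 1/(m+1) := by
        have := lt_of_lt_of_le hρcap (min_le_left _ _); linarith
      have hABpos : μ (A n m ∩ Metric.closedBall y ρ) ≠ 0 := by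
        intro h0
        rw [h0, ENNReal.zero_div] at h1
        exact (by norm_num : ¬ ((1:ℝ≥0∞)/2 < 0)) h1
      have hBpos : μ (Metric.closedBall y ρ) ≠ 0 := by
        intro h0
        exact hABpos (le_antisymm (le_trans (measure_mono Set.inter_subset_right) h0.le)
          zero_le)
      have hBne : μ (Metric.closedBall y ρ) ≠ ⊤ := measure_ne_top μ _
      have hhalf : μ (Metric.closedBall y ρ) ≤ 2 * μ (A n m ∩ Metric.closedBall y ρ) := by
        have h1' := (ENNReal.lt_div_iff_mul_lt (Or.inl hBpos) (Or.inl hBne)).mp h1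
        calc μ (Metric.closedBall y ρ) = 2 * ((1/2) * μ (Metric.closedBall y ρ)) := by
              rw [← mul_assoc, one_div,
                ENNReal.mul_inv_cancel (by norm_num) (by norm_num), one_mul]
          _ ≤ 2 * μ (A n m ∩ Metric.closedBall y ρ) := by
              gcongr
      have hchain : μ (Metric.closedBall y ρ) ≤
          2 * (ENNReal.ofReal ((2*ρ) ^ (γ - 1/(n+1))) *
            ENNReal.ofReal (((K':ℝ)*ρ) ^ (δ (π y) - 1/(n+1)))) := by
        calc μ (Metric.closedBall y ρ) ≤ 2 * μ (A n m ∩ Metric.closedBall y ρ) := hhalf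
          _ = 2 * μ (Metric.closedBall y ρ ∩ A n m) := by rw [Set.inter_comm]
          _ ≤ 2 * (ENNReal.ofReal ((2*ρ) ^ (γ - 1/(n+1))) *
              ν (Metric.closedBall (π y) ((K':ℝ) * ρ))) := by
              gcongr
              exact hL9 n m y ρ hρ0 h2ρ
          _ ≤ _ := by gcongr
      have hX : (0:ℝ) < (2*ρ) ^ (γ - 1/(n+1)) := Real.rpow_pos_of_pos (by linarith) _
      have hYp : (0:ℝ) < ((K':ℝ)*ρ) ^ (δ (π y) - 1/(n+1)) :=
        Real.rpow_pos_of_pos (by positivity) _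
      have hprod : (2:ℝ≥0∞) * (ENNReal.ofReal ((2*ρ) ^ (γ - 1/(n+1))) *
          ENNReal.ofReal (((K':ℝ)*ρ) ^ (δ (π y) - 1/(n+1))))
          = ENNReal.ofReal (2 * ((2*ρ) ^ (γ - 1/(n+1)) * ((K':ℝ)*ρ) ^ (δ (π y) - 1/(n+1)))) := by
        rw [ENNReal.ofReal_mul (by norm_num : (0:ℝ) ≤ 2), ENNReal.ofReal_mul hX.le]
        norm_num
      have htle : (μ (Metric.closedBall y ρ)).toReal ≤
          2 * ((2*ρ) ^ (γ - 1/(n+1)) * ((K':ℝ)*ρ) ^ (δ (π y) - 1/(n+1))) := by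
        rw [hprod] at hchain
        exact ENNReal.toReal_le_of_le_ofReal (by positivity) hchain
      have htpos : 0 < (μ (Metric.closedBall y ρ)).toReal := ENNReal.toReal_pos hBpos hBne
      have hlogρ : Real.log ρ < 0 := Real.log_neg hρ0 hρ1
      have hlogt : Real.log (μ (Metric.closedBall y ρ)).toReal ≤
          c₀ + ((γ - 1/(n+1)) + (δ (π y) - 1/(n+1))) * Real.log ρ := by
        calc Real.log (μ (Metric.closedBall y ρ)).toReal
            ≤ Real.log (2 * ((2*ρ) ^ (γ - 1/(n+1)) * ((K':ℝ)*ρ) ^ (δ (π y) - 1/(n+1)))) :=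
              Real.log_le_log htpos htle
          _ = Real.log 2 + ((γ - 1/(n+1)) * Real.log (2*ρ) +
              (δ (π y) - 1/(n+1)) * Real.log ((K':ℝ)*ρ)) := by
              rw [Real.log_mul (by norm_num) (by positivity),
                Real.log_mul hX.ne' hYp.ne',
                Real.log_rpow (by linarith), Real.log_rpow (by positivity)]
          _ = c₀ + ((γ - 1/(n+1)) + (δ (π y) - 1/(n+1))) * Real.log ρ := by
              rw [hc₀def, Real.log_mul (by norm_num) hρ0.ne',
                Real.log_mul (by positivity) hρ0.ne']
              ring
      have hc₀le : c₀ ≤ -(1/(n+1):ℝ) * Real.log ρ := by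
        rw [le_div_iff_of_neg hlogρ] at h6
        exact h6
      rw [dimQuot, le_div_iff_of_neg hlogρ]
      calc Real.log (μ (Metric.closedBall y ρ)).toReal
          ≤ c₀ + ((γ - 1/(n+1)) + (δ (π y) - 1/(n+1))) * Real.log ρ := hlogt
        _ ≤ -(1/(n+1):ℝ) * Real.log ρ +
            ((γ - 1/(n+1)) + (δ (π y) - 1/(n+1))) * Real.log ρ := by linarith
        _ = (γ + δ (π y) - 3*(1/(n+1))) * Real.log ρ := by ring
    exact le_lowerPointwiseDim μ y hev hyfreq
  have hall : ∀ᵐ y ∂μ, ∀ n : ℕ, γ + δ (π y) - 3*(1/(n+1)) ≤ lowerPointwiseDim μ y :=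
    ae_all_iff.mpr main
  filter_upwards [hall] with y hy
  have htendn : Filter.Tendsto (fun n : ℕ => γ + δ (π y) - 3*(1/((n:ℝ)+1))) atTop
      (𝓝 (γ + δ (π y))) := by
    have h0 : Filter.Tendsto (fun n : ℕ => 1 / ((n:ℝ) + 1)) atTop (𝓝 0) :=
      tendsto_one_div_add_atTop_nhds_zero_nat
    have h1 := tendsto_const_nhds (x := γ + δ (π y)) (f := atTop (α := ℕ)) |>.sub
      (h0.const_mul 3)
    simpa using h1
  exact le_of_tendsto htendn (Filter.Eventually.of_forall hy)
end

section
/- Let Y be a complete separable metric space satisfying the Besicovitch covering property, Z a standard Borel space, and π : Y → Z a Borel measurable map. Let μ be a Borel probability measure on Y, let ν = π_*μ be its push-forward, and let (μ_z)_{z∈Z} be a disintegration of μ over ν along π. Assume there exists a constant γ ≥ 0 such that for μ-almost every y ∈ Y the lower pointwise dimension of μ_{π(y)} at y is ≥ γ. Then for μ-almost every y ∈ Y, the lower pointwise dimension of μ at y is ≥ γ. -/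
open MeasureTheory Filter Topology

section LowerDimAuxSection

open Metric ENNReal NNReal

namespace LowerDimAux

/-- Greedy chain extraction for 2-coloured pairs. -/
lemma chain_lemma {α : Type*} (C : α → α → Bool) :
    ∀ (t : ℕ) (S : Finset α), 2 ^ t ≤ S.card →
      ∃ (v : Fin t → α) (col : Fin t → Bool),
        (∀ i, v i ∈ S) ∧ ∀ i j : Fin t, i < j → v i ≠ v j ∧ C (v i) (v j) = col i := by
  intro t
  induction t with
  | zero =>
      intro S _
      exact ⟨fun i => i.elim0, fun i => i.elim0, fun i => i.elim0, fun i => i.elim0⟩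
  | succ t ih =>
      intro S hS
      have hSne : S.Nonempty := by
        rw [← Finset.card_pos]
        exact lt_of_lt_of_le (Nat.pow_pos (by norm_num)) hS
      obtain ⟨x, hx⟩ := hSne
      classical
      set S' := S.erase x with hS'
      have hcard' : 2 ^ (t + 1) - 1 ≤ S'.card := by
        have hc : S'.card = S.card - 1 := by rw [hS']; exact Finset.card_erase_of_mem hx
        omega
      have hsplit : (S'.filter (fun y => C x y = true)).card
          + (S'.filter (fun y => ¬ (C x y = true))).card = S'.card :=
        Finset.card_filter_add_card_filter_not _
      have hBeq : S'.filter (fun y => ¬ (C x y = true)) = S'.filter (fun y => C x y = false) := by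
        apply Finset.filter_congr
        intro y _
        simp [Bool.not_eq_true]
      rw [hBeq] at hsplit
      have hex : ∃ b : Bool, 2 ^ t ≤ (S'.filter (fun y => C x y = b)).card := by
        by_contra hcon
        push_neg at hcon
        have h1 := hcon true
        have h2 := hcon false
        have := pow_succ 2 t
        omega
      obtain ⟨b, hb⟩ := hex
      obtain ⟨v', col', hv'mem, hv'⟩ := ih _ hb
      refine ⟨Fin.cons x v', Fin.cons b col', ?_, ?_⟩
      · intro i
        refine Fin.cases ?_ ?_ i
        · exact hx
        · intro j
          have := hv'mem j
          simp only [Fin.cons_succ]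
          exact S.erase_subset x (Finset.filter_subset _ _ this)
      · intro i j hij
        refine Fin.cases ?_ ?_ i hij
        · intro h0j
          obtain ⟨j', rfl⟩ : ∃ j', j = Fin.succ j' := by
            refine ⟨j.pred ?_, ?_⟩
            · exact Fin.pos_iff_ne_zero.mp h0j
            · simp
          have hmem := hv'mem j'
          have hC : C x (v' j') = b := (Finset.mem_filter.1 hmem).2
          have hne : x ≠ v' j' := by
            intro h
            have := Finset.mem_erase.1 (Finset.filter_subset _ _ hmem)
            exact this.1 h.symm
          simp only [Fin.cons_succ, Fin.cons_zero]
          exact ⟨hne, hC⟩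
        · intro i' hij'
          obtain ⟨j', rfl⟩ : ∃ j', j = Fin.succ j' := by
            refine ⟨j.pred ?_, ?_⟩
            · rintro rfl
              exact (Fin.not_lt_zero _) hij'
            · simp
          have : i' < j' := by
            simpa [Fin.succ_lt_succ_iff] using hij'
          simpa only [Fin.cons_succ] using hv' i' j' this


variable {Y : Type*} [MetricSpace Y]

/-- No `N+1` points with pairwise distances in a window `[D, 2D]`. -/
lemma no_window_points {N : ℕ} {τ : ℝ} (hτ : 1 < τ)
    (hSC : IsEmpty (Besicovitch.SatelliteConfig Y N τ))
    {D : ℝ} (hD : 0 < D) (p : Fin (N + 1) → Y)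
    (hlow : ∀ i j, i ≠ j → D ≤ dist (p i) (p j))
    (hhigh : ∀ i j, dist (p i) (p j) ≤ 2 * D) : False := by
  refine hSC.false ?_
  refine ⟨p, fun _ => D, fun _ => hD, ?_, ?_, ?_⟩
  · intro i j hij
    exact Or.inl ⟨hlow i j hij, le_mul_of_one_le_left hD.le hτ.le⟩
  · intro i hi
    exact ⟨hlow i _ (Fin.ne_of_lt hi), le_mul_of_one_le_left hD.le hτ.le⟩
  · intro i hi
    have := hhigh i (Fin.last N)
    linarith

/-- In a space with no satellite configurations, an `R/2`-separated subset of a ball of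
radius `R` has less than `2 ^ (2 * N + 2)` elements. -/
lemma sep_card_lt {N : ℕ} {τ : ℝ} (hτ : 1 < τ)
    (hSC : IsEmpty (Besicovitch.SatelliteConfig Y N τ))
    {x : Y} {R : ℝ} (hR : 0 < R) {S : Finset Y}
    (hball : ∀ a ∈ S, a ∈ closedBall x R)
    (hsep : ∀ a ∈ S, ∀ b ∈ S, a ≠ b → R / 2 < dist a b) :
    S.card < 2 ^ (2 * N + 2) := by
  classical
  by_contra hcon
  push_neg at hcon
  set t := 2 * N + 2 with ht
  obtain ⟨v, col, hvmem, hv⟩ :=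
    chain_lemma (fun a b => if dist a b ≤ R then true else false) t S hcon
  -- pigeonhole on colours
  have hsplit : ((Finset.univ : Finset (Fin t)).filter (fun i => col i = true)).card
      + ((Finset.univ : Finset (Fin t)).filter (fun i => ¬ (col i = true))).card
      = t := by
    rw [Finset.card_filter_add_card_filter_not]
    simp
  have hex : ∃ b : Bool, N + 1 ≤ ((Finset.univ : Finset (Fin t)).filter
      (fun i => col i = b)).card := by
    by_contra hcon2
    push_neg at hcon2
    have h1 := hcon2 true
    have h2 := hcon2 false
    have hBeq : (Finset.univ : Finset (Fin t)).filter (fun i => ¬ (col i = true))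
        = (Finset.univ : Finset (Fin t)).filter (fun i => col i = false) := by
      apply Finset.filter_congr
      intro y _
      simp [Bool.not_eq_true]
    rw [hBeq] at hsplit
    omega
  obtain ⟨b, hb⟩ := hex
  obtain ⟨T, hTsub, hTcard⟩ := Finset.exists_subset_card_eq hb
  set e := T.orderEmbOfFin hTcard with he
  have hemem : ∀ i, e i ∈ T := fun i => T.orderEmbOfFin_mem hTcard i
  have hcolb : ∀ i, col (e i) = b := by
    intro i
    have := hTsub (hemem i)
    exact (Finset.mem_filter.1 this).2
  -- the `N+1` points
  set p : Fin (N + 1) → Y := fun i => v (e i) with hp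
  have key : ∀ i j : Fin (N + 1), i ≠ j →
      p i ≠ p j ∧ (dist (p i) (p j) ≤ R ↔ b = true) := by
    intro i j hij
    rcases lt_or_gt_of_ne hij with h | h
    · have hlt : e i < e j := e.strictMono h
      have := hv _ _ hlt
      have hcol := hcolb i
      constructor
      · exact this.1
      · rw [hcol] at this
        by_cases hd : dist (p i) (p j) ≤ R
        · simp [hp, hd] at this
          simp only [hp] at hd; simp [hd] at this; simp [hp, hd, this]
        · simp [hp, hd] at this
          simp only [hp] at hd; simp [hd] at this; simp [hp, hd, this]
    · have hlt : e j < e i := e.strictMono h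
      have := hv _ _ hlt
      have hcol := hcolb j
      rw [dist_comm (p i) (p j)]
      constructor
      · exact fun hh => this.1 hh.symm
      · rw [hcol] at this
        by_cases hd : dist (p j) (p i) ≤ R
        · simp [hp, hd] at this
          simp only [hp] at hd; simp [hd] at this; simp [hp, hd, this]
        · simp [hp, hd] at this
          simp only [hp] at hd; simp [hd] at this; simp [hp, hd, this]
  have hpball : ∀ i, p i ∈ closedBall x R := fun i => hball _ (hvmem (e i))
  have hpsep : ∀ i j : Fin (N+1), i ≠ j → R / 2 < dist (p i) (p j) := by
    intro i j hij
    exact hsep _ (hvmem (e i)) _ (hvmem (e j)) ((key i j hij).1)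
  cases b with
  | true =>
      refine no_window_points hτ hSC (D := R / 2) (by linarith) p ?_ ?_
      · intro i j hij
        exact (hpsep i j hij).le
      · intro i j
        rcases eq_or_ne i j with rfl | hij
        · simp; linarith
        · have := ((key i j hij).2).2 rfl
          linarith
  | false =>
      refine no_window_points hτ hSC (D := R) hR p ?_ ?_
      · intro i j hij
        have := (key i j hij).2
        by_contra hcont
        push_neg at hcont
        have : dist (p i) (p j) ≤ R := hcont.le
        have hbt := ((key i j hij).2).1 this
        exact Bool.false_ne_true hbt
      · intro i j
        have hi := mem_closedBall.1 (hpball i)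
        have hj := mem_closedBall.1 (hpball j)
        have := dist_triangle (p i) x (p j)
        rw [dist_comm x (p j)] at this
        linarith


/-- Iterated bound: a `δ`-separated finite subset of a ball of radius `R ≤ 2^k * (δ/2)` has at
most `(2^(2N+2))^k` elements. -/
lemma sep_card_le_iter {N : ℕ} {τ : ℝ} (hτ : 1 < τ)
    (hSC : IsEmpty (Besicovitch.SatelliteConfig Y N τ)) :
    ∀ (k : ℕ) (x : Y) (R δ : ℝ), 0 < δ → 0 < R → R ≤ 2 ^ k * (δ / 2) →
    ∀ S : Finset Y, (∀ a ∈ S, a ∈ closedBall x R) →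
      (∀ a ∈ S, ∀ b ∈ S, a ≠ b → δ < dist a b) →
      S.card ≤ (2 ^ (2 * N + 2)) ^ k := by
  classical
  intro k
  induction k with
  | zero =>
      intro x R δ hδ hR hRk S hball hsep
      simp only [pow_zero] at hRk ⊢
      by_contra hcon
      push_neg at hcon
      obtain ⟨a, ha, b, hb, hab⟩ := Finset.one_lt_card.1 hcon
      have h1 := mem_closedBall.1 (hball a ha)
      have h2 := mem_closedBall.1 (hball b hb)
      have h3 := hsep a ha b hb hab
      have := dist_triangle a x b
      rw [dist_comm x b] at this
      linarith
  | succ k ih =>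
      intro x R δ hδ hR hRk S hball hsep
      · -- main case
        have hhalf : R / 2 ≤ 2 ^ k * (δ / 2) := by
          have h2 : (2:ℝ) ^ (k+1) = 2 ^ k * 2 := pow_succ 2 k
          rw [h2] at hRk
          linarith
        -- take a maximal-cardinality (R/2)-separated subset of S
        set P : Finset Y → Prop := fun T =>
          T ⊆ S ∧ ∀ a ∈ T, ∀ b ∈ T, a ≠ b → R / 2 < dist a b with hP
        have hPempty : P ∅ := ⟨Finset.empty_subset _, by simp⟩
        obtain ⟨T, hTmem, hTmax⟩ := Finset.exists_max_image
          ((S.powerset).filter P) (fun T => T.card)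
          ⟨∅, Finset.mem_filter.2 ⟨Finset.mem_powerset.2 (Finset.empty_subset _), hPempty⟩⟩
        have hTP : P T := (Finset.mem_filter.1 hTmem).2
        have hTcard : T.card < 2 ^ (2 * N + 2) :=
          sep_card_lt hτ hSC hR (fun a ha => hball a (hTP.1 ha)) hTP.2
        -- every point of S is within R/2 of a point of T
        have hcover : ∀ s ∈ S, ∃ p ∈ T, dist s p ≤ R / 2 := by
          intro s hs
          by_contra hcon
          push_neg at hcon
          have hsT : s ∉ T := by
            intro hsT
            have := hcon s hsT
            simp at this
            linarith
          have hPins : P (insert s T) := by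
            constructor
            · intro a ha
              rcases Finset.mem_insert.1 ha with rfl | ha
              · exact hs
              · exact hTP.1 ha
            · intro a ha b hb hab
              rcases Finset.mem_insert.1 ha with rfl | ha' <;>
                rcases Finset.mem_insert.1 hb with rfl | hb'
              · exact absurd rfl hab
              · exact hcon b hb'
              · rw [dist_comm]; exact hcon a ha'
              · exact hTP.2 a ha' b hb' hab
          have hmem : insert s T ∈ (S.powerset).filter P :=
            Finset.mem_filter.2 ⟨Finset.mem_powerset.2 hPins.1, hPins⟩
          have := hTmax _ hmem
          rw [Finset.card_insert_of_notMem hsT] at this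
          omega
        -- S is covered by the balls closedBall p (R/2), p ∈ T
        have hsub : S ⊆ T.biUnion (fun p => S.filter (fun s => dist s p ≤ R / 2)) := by
          intro s hs
          obtain ⟨p, hp, hdp⟩ := hcover s hs
          exact Finset.mem_biUnion.2 ⟨p, hp, Finset.mem_filter.2 ⟨hs, hdp⟩⟩
        have hpiece : ∀ p ∈ T, (S.filter (fun s => dist s p ≤ R / 2)).card
            ≤ (2 ^ (2 * N + 2)) ^ k := by
          intro p hp
          refine ih p (R / 2) δ hδ (by linarith) hhalf _ ?_ ?_
          · intro a ha
            exact mem_closedBall.2 (Finset.mem_filter.1 ha).2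
          · intro a ha b hb hab
            exact hsep a (Finset.mem_filter.1 ha).1 b (Finset.mem_filter.1 hb).1 hab
        calc S.card ≤ (T.biUnion (fun p => S.filter (fun s => dist s p ≤ R / 2))).card :=
              Finset.card_le_card hsub
          _ ≤ ∑ p ∈ T, (S.filter (fun s => dist s p ≤ R / 2)).card := Finset.card_biUnion_le
          _ ≤ ∑ _p ∈ T, (2 ^ (2 * N + 2)) ^ k := Finset.sum_le_sum hpiece
          _ = T.card * (2 ^ (2 * N + 2)) ^ k := by rw [Finset.sum_const, smul_eq_mul]
          _ ≤ 2 ^ (2 * N + 2) * (2 ^ (2 * N + 2)) ^ k := by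
              exact Nat.mul_le_mul_right _ hTcard.le
          _ = (2 ^ (2 * N + 2)) ^ (k + 1) := by ring


/-- Covering a ball by a controlled number of small balls. -/
lemma exists_finite_cover {N : ℕ} {τ : ℝ} (hτ : 1 < τ)
    (hSC : IsEmpty (Besicovitch.SatelliteConfig Y N τ))
    (x : Y) (R δ : ℝ) (hδ : 0 < δ) (hR : 0 < R) (k : ℕ) (hk : R ≤ 2 ^ k * (δ / 2)) :
    ∃ F : Finset Y, F.card ≤ (2 ^ (2 * N + 2)) ^ k ∧
      closedBall x R ⊆ ⋃ p ∈ F, closedBall p δ := by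
  classical
  set B := (2 ^ (2 * N + 2)) ^ k with hB
  set P : ℕ → Prop := fun n => ∃ T : Finset Y,
    ((∀ a ∈ T, a ∈ closedBall x R) ∧ ∀ a ∈ T, ∀ b ∈ T, a ≠ b → δ < dist a b) ∧ T.card = n
      with hPdef
  have hP0 : P 0 := ⟨∅, ⟨by simp, by simp⟩, rfl⟩
  have hPbound : ∀ n, P n → n ≤ B := by
    rintro n ⟨T, ⟨hT1, hT2⟩, rfl⟩
    exact sep_card_le_iter hτ hSC k x R δ hδ hR hk T hT1 hT2
  have hPn : P (Nat.findGreatest P B) := Nat.findGreatest_spec (Nat.zero_le B) hP0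
  obtain ⟨T, ⟨hT1, hT2⟩, hTcard⟩ := hPn
  refine ⟨T, by rw [hTcard]; exact Nat.findGreatest_le B, ?_⟩
  intro y hy
  by_contra hcon
  simp only [Set.mem_iUnion, mem_closedBall, not_exists, not_le] at hcon
  have hyT : y ∉ T := by
    intro hyT
    have := hcon y hyT
    simp at this
    linarith
  have hPins : P (T.card + 1) := by
    refine ⟨insert y T, ⟨?_, ?_⟩, Finset.card_insert_of_notMem hyT⟩
    · intro a ha
      rcases Finset.mem_insert.1 ha with rfl | ha
      · exact hy
      · exact hT1 a ha
    · intro a ha b hb hab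
      rcases Finset.mem_insert.1 ha with rfl | ha' <;>
        rcases Finset.mem_insert.1 hb with rfl | hb'
      · exact absurd rfl hab
      · exact hcon b hb'
      · rw [dist_comm]; exact hcon a ha'
      · exact hT2 a ha' b hb' hab
  have hle : T.card + 1 ≤ B := hPbound _ hPins
  have := Nat.findGreatest_is_greatest (by omega : Nat.findGreatest P B < T.card + 1) hle
  exact this hPins


variable [MeasurableSpace Y]

/-- The set of points around which the measure decays polynomially fast of a fixed high order,
uniformly at scales below `1/(m+1)`, inside a fixed unit ball, is null. -/
lemma measure_E_zero {N : ℕ} {τ : ℝ} (hτ : 1 < τ)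
    (hSC : IsEmpty (Besicovitch.SatelliteConfig Y N τ))
    (μ : Measure Y) [IsFiniteMeasure μ] (m : ℕ) (x₀ : Y) :
    μ {y | y ∈ closedBall x₀ 1 ∧ ∀ ρ : ℝ, 0 < ρ → ρ ≤ 1 / (m + 1) →
        μ (closedBall y ρ) ≤ ENNReal.ofReal (ρ ^ (2 * N + 3))} = 0 := by
  classical
  set t := 2 * N + 2 with ht
  set n := 2 * N + 3 with hn
  set E := {y | y ∈ closedBall x₀ 1 ∧ ∀ ρ : ℝ, 0 < ρ → ρ ≤ 1 / (m + 1) →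
      μ (closedBall y ρ) ≤ ENNReal.ofReal (ρ ^ n)} with hE
  -- the key estimate at scale (1/2)^k
  have key : ∀ k : ℕ, 2 * ((1/2 : ℝ) ^ k) ≤ 1 / (m + 1) →
      μ E ≤ ((2 : ℝ≥0∞) ^ (t + n)) * ENNReal.ofReal ((1/2 : ℝ) ^ k) := by
    intro k hk
    set δ : ℝ := (1/2 : ℝ) ^ k with hδdef
    have hδ : 0 < δ := pow_pos (by norm_num) k
    have hcov := exists_finite_cover hτ hSC x₀ 1 δ hδ one_pos (k + 1) ?_
    swap
    · rw [hδdef]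
      have : (2:ℝ) ^ (k+1) * ((1/2:ℝ)^k / 2) = 1 := by
        rw [div_pow, one_pow, div_div, ← pow_succ, mul_one_div, div_self (by positivity)]
      rw [this]
    obtain ⟨F, hFcard, hFcov⟩ := hcov
    -- choose a point of E in each relevant small ball
    have hEsub : E ⊆ ⋃ p ∈ F, E ∩ closedBall p δ := by
      intro y hy
      have : y ∈ closedBall x₀ 1 := hy.1
      obtain ⟨p, hp⟩ := Set.mem_iUnion₂.1 (hFcov this)
      exact Set.mem_iUnion₂.2 ⟨p, hp.1, hy, hp.2⟩
    have hpiece : ∀ p ∈ F, μ (E ∩ closedBall p δ) ≤ ENNReal.ofReal ((2 * δ) ^ n) := by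
      intro p _
      rcases Set.eq_empty_or_nonempty (E ∩ closedBall p δ) with hemp | ⟨z, hz⟩
      · rw [hemp]; simp
      · have hsubz : E ∩ closedBall p δ ⊆ closedBall z (2 * δ) := by
          intro w hw
          have h1 : dist w p ≤ δ := mem_closedBall.1 hw.2
          have h2 : dist z p ≤ δ := mem_closedBall.1 hz.2
          have := dist_triangle w p z
          rw [dist_comm p z] at this
          exact mem_closedBall.2 (by linarith)
        calc μ (E ∩ closedBall p δ) ≤ μ (closedBall z (2 * δ)) := measure_mono hsubz
          _ ≤ ENNReal.ofReal ((2 * δ) ^ n) :=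
            hz.1.2 (2 * δ) (by linarith) (by linarith)
    calc μ E ≤ μ (⋃ p ∈ F, E ∩ closedBall p δ) := measure_mono hEsub
      _ ≤ ∑ p ∈ F, μ (E ∩ closedBall p δ) := measure_biUnion_finset_le _ _
      _ ≤ ∑ _p ∈ F, ENNReal.ofReal ((2 * δ) ^ n) := Finset.sum_le_sum hpiece
      _ = (F.card : ℝ≥0∞) * ENNReal.ofReal ((2 * δ) ^ n) := by
          rw [Finset.sum_const, nsmul_eq_mul]
      _ ≤ ((2 ^ t : ℕ) ^ (k + 1) : ℝ≥0∞) * ENNReal.ofReal ((2 * δ) ^ n) := by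
          gcongr
          exact_mod_cast hFcard
      _ = ((2 : ℝ≥0∞) ^ (t + n)) * ENNReal.ofReal ((1/2 : ℝ) ^ k) := by
          rw [hδdef]
          rw [show ((2 ^ t : ℕ) ^ (k + 1) : ℝ≥0∞) = ENNReal.ofReal ((2 ^ t : ℝ) ^ (k+1)) by
            rw [ENNReal.ofReal_pow (by positivity), ENNReal.ofReal_pow (by norm_num)]
            norm_num]
          rw [show ((2 : ℝ≥0∞) ^ (t + n)) = ENNReal.ofReal ((2:ℝ) ^ (t + n)) by
            rw [ENNReal.ofReal_pow (by norm_num)]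
            norm_num]
          rw [← ENNReal.ofReal_mul (by positivity), ← ENNReal.ofReal_mul (by positivity)]
          congr 1
          have hhalf : (1/2 : ℝ) ^ k = ((2:ℝ)^k)⁻¹ := by
            rw [div_pow, one_pow, one_div]
          rw [hhalf]
          rw [show (2 * ((2:ℝ)^k)⁻¹) ^ n = (2:ℝ)^n * (((2:ℝ)^k)^n)⁻¹ by
            rw [mul_pow, inv_pow]]
          rw [← pow_mul, ← pow_mul]
          have h2k : ((2:ℝ)^(k*n))⁻¹ ≠ 0 := by positivity
          field_simp
          rw [← pow_add, ← pow_add, ← pow_add]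
          congr 1
          simp only [hn, ht]
          ring
    -- end key
  -- now let k → ∞
  have hk0 : ∃ k0 : ℕ, ∀ k ≥ k0, 2 * ((1/2 : ℝ) ^ k) ≤ 1 / (m + 1) := by
    have htend : Tendsto (fun k : ℕ => 2 * ((1/2 : ℝ) ^ k)) atTop (𝓝 (2 * 0)) :=
      (_root_.tendsto_pow_atTop_nhds_zero_of_lt_one (by norm_num) (by norm_num)).const_mul 2
    rw [mul_zero] at htend
    have := htend.eventually_le_const (show (0:ℝ) < 1 / (m+1) by positivity)
    exact eventually_atTop.1 this
  obtain ⟨k0, hk0⟩ := hk0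
  have hreal : Tendsto (fun k : ℕ => ENNReal.ofReal ((1/2 : ℝ) ^ k)) atTop
      (𝓝 (ENNReal.ofReal 0)) :=
    ENNReal.tendsto_ofReal
      (_root_.tendsto_pow_atTop_nhds_zero_of_lt_one (by norm_num) (by norm_num))
  rw [ENNReal.ofReal_zero] at hreal
  have hlim : Tendsto (fun k : ℕ => ((2 : ℝ≥0∞) ^ (t + n)) * ENNReal.ofReal ((1/2 : ℝ) ^ k))
      atTop (𝓝 (((2 : ℝ≥0∞) ^ (t + n)) * 0)) :=
    ENNReal.Tendsto.const_mul hreal (Or.inr (ENNReal.pow_ne_top (by norm_num)))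
  rw [mul_zero] at hlim
  have : μ E ≤ 0 := by
    refine ge_of_tendsto hlim ?_
    filter_upwards [eventually_ge_atTop k0] with k hk
    exact key k (hk0 k hk)
  simpa [hE] using le_antisymm this (zero_le)


/-- Almost every point does not have superpolynomial decay of the measure of closed balls. -/
lemma ae_not_superpoly [TopologicalSpace.SeparableSpace Y] [HasBesicovitchCovering Y]
    (μ : Measure Y) [IsFiniteMeasure μ] :
    ∃ n : ℕ, ∀ᵐ y ∂μ, ¬ (∀ᶠ ρ in 𝓝[>] (0:ℝ), μ (closedBall y ρ) ≤ ENNReal.ofReal (ρ ^ n)) := by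
  obtain ⟨N, τ, hτ, hSC⟩ := HasBesicovitchCovering.no_satelliteConfig (α := Y)
  refine ⟨2 * N + 3, ?_⟩
  rcases isEmpty_or_nonempty Y with hY | hY
  · simp only [ae_iff]
    have : {y : Y | ¬¬ (∀ᶠ ρ in 𝓝[>] (0:ℝ), μ (closedBall y ρ)
        ≤ ENNReal.ofReal (ρ ^ (2 * N + 3)))} = ∅ := Set.eq_empty_of_isEmpty _
    rw [this, measure_empty]
  set n := 2 * N + 3 with hn
  set SP := {y : Y | ∀ᶠ ρ in 𝓝[>] (0:ℝ), μ (closedBall y ρ) ≤ ENNReal.ofReal (ρ ^ n)}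
    with hSP
  have hsub : SP ⊆ ⋃ (m : ℕ), ⋃ (j : ℕ),
      {y | y ∈ closedBall (TopologicalSpace.denseSeq Y j) 1 ∧ ∀ ρ : ℝ, 0 < ρ →
        ρ ≤ 1 / (m + 1) → μ (closedBall y ρ) ≤ ENNReal.ofReal (ρ ^ n)} := by
    intro y hy
    obtain ⟨ε, hε, hIoo⟩ := mem_nhdsGT_iff_exists_Ioo_subset.1 hy
    have hε0 : (0:ℝ) < ε := hε
    obtain ⟨m, hm⟩ := exists_nat_gt (1 / ε)
    have hm0 : (0:ℝ) < m + 1 := by positivity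
    have hmε : 1 / ((m:ℝ) + 1) < ε := by
      rw [div_lt_iff₀ hm0]
      have h1 : 1 / ε < (m:ℝ) + 1 := by linarith
      rw [div_lt_iff₀ hε0] at h1
      linarith
    obtain ⟨j, hj⟩ := (Metric.denseRange_iff.1 (TopologicalSpace.denseRange_denseSeq Y)) y 1
      one_pos
    refine Set.mem_iUnion.2 ⟨m, Set.mem_iUnion.2 ⟨j, ?_, ?_⟩⟩
    · exact mem_closedBall.2 hj.le
    · intro ρ hρ hρm
      exact hIoo ⟨hρ, lt_of_le_of_lt hρm hmε⟩
  have hnull : μ (⋃ (m : ℕ), ⋃ (j : ℕ),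
      {y | y ∈ closedBall (TopologicalSpace.denseSeq Y j) 1 ∧ ∀ ρ : ℝ, 0 < ρ →
        ρ ≤ 1 / (m + 1) → μ (closedBall y ρ) ≤ ENNReal.ofReal (ρ ^ n)}) = 0 := by
    refine measure_iUnion_null fun m => measure_iUnion_null fun j => ?_
    exact measure_E_zero hτ hSC μ m (TopologicalSpace.denseSeq Y j)
  have hSPnull : μ SP = 0 := measure_mono_null hsub hnull
  rw [ae_iff]
  convert hSPnull using 2
  ext y
  simp only [Set.mem_setOf_eq, not_not, hSP]


/-- Almost every point has all its closed balls of positive measure. -/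
lemma ae_ball_pos [TopologicalSpace.SeparableSpace Y] [OpensMeasurableSpace Y]
    (μ : Measure Y) :
    ∀ᵐ y ∂μ, ∀ ρ : ℝ, 0 < ρ → 0 < μ (closedBall y ρ) := by
  haveI : SecondCountableTopology Y := UniformSpace.secondCountable_of_separable Y
  classical
  set ι := {p : Y × ℚ // 0 < (p.2:ℝ) ∧ μ (ball p.1 (p.2:ℝ)) = 0} with hι
  set s : ι → Set Y := fun i => ball i.1.1 (i.1.2:ℝ) with hs
  obtain ⟨T, hTcount, hTeq⟩ := TopologicalSpace.isOpen_iUnion_countable s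
    (fun i => isOpen_ball)
  have hTnull : μ (⋃ i ∈ T, s i) = 0 :=
    (measure_biUnion_null_iff hTcount).2 fun i _ => i.2.2
  rw [hTeq] at hTnull
  have hae : ∀ᵐ y ∂μ, y ∉ ⋃ i, s i := by
    rw [ae_iff]
    refine measure_mono_null ?_ hTnull
    intro y hy
    simpa using hy
  filter_upwards [hae] with y hy ρ hρ
  obtain ⟨q, hq0, hqρ⟩ := exists_rat_btwn hρ
  by_contra hcon
  push_neg at hcon
  have hq0' : 0 < (q:ℝ) := hq0
  have hqnull : μ (ball y (q:ℝ)) = 0 := by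
    refine le_antisymm ?_ (zero_le)
    refine le_trans (measure_mono ?_) hcon
    exact ball_subset_closedBall.trans (closedBall_subset_closedBall hqρ.le)
  exact hy (Set.mem_iUnion.2 ⟨⟨(y, q), hq0', hqnull⟩, mem_ball_self hq0'⟩)


/-- The purely real-analytic core: comparing liminfs of log-ratios. -/
lemma point_lemma {A G : ℝ → ℝ≥0∞}
    (hA1 : ∀ ρ : ℝ, 0 < ρ → 0 < A ρ) (hAle : ∀ ρ, A ρ ≤ 1) (hGle : ∀ σ, G σ ≤ 1)
    {γ : ℝ}
    (hF1 : γ ≤ liminf (fun σ => Real.log (G σ).toReal / Real.log σ) (𝓝[>] (0:ℝ)))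
    (hF3 : ∃ K : ℕ, 1 ≤ K ∧ ∀ᶠ ρ in 𝓝[>] (0:ℝ), A ρ ≤ K * G (2 * ρ))
    (hF4 : ∃ n : ℕ, ¬ (∀ᶠ ρ in 𝓝[>] (0:ℝ), A ρ ≤ ENNReal.ofReal (ρ ^ n))) :
    γ ≤ liminf (fun ρ => Real.log (A ρ).toReal / Real.log ρ) (𝓝[>] (0:ℝ)) := by
  have hAtop : ∀ ρ, A ρ ≠ ⊤ := fun ρ => ne_top_of_le_ne_top ENNReal.one_ne_top (hAle ρ)
  have hGtop : ∀ σ, G σ ≠ ⊤ := fun σ => ne_top_of_le_ne_top ENNReal.one_ne_top (hGle σ)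
  have hA1' : ∀ ρ : ℝ, 0 < ρ → 0 < (A ρ).toReal :=
    fun ρ hρ => ENNReal.toReal_pos (hA1 ρ hρ).ne' (hAtop ρ)
  have hAle' : ∀ ρ, (A ρ).toReal ≤ 1 := by
    intro ρ
    have := ENNReal.toReal_mono ENNReal.one_ne_top (hAle ρ)
    simpa using this
  have hGle' : ∀ σ, (G σ).toReal ≤ 1 := by
    intro σ
    have := ENNReal.toReal_mono ENNReal.one_ne_top (hGle σ)
    simpa using this
  have h01 : ∀ᶠ ρ in 𝓝[>] (0:ℝ), ρ ∈ Set.Ioo (0:ℝ) 1 :=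
    Ioo_mem_nhdsGT_of_mem ⟨le_refl 0, one_pos⟩
  -- eventual nonnegativity of both log ratios
  have hh0 : ∀ᶠ ρ in 𝓝[>] (0:ℝ), 0 ≤ Real.log (A ρ).toReal / Real.log ρ := by
    filter_upwards [h01] with ρ hρ
    exact div_nonneg_iff.2 (Or.inr ⟨Real.log_nonpos ENNReal.toReal_nonneg (hAle' ρ),
      (Real.log_neg hρ.1 hρ.2).le⟩)
  have hg0 : ∀ᶠ σ in 𝓝[>] (0:ℝ), 0 ≤ Real.log (G σ).toReal / Real.log σ := by
    filter_upwards [h01] with σ hσ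
    exact div_nonneg_iff.2 (Or.inr ⟨Real.log_nonpos ENNReal.toReal_nonneg (hGle' σ),
      (Real.log_neg hσ.1 hσ.2).le⟩)
  -- the liminf sets
  set Sh := {a : ℝ | ∀ᶠ ρ in 𝓝[>] (0:ℝ), a ≤ Real.log (A ρ).toReal / Real.log ρ} with hSh
  set Sf := {a : ℝ | ∀ᶠ σ in 𝓝[>] (0:ℝ), a ≤ Real.log (G σ).toReal / Real.log σ} with hSf
  have h0Sh : (0:ℝ) ∈ Sh := hh0
  have h0Sf : (0:ℝ) ∈ Sf := hg0
  -- Sh is bounded above thanks to hF4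
  obtain ⟨n, hn⟩ := hF4
  have hbddSh : BddAbove Sh := by
    refine ⟨n, fun a ha => ?_⟩
    by_contra hcon
    push_neg at hcon
    refine hn ?_
    filter_upwards [ha, h01] with ρ hρ1 hρ2
    have hlogρ : Real.log ρ < 0 := Real.log_neg hρ2.1 hρ2.2
    have h1 : Real.log (A ρ).toReal ≤ a * Real.log ρ :=
      (le_div_iff_of_neg hlogρ).1 hρ1
    have h2 : a * Real.log ρ ≤ (n:ℝ) * Real.log ρ :=
      mul_le_mul_of_nonpos_right hcon.le hlogρ.le
    have h3 : Real.log (A ρ).toReal ≤ Real.log (ρ ^ n) := by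
      rw [Real.log_pow]
      exact h1.trans h2
    have h4 : (A ρ).toReal ≤ ρ ^ n := by
      have hpow : (0:ℝ) < ρ ^ n := pow_pos hρ2.1 n
      exact (Real.log_le_log_iff (hA1' ρ hρ2.1) hpow).1 h3
    exact (ENNReal.le_ofReal_iff_toReal_le (hAtop ρ) (pow_nonneg hρ2.1.le n)).2 h4
  -- every b < γ belongs to Sh
  have hmem : ∀ b : ℝ, b < γ → b ∈ Sh := by
    intro b hb
    rw [Filter.liminf_eq] at hF1
    by_cases hbdd : BddAbove Sf
    · obtain ⟨a, haSf, hba⟩ := exists_lt_of_lt_csSup ⟨0, h0Sf⟩ (lt_of_lt_of_le hb hF1)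
      obtain ⟨K, hK1, hK⟩ := hF3
      have hK0 : (0:ℝ) < K := by exact_mod_cast hK1
      -- eventually G σ ≤ σ ^ a
      have hGa : ∀ᶠ σ in 𝓝[>] (0:ℝ), (G σ).toReal ≤ σ ^ (a:ℝ) := by
        filter_upwards [haSf, h01] with σ h1 h2
        have hlogσ : Real.log σ < 0 := Real.log_neg h2.1 h2.2
        have hle : Real.log (G σ).toReal ≤ a * Real.log σ := (le_div_iff_of_neg hlogσ).1 h1
        rcases eq_or_lt_of_le (ENNReal.toReal_nonneg (a := G σ)) with h0 | hpos
        · rw [← h0]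
          exact (Real.rpow_pos_of_pos h2.1 a).le
        · have := Real.exp_le_exp.2 hle
          rw [Real.exp_log hpos] at this
          rw [Real.rpow_def_of_pos h2.1, mul_comm]
          exact this
      have h2ρ : Tendsto (fun ρ : ℝ => 2 * ρ) (𝓝[>] (0:ℝ)) (𝓝[>] (0:ℝ)) := by
        apply tendsto_nhdsWithin_of_tendsto_nhds_of_eventually_within
        · have : Tendsto (fun ρ : ℝ => 2 * ρ) (𝓝 (0:ℝ)) (𝓝 (2 * 0)) :=
            (continuous_const.mul continuous_id).tendsto 0
          rw [mul_zero] at this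
          exact this.mono_left nhdsWithin_le_nhds
        · filter_upwards [self_mem_nhdsWithin] with ρ hρ
          have : (0:ℝ) < ρ := hρ
          exact Set.mem_Ioi.2 (by linarith)
      have hGa2 : ∀ᶠ ρ in 𝓝[>] (0:ℝ), (G (2 * ρ)).toReal ≤ (2 * ρ) ^ (a:ℝ) :=
        h2ρ.eventually hGa
      -- the error term
      set c : ℝ := Real.log K + a * Real.log 2 with hc
      have hlogbot : Tendsto Real.log (𝓝[>] (0:ℝ)) atBot :=
        Real.tendsto_log_nhdsGT_zero
      have hnegtop : Tendsto (fun ρ : ℝ => -Real.log ρ) (𝓝[>] (0:ℝ)) atTop :=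
        tendsto_neg_atBot_atTop.comp hlogbot
      have hdiv : Tendsto (fun ρ : ℝ => c / Real.log ρ) (𝓝[>] (0:ℝ)) (𝓝 0) := by
        have h1 : Tendsto (fun ρ : ℝ => c / -Real.log ρ) (𝓝[>] (0:ℝ)) (𝓝 0) :=
          Filter.Tendsto.div_atTop tendsto_const_nhds hnegtop
        have h2 := h1.neg
        rw [neg_zero] at h2
        refine h2.congr fun ρ => ?_
        rw [div_neg, neg_neg]
      have hev : ∀ᶠ ρ in 𝓝[>] (0:ℝ), b - a < c / Real.log ρ :=
        hdiv.eventually (eventually_gt_nhds (by linarith : b - a < 0))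
      -- conclude
      filter_upwards [hK, hGa2, h01, hev] with ρ hKρ hGρ hρ01 hevρ
      have hρ0 : (0:ℝ) < ρ := hρ01.1
      have hlogρ : Real.log ρ < 0 := Real.log_neg hρ0 hρ01.2
      have h2ρ0 : (0:ℝ) < 2 * ρ := by linarith
      have hAK : (A ρ).toReal ≤ (K:ℝ) * (2 * ρ) ^ (a:ℝ) := by
        have hfin : (K : ℝ≥0∞) * G (2 * ρ) ≠ ⊤ :=
          ENNReal.mul_ne_top (ENNReal.natCast_ne_top K) (hGtop _)
        have := ENNReal.toReal_mono hfin hKρ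
        rw [ENNReal.toReal_mul] at this
        simp only [ENNReal.toReal_natCast] at this
        refine this.trans ?_
        exact mul_le_mul_of_nonneg_left hGρ (by positivity)
      have hlogA : Real.log (A ρ).toReal ≤ a * Real.log ρ + c := by
        have hrpos : (0:ℝ) < (K:ℝ) * (2 * ρ) ^ (a:ℝ) :=
          mul_pos hK0 (Real.rpow_pos_of_pos h2ρ0 a)
        have h1 : Real.log (A ρ).toReal ≤ Real.log ((K:ℝ) * (2 * ρ) ^ (a:ℝ)) :=
          Real.log_le_log (hA1' ρ hρ0) hAK
        rw [Real.log_mul hK0.ne' (Real.rpow_pos_of_pos h2ρ0 a).ne',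
          Real.log_rpow h2ρ0, Real.log_mul (by norm_num) hρ0.ne'] at h1
        rw [hc]
        ring_nf
        ring_nf at h1
        linarith
      have hquot : a + c / Real.log ρ ≤ Real.log (A ρ).toReal / Real.log ρ := by
        have h1 : (a * Real.log ρ + c) / Real.log ρ ≤ Real.log (A ρ).toReal / Real.log ρ :=
          div_le_div_of_nonpos_of_le hlogρ.le hlogA
        rw [add_div, mul_div_assoc, div_self hlogρ.ne, mul_one] at h1
        exact h1
      have : b < a + c / Real.log ρ := by linarith
      exact le_trans this.le hquot
    · -- Sf unbounded : γ ≤ 0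
      have hsup0 : sSup Sf = 0 := Real.sSup_of_not_bddAbove hbdd
      rw [hsup0] at hF1
      filter_upwards [hh0] with ρ hρ
      linarith
  -- conclude
  rw [Filter.liminf_eq]
  by_contra hlt
  push_neg at hlt
  obtain ⟨b, hb1, hb2⟩ := exists_between hlt
  exact absurd (le_csSup hbddSh (hmem b hb2)) (not_le.2 hb1)

end LowerDimAux

end LowerDimAuxSection

open Metric ENNReal NNReal in
/-- Let `Y` be a complete separable metric space with the Besicovitch
covering property, `Z` a standard Borel space, `π : Y → Z` Borel measurable, `μ` a
Borel probability measure on `Y`, `ν = π_*μ` and `(μz z)` a disintegration of `μ` over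
`ν` along `π`.  If for `μ`-a.e. `y` the lower pointwise dimension of `μz (π y)` at `y`
is `≥ γ`, then for `μ`-a.e. `y` the lower pointwise dimension of `μ` at `y` is `≥ γ`. -/
theorem lowerDim_ge_of_fiber_dim_ge_besicovitch
    {Y Z : Type*}
    [MetricSpace Y] [CompleteSpace Y] [TopologicalSpace.SeparableSpace Y]
    [MeasurableSpace Y] [BorelSpace Y] [HasBesicovitchCovering Y]
    [MeasurableSpace Z] [StandardBorelSpace Z]
    (π : Y → Z) (hπ : Measurable π)
    (μ : Measure Y) [IsProbabilityMeasure μ]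
    (μz : Z → Measure Y)
    (hfam : ∀ s : Set Y, MeasurableSet s → Measurable fun z => μz z s)
    (hprob : ∀ z, IsProbabilityMeasure (μz z))
    (hfiber : ∀ᵐ z ∂(μ.map π), μz z ((π ⁻¹' {z})ᶜ) = 0)
    (hdis : ∀ s : Set Y, MeasurableSet s → μ s = ∫⁻ z, μz z s ∂(μ.map π))
    (γ : ℝ) (hγ : 0 ≤ γ)
    (hi : ∀ᵐ y ∂μ, γ ≤ lowerPointwiseDim (μz (π y)) y) :
    ∀ᵐ y ∂μ, γ ≤ lowerPointwiseDim μ y := by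
  classical
  haveI : SecondCountableTopology Y := UniformSpace.secondCountable_of_separable Y
  -- the comparison property
  set P : Z → Y → Prop := fun z y => ∃ K : ℕ, ∃ m : ℕ, ∀ q : ℚ, 0 < q → (q:ℝ) ≤ 1/(m+1) →
    μ (closedBall y (q:ℝ)) ≤ K * μz z (closedBall y (q:ℝ)) with hPdef
  -- measurability of ball measures
  have hμmeas : ∀ q : ℝ, Measurable fun y => μ (closedBall y q) := by
    intro q
    have ht : MeasurableSet {p : Y × Y | dist p.2 p.1 ≤ q} :=
      measurableSet_le (measurable_dist.comp (measurable_snd.prodMk measurable_fst))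
        measurable_const
    exact measurable_measure_prodMk_left (ν := μ) ht
  have hjoint : ∀ q : ℝ, Measurable fun p : Z × Y => μz p.1 (closedBall p.2 q) := by
    intro q
    set κ : ProbabilityTheory.Kernel Z Y :=
      ⟨μz, Measure.measurable_of_measurable_coe _ hfam⟩ with hκ
    haveI : ProbabilityTheory.IsMarkovKernel κ := ⟨fun z => hprob z⟩
    set κ' := κ.comap (Prod.fst : Z × Y → Z) measurable_fst with hκ'
    have ht : MeasurableSet {p : (Z × Y) × Y | dist p.2 p.1.2 ≤ q} :=
      measurableSet_le (measurable_dist.comp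
        (measurable_snd.prodMk (measurable_snd.comp measurable_fst))) measurable_const
    exact ProbabilityTheory.Kernel.measurable_kernel_prodMk_left (κ := κ') ht
  have hμzmeas : ∀ q : ℝ, Measurable fun y => μz (π y) (closedBall y q) :=
    fun q => (hjoint q).comp (hπ.prodMk measurable_id)
  -- the set where the comparison holds is measurable
  have hSmeas : MeasurableSet {y | P (π y) y} := by
    have heq : {y | P (π y) y} = ⋃ (K : ℕ), ⋃ (m : ℕ), ⋂ (q : ℚ),
        ⋂ (_ : 0 < q ∧ (q:ℝ) ≤ 1/(m+1)),
        {y | μ (closedBall y (q:ℝ)) ≤ K * μz (π y) (closedBall y (q:ℝ))} := by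
      ext y
      simp only [hPdef, Set.mem_setOf_eq, Set.mem_iUnion, Set.mem_iInter, and_imp]
    rw [heq]
    refine MeasurableSet.iUnion fun K => MeasurableSet.iUnion fun m =>
      MeasurableSet.iInter fun q => MeasurableSet.iInter fun _ => ?_
    exact measurableSet_le (hμmeas q) ((hμzmeas q).const_mul _)
  -- the comparison holds a.e. along each fiber measure
  have hPz : ∀ z, ∀ᵐ y ∂(μz z), P z y := by
    intro z
    haveI := hprob z
    filter_upwards [Besicovitch.ae_tendsto_rnDeriv μ (μz z),
      Measure.rnDeriv_lt_top μ (μz z)] with y hy1 hy2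
    obtain ⟨K, hK⟩ := ENNReal.exists_nat_gt hy2.ne
    have hev : ∀ᶠ r in 𝓝[>] (0:ℝ),
        μ (closedBall y r) / μz z (closedBall y r) < (K : ℝ≥0∞) :=
      hy1.eventually_lt_const hK
    obtain ⟨ε, hε, hIoo⟩ := mem_nhdsGT_iff_exists_Ioo_subset.1 hev
    have hε0 : (0:ℝ) < ε := hε
    obtain ⟨m, hm⟩ := exists_nat_gt (1 / ε)
    have hm0 : (0:ℝ) < m + 1 := by positivity
    have hmε : 1 / ((m:ℝ) + 1) < ε := by
      rw [div_lt_iff₀ hm0]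
      have h1 : 1 / ε < (m:ℝ) + 1 := by linarith
      rw [div_lt_iff₀ hε0] at h1
      linarith
    refine ⟨K, m, fun q hq hqm => ?_⟩
    have hq0 : (0:ℝ) < q := by exact_mod_cast hq
    have hlt : μ (closedBall y (q:ℝ)) / μz z (closedBall y (q:ℝ)) < (K : ℝ≥0∞) :=
      hIoo ⟨hq0, lt_of_le_of_lt hqm hmε⟩
    rcases eq_or_ne (μz z (closedBall y (q:ℝ))) 0 with h0 | h0
    · have hz0 : μ (closedBall y (q:ℝ)) = 0 := by
        by_contra hne
        rw [h0, ENNReal.div_zero hne] at hlt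
        exact absurd hlt (not_lt.2 le_top)
      rw [hz0]
      exact zero_le
    · exact ((ENNReal.div_le_iff h0 (measure_ne_top _ _)).1 hlt.le).trans
        (by rw [mul_comm])
  -- hence the comparison holds μ-a.e.
  have haeS : ∀ᵐ y ∂μ, P (π y) y := by
    have hcompl : μ ({y | P (π y) y}ᶜ) = 0 := by
      rw [hdis _ hSmeas.compl]
      rw [lintegral_eq_zero_iff (hfam _ hSmeas.compl)]
      filter_upwards [hfiber] with z hzfib
      have h1 : μz z {y | ¬ P z y} = 0 := ae_iff.1 (hPz z)
      refine measure_mono_null ?_ (measure_union_null h1 hzfib)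
      intro y hy
      simp only [Set.mem_compl_iff, Set.mem_setOf_eq] at hy
      by_cases hzy : π y = z
      · exact Set.mem_union_left _ (by rw [← hzy]; exact hy)
      · exact Set.mem_union_right _ (by simp [hzy])
    rw [ae_iff]
    convert hcompl using 1
    rfl
  -- a.e. positivity and non-superpolynomial decay
  obtain ⟨n, hF4ae⟩ := LowerDimAux.ae_not_superpoly μ
  filter_upwards [hi, LowerDimAux.ae_ball_pos μ, hF4ae, haeS] with y hF1 hpos hF4 hP
  haveI := hprob (π y)
  refine LowerDimAux.point_lemma (A := fun ρ => μ (closedBall y ρ))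
    (G := fun σ => μz (π y) (closedBall y σ)) hpos (fun ρ => prob_le_one)
    (fun σ => prob_le_one) hF1 ?_ ⟨n, hF4⟩
  -- construct the eventual comparison at doubled radii
  obtain ⟨K, m, hKm⟩ := hP
  refine ⟨K + 1, le_add_self, ?_⟩
  have hr0 : (0:ℝ) < 1 / (2 * (m + 1)) := by positivity
  filter_upwards [Ioo_mem_nhdsGT_of_mem (Set.mem_Ico.2 ⟨le_refl (0:ℝ), hr0⟩)] with ρ hρ
  obtain ⟨q, hq1, hq2⟩ := exists_rat_btwn (show ρ < 2 * ρ by linarith [hρ.1])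
  have hq0 : 0 < q := by
    have : (0:ℝ) < q := lt_trans hρ.1 hq1
    exact_mod_cast this
  have hqm : (q:ℝ) ≤ 1 / (m + 1) := by
    have hm0' : ((m:ℝ) + 1) ≠ 0 := by positivity
    have h3 : 2 * (1 / (2 * ((m:ℝ) + 1))) = 1 / ((m:ℝ) + 1) := by
      field_simp
    have h2 := hρ.2
    linarith
  calc μ (closedBall y ρ) ≤ μ (closedBall y (q:ℝ)) :=
        measure_mono (closedBall_subset_closedBall hq1.le)
    _ ≤ K * μz (π y) (closedBall y (q:ℝ)) := hKm q hq0 hqm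
    _ ≤ (K + 1 : ℕ) * μz (π y) (closedBall y (2 * ρ)) := by
        refine mul_le_mul' ?_ (measure_mono (closedBall_subset_closedBall hq2.le))
        exact_mod_cast Nat.le_succ K
end

section
/- Let Y be a complete doubling metric space, Z a standard Borel space, and π : Y → Z a Borel measurable map. Let μ be a Borel probability measure on Y, let ν = π_*μ be its push-forward, and let (μ_z)_{z∈Z} be a disintegration of μ over ν along π. Assume there exists a constant γ ≥ 0 such that for μ-almost every y ∈ Y the lower pointwise dimension of μ_{π(y)} at y is ≥ γ. Then for μ-almost every y ∈ Y, the upper pointwise dimension of μ at y is ≥ γ. -/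
open MeasureTheory Filter Topology

/-- The upper pointwise dimension of a measure `m` at a point `w`:
`limsup_{ρ → 0⁺} log m(B(w,ρ)) / log ρ`, where `B(w,ρ)` is the closed ball. -/
noncomputable def upperPointwiseDim {W : Type*} [MetricSpace W] [MeasurableSpace W]
    (m : Measure W) (w : W) : ℝ :=
  limsup (fun ρ : ℝ => Real.log (m (Metric.closedBall w ρ)).toReal / Real.log ρ)
    (𝓝[>] (0 : ℝ))

open Metric Set ENNReal

namespace DimAux

variable {Y : Type*} [MetricSpace Y]

lemma iter_doubling (N : ℕ)
    (hN : ∀ (y : Y) (r : ℝ), ∃ s : Finset Y, s.card ≤ N ∧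
      closedBall y r ⊆ ⋃ z ∈ s, closedBall z (r / 2)) :
    ∀ (k : ℕ) (y : Y) (r : ℝ), ∃ s : Finset Y, s.card ≤ N ^ k ∧
      closedBall y r ⊆ ⋃ z ∈ s, closedBall z (r / 2 ^ k) := by
  classical
  intro k
  induction k with
  | zero => exact fun y r => ⟨{y}, by simp, by simp⟩
  | succ k ih =>
    intro y r
    obtain ⟨s, hcard, hcov⟩ := ih y r
    choose t ht1 ht2 using fun z : Y => hN z (r / 2 ^ k)
    refine ⟨s.biUnion t, ?_, ?_⟩
    · calc (s.biUnion t).card ≤ ∑ z ∈ s, (t z).card := Finset.card_biUnion_le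
        _ ≤ ∑ _z ∈ s, N := Finset.sum_le_sum fun z _ => ht1 z
        _ = s.card * N := by simp [Finset.sum_const, mul_comm]
        _ ≤ N ^ k * N := by gcongr
        _ = N ^ (k + 1) := by ring
    · intro x hx
      obtain ⟨z, hz, hxz⟩ := mem_iUnion₂.1 (hcov hx)
      obtain ⟨w, hw, hxw⟩ := mem_iUnion₂.1 (ht2 z hxz)
      refine mem_iUnion₂.2 ⟨w, Finset.mem_biUnion.2 ⟨z, hz, hw⟩, ?_⟩
      have : r / 2 ^ k / 2 = r / 2 ^ (k + 1) := by ring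
      rwa [this] at hxw

lemma card_sep_le (N : ℕ)
    (hN : ∀ (y : Y) (r : ℝ), ∃ s : Finset Y, s.card ≤ N ∧
      closedBall y r ⊆ ⋃ z ∈ s, closedBall z (r / 2)) (x : Y) (R : ℝ) (hR : 0 < R)
    (T : Finset Y) (hT1 : ∀ y ∈ T, dist y x ≤ R)
    (hT2 : (T : Set Y).Pairwise fun a b => R < dist a b) : T.card ≤ N ^ 2 := by
  classical
  obtain ⟨s, hcard, hcov⟩ := iter_doubling N hN 2 x R
  have hsub : ∀ y ∈ T, ∃ w ∈ s, dist y w ≤ R / 2 ^ 2 := by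
    intro y hy
    obtain ⟨w, hw, hyw⟩ := mem_iUnion₂.1 (hcov (mem_closedBall.2 (hT1 y hy)))
    exact ⟨w, hw, mem_closedBall.1 hyw⟩
  choose! f hf1 hf2 using hsub
  refine le_trans (Finset.card_le_card_of_injOn f (fun y hy => hf1 y hy) ?_) hcard
  intro a ha b hb hab
  by_contra hne
  have h1 : dist a b ≤ R / 2 ^ 2 + R / 2 ^ 2 := by
    calc dist a b ≤ dist a (f a) + dist (f a) b := dist_triangle a (f a) b
    _ = dist a (f a) + dist b (f b) := by rw [hab, dist_comm (f b) b]
    _ ≤ R / 2 ^ 2 + R / 2 ^ 2 := add_le_add (hf2 a ha) (hf2 b hb)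
  have h2 : R < dist a b := hT2 ha hb hne
  linarith

end DimAux

namespace DimAux2
open DimAux

lemma cover_bound {Y : Type*} [MetricSpace Y] [TopologicalSpace.SeparableSpace Y]
    [MeasurableSpace Y] [OpensMeasurableSpace Y]
    (N : ℕ)
    (hN : ∀ (y : Y) (r : ℝ), ∃ s : Finset Y, s.card ≤ N ∧
      closedBall y r ⊆ ⋃ z ∈ s, closedBall z (r / 2))
    (m μ' : Measure Y) (hμ' : μ' Set.univ ≤ 1)
    {R : ℝ} (hR : 0 < R) (K : ℝ≥0∞) (F : Set Y)
    (hF : ∀ y ∈ F, K * m (closedBall y R) ≤ μ' (closedBall y R)) :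
    K * m F ≤ (N : ℝ≥0∞) ^ 2 := by
  classical
  -- maximal R-separated subset of F
  obtain ⟨S, -, hSmax⟩ := zorn_subset_nonempty
    {S : Set Y | S ⊆ F ∧ S.Pairwise fun a b => R < dist a b}
    (fun c hc hchain _ => ⟨⋃₀ c, ⟨sUnion_subset fun s hs => (hc hs).1, by
      intro a ha b hb hab
      obtain ⟨sa, hsa, ha⟩ := ha
      obtain ⟨sb, hsb, hb⟩ := hb
      rcases hchain.total hsa hsb with h | h
      · exact (hc hsb).2 (h ha) hb hab
      · exact (hc hsa).2 ha (h hb) hab⟩,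
      fun s hs => subset_sUnion_of_mem hs⟩) ∅ ⟨empty_subset _, pairwise_empty _⟩
  obtain ⟨hSF, hSsep⟩ := hSmax.prop
  have hsymm : Symmetric fun a b : Y => R < dist a b := fun a b h => by
    dsimp only at h ⊢; rwa [dist_comm]
  -- F is covered by R-balls centred at S
  have hcov : F ⊆ ⋃ y ∈ S, closedBall y R := by
    intro x hx
    by_contra hxc
    have hfar : ∀ y ∈ S, R < dist x y := by
      intro y hy
      by_contra h
      exact hxc (mem_iUnion₂.2 ⟨y, hy, mem_closedBall.2 (not_lt.1 h)⟩)
    have hxS : x ∉ S := fun hxS => lt_irrefl R (lt_of_lt_of_le (hfar x hxS) (by simp [hR.le]))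
    have : insert x S ⊆ S := hSmax.2 ⟨insert_subset hx hSF,
      (haveI : Std.Symm (fun a b : Y => R < dist a b) := ⟨fun a b h => hsymm h⟩; Set.pairwise_insert_of_symm).2 ⟨hSsep, fun b hb _ => hfar b hb⟩⟩
      (subset_insert _ _)
    exact hxS (this (mem_insert _ _))
  -- S is countable
  obtain ⟨D, hDc, hDd⟩ := TopologicalSpace.exists_countable_dense Y
  have hSc : S.Countable := by
    have hsel : ∀ y : Y, ∃ d ∈ D, dist y d < R / 2 := by
      intro y
      obtain ⟨d, hd1, hd2⟩ := Metric.dense_iff.1 hDd y (R / 2) (by linarith)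
      exact ⟨d, hd2, mem_ball'.1 hd1⟩
    choose g hg1 hg2 using hsel
    refine MapsTo.countable_of_injOn (fun y _ => hg1 y) ?_ hDc
    intro a ha b hb hab
    by_contra hne
    have : dist a b < R := by
      calc dist a b ≤ dist a (g a) + dist b (g b) := by
            rw [hab]; exact dist_triangle_right a b (g b)
      _ < R / 2 + R / 2 := add_lt_add (hg2 a) (hg2 b)
      _ = R := by ring
    exact absurd (hSsep ha hb hne) (not_lt.2 this.le)
  -- measure estimates
  haveI := hSc.to_subtype
  have h1 : K * m F ≤ ∑' y : S, K * m (closedBall (y : Y) R) :=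
    le_trans (mul_le_mul_right ((measure_mono hcov).trans (measure_biUnion_le m hSc _)) K)
      (le_of_eq ENNReal.tsum_mul_left.symm)
  have h2 : ∑' y : S, K * m (closedBall (y : Y) R) ≤ ∑' y : S, μ' (closedBall (y : Y) R) :=
    ENNReal.tsum_le_tsum fun y => hF y (hSF y.2)
  have h3 : ∑' y : S, μ' (closedBall (y : Y) R) ≤ (N : ℝ≥0∞) ^ 2 := by
    have heq : ∀ y : S, μ' (closedBall (y : Y) R)
        = ∫⁻ x, (closedBall (y : Y) R).indicator (fun _ => 1) x ∂μ' :=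
      fun y => (lintegral_indicator_one measurableSet_closedBall).symm
    rw [tsum_congr heq, ← lintegral_tsum
      (fun y => (measurable_const.indicator measurableSet_closedBall).aemeasurable)]
    calc ∫⁻ x, ∑' y : S, (closedBall (y : Y) R).indicator (fun _ => 1) x ∂μ'
        ≤ ∫⁻ _x, (N : ℝ≥0∞) ^ 2 ∂μ' := by
          refine lintegral_mono fun x => ?_
          refine ENNReal.summable.tsum_le_of_sum_le fun T => ?_
          have hsum : ∑ y ∈ T, (closedBall (y : Y) R).indicator (fun _ => (1 : ℝ≥0∞)) x
              = ((T.filter fun y : S => x ∈ closedBall (y : Y) R).card : ℝ≥0∞) := by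
            simp only [Set.indicator_apply]
            rw [Finset.sum_ite, Finset.sum_const, Finset.sum_const_zero, add_zero]
            simp
          rw [hsum]
          have hcard : (T.filter fun y : S => x ∈ closedBall (y : Y) R).card ≤ N ^ 2 := by
            have hkey := card_sep_le N hN x R hR
              ((T.filter fun y : S => x ∈ closedBall (y : Y) R).image Subtype.val) ?_ ?_
            · rwa [Finset.card_image_of_injective _ Subtype.val_injective] at hkey
            · intro y hy
              simp only [Finset.mem_image, Finset.mem_filter] at hy
              obtain ⟨u, ⟨-, hu⟩, rfl⟩ := hy
              rw [dist_comm]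
              exact mem_closedBall.1 hu
            · intro a ha b hb hne
              simp only [Finset.coe_image, Set.mem_image, Finset.mem_coe,
                Finset.mem_filter] at ha hb
              obtain ⟨u, -, rfl⟩ := ha
              obtain ⟨v, -, rfl⟩ := hb
              exact hSsep u.2 v.2 hne
          exact_mod_cast hcard
      _ ≤ (N : ℝ≥0∞) ^ 2 := by
          rw [lintegral_const]
          calc (N : ℝ≥0∞) ^ 2 * μ' Set.univ ≤ (N : ℝ≥0∞) ^ 2 * 1 := by gcongr
          _ = (N : ℝ≥0∞) ^ 2 := mul_one _
  exact h1.trans (h2.trans h3)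

end DimAux2

namespace DimAux3
open DimAux ProbabilityTheory

lemma small_ball {Y : Type*} [MetricSpace Y] [MeasurableSpace Y]
    (N : ℕ)
    (hN : ∀ (y : Y) (r : ℝ), ∃ s : Finset Y, s.card ≤ N ∧
      closedBall y r ⊆ ⋃ z ∈ s, closedBall z (r / 2))
    (μ : Measure Y) (y0 : Y) (r ρ : ℝ) (c : ℝ≥0∞) (k : ℕ)
    (hk : 2 * (r / 2 ^ k) ≤ ρ) :
    μ {y | dist y y0 ≤ r ∧ μ (closedBall y ρ) ≤ c} ≤ (N : ℝ≥0∞) ^ k * c := by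
  classical
  obtain ⟨s, hcard, hcov⟩ := iter_doubling N hN k y0 r
  set t := s.filter (fun w => μ (closedBall w (r / 2 ^ k)) ≤ c) with ht
  have hsub : {y | dist y y0 ≤ r ∧ μ (closedBall y ρ) ≤ c}
      ⊆ ⋃ w ∈ t, closedBall w (r / 2 ^ k) := by
    rintro y ⟨hy1, hy2⟩
    obtain ⟨w, hw, hyw⟩ := mem_iUnion₂.1 (hcov (mem_closedBall.2 hy1))
    refine mem_iUnion₂.2 ⟨w, Finset.mem_filter.2 ⟨hw, le_trans (measure_mono ?_) hy2⟩, hyw⟩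
    intro x hx
    have h1 : dist x w ≤ r / 2 ^ k := mem_closedBall.1 hx
    have h2 : dist y w ≤ r / 2 ^ k := mem_closedBall.1 hyw
    have := dist_triangle_right x y w
    exact mem_closedBall.2 (by linarith)
  calc μ {y | dist y y0 ≤ r ∧ μ (closedBall y ρ) ≤ c}
      ≤ ∑ w ∈ t, μ (closedBall w (r / 2 ^ k)) :=
        (measure_mono hsub).trans (measure_biUnion_finset_le t _)
    _ ≤ ∑ _w ∈ t, c := Finset.sum_le_sum fun w hw => (Finset.mem_filter.1 hw).2
    _ = (t.card : ℝ≥0∞) * c := by rw [Finset.sum_const, nsmul_eq_mul]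
    _ ≤ (N : ℝ≥0∞) ^ k * c := by
        gcongr
        exact_mod_cast le_trans (Finset.card_filter_le s _) hcard

lemma meas_ball_meas {Y : Type*} [MetricSpace Y] [MeasurableSpace Y] [BorelSpace Y]
    [SecondCountableTopology Y] (μ : Measure Y) [SFinite μ] (q : ℝ) :
    Measurable fun y : Y => μ (closedBall y q) := by
  have ht : MeasurableSet {p : Y × Y | dist p.2 p.1 ≤ q} :=
    (isClosed_le (continuous_dist.comp (continuous_snd.prodMk continuous_fst))
      continuous_const).measurableSet
  have h := Kernel.measurable_kernel_prodMk_left (κ := Kernel.const Y μ) ht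
  simpa [Kernel.const_apply, Metric.closedBall, Set.preimage] using h

lemma meas_fiber_ball_meas {Y Z : Type*} [MetricSpace Y] [MeasurableSpace Y] [BorelSpace Y]
    [SecondCountableTopology Y] [MeasurableSpace Z]
    (π : Y → Z) (hπ : Measurable π) (μz : Z → Measure Y)
    (hfam : ∀ s : Set Y, MeasurableSet s → Measurable fun z => μz z s)
    (hprob : ∀ z, IsProbabilityMeasure (μz z)) (q : ℝ) :
    Measurable fun y : Y => μz (π y) (closedBall y q) := by
  have hmeas : Measurable μz := Measure.measurable_of_measurable_coe _ hfam
  let κ : Kernel Z Y := ⟨μz, hmeas⟩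
  haveI : IsMarkovKernel κ := ⟨fun z => hprob z⟩
  let κ' : Kernel Y Y := κ.comap π hπ
  haveI : IsMarkovKernel κ' := by
    constructor
    intro y
    simp only [κ', Kernel.comap_apply]
    exact hprob (π y)
  have ht : MeasurableSet {p : Y × Y | dist p.2 p.1 ≤ q} :=
    (isClosed_le (continuous_dist.comp (continuous_snd.prodMk continuous_fst))
      continuous_const).measurableSet
  have h := Kernel.measurable_kernel_prodMk_left (κ := κ') ht
  have : ∀ y : Y, κ' y (Prod.mk y ⁻¹' {p : Y × Y | dist p.2 p.1 ≤ q})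
      = μz (π y) (closedBall y q) := by
    intro y
    simp only [κ', Kernel.comap_apply]
    rfl
  convert h using 1
  funext y
  exact (this y).symm

end DimAux3

namespace DimAux4
open DimAux DimAux2 DimAux3

lemma key1 {Y Z : Type*} [MetricSpace Y] [TopologicalSpace.SeparableSpace Y]
    [MeasurableSpace Y] [BorelSpace Y] [SecondCountableTopology Y] [MeasurableSpace Z]
    (N : ℕ)
    (hN : ∀ (y : Y) (r : ℝ), ∃ s : Finset Y, s.card ≤ N ∧
      closedBall y r ⊆ ⋃ z ∈ s, closedBall z (r / 2))
    (π : Y → Z) (hπ : Measurable π) (μ : Measure Y) [IsProbabilityMeasure μ]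
    (μz : Z → Measure Y)
    (hfam : ∀ s : Set Y, MeasurableSet s → Measurable fun z => μz z s)
    (hprob : ∀ z, IsProbabilityMeasure (μz z))
    (hfiber : ∀ᵐ z ∂(μ.map π), μz z ((π ⁻¹' {z})ᶜ) = 0)
    (hdis : ∀ s : Set Y, MeasurableSet s → μ s = ∫⁻ z, μz z s ∂(μ.map π))
    (K : ℝ≥0∞) (hK : K ≠ ⊤) (R : ℝ) (hR : 0 < R) :
    K * μ {y | K * μz (π y) (closedBall y R) ≤ μ (closedBall y R)} ≤ (N : ℝ≥0∞) ^ 2 := by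
  haveI : IsProbabilityMeasure (μ.map π) := Measure.isProbabilityMeasure_map hπ.aemeasurable
  set E := {y | K * μz (π y) (closedBall y R) ≤ μ (closedBall y R)} with hE
  have hEmeas : MeasurableSet E :=
    measurableSet_le ((meas_fiber_ball_meas π hπ μz hfam hprob R).const_mul K)
      (meas_ball_meas μ R)
  rw [hdis E hEmeas, ← lintegral_const_mul' K _ hK]
  have hae : ∀ᵐ z ∂(μ.map π), K * μz z E ≤ (N : ℝ≥0∞) ^ 2 := by
    filter_upwards [hfiber] with z hz
    have hEz : μz z E = μz z (E ∩ π ⁻¹' {z}) := by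
      apply le_antisymm
      · calc μz z E ≤ μz z ((E ∩ π ⁻¹' {z}) ∪ (π ⁻¹' {z})ᶜ) := by
              refine measure_mono fun y hy => ?_
              by_cases h : π y = z
              · exact Or.inl ⟨hy, h⟩
              · exact Or.inr h
        _ ≤ μz z (E ∩ π ⁻¹' {z}) + μz z ((π ⁻¹' {z})ᶜ) := measure_union_le _ _
        _ = μz z (E ∩ π ⁻¹' {z}) := by rw [hz, add_zero]
      · exact measure_mono inter_subset_left
    rw [hEz]
    refine cover_bound N hN (μz z) μ measure_univ.le hR K _ fun y hy => ?_
    have hyz : π y = z := hy.2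
    have := hy.1
    rw [hE, mem_setOf_eq, hyz] at this
    exact this
  calc ∫⁻ z, K * μz z E ∂(μ.map π) ≤ ∫⁻ _z, (N : ℝ≥0∞) ^ 2 ∂(μ.map π) :=
        lintegral_mono_ae hae
  _ = (N : ℝ≥0∞) ^ 2 := by simp

end DimAux4

namespace DimAux5
open DimAux

lemma sep_of_doubling {Y : Type*} [MetricSpace Y] (N : ℕ)
    (hN : ∀ (y : Y) (r : ℝ), ∃ s : Finset Y, s.card ≤ N ∧
      closedBall y r ⊆ ⋃ z ∈ s, closedBall z (r / 2)) :
    TopologicalSpace.SeparableSpace Y := by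
  rcases isEmpty_or_nonempty Y with h | h
  · infer_instance
  obtain ⟨y0⟩ := h
  have htb : ∀ n : ℕ, TotallyBounded (closedBall y0 n) := by
    intro n
    rw [Metric.totallyBounded_iff]
    intro ε hε
    obtain ⟨k, hk⟩ := pow_unbounded_of_one_lt ((n : ℝ) / ε) one_lt_two
    have hk2 : (n : ℝ) / 2 ^ k < ε := by
      rw [div_lt_iff₀ (by positivity)]
      rw [div_lt_iff₀ hε] at hk
      linarith
    obtain ⟨s, -, hcov⟩ := iter_doubling N hN k y0 n
    exact ⟨s, s.finite_toSet,
      hcov.trans (Set.iUnion₂_mono fun z _ => closedBall_subset_ball hk2)⟩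
  have huniv : (Set.univ : Set Y) = ⋃ n : ℕ, closedBall y0 n := by
    ext y
    simp only [Set.mem_univ, true_iff, Set.mem_iUnion]
    obtain ⟨n, hn⟩ := exists_nat_ge (dist y y0)
    exact ⟨n, mem_closedBall.2 hn⟩
  have : TopologicalSpace.IsSeparable (Set.univ : Set Y) := by
    rw [huniv]
    exact TopologicalSpace.isSeparable_iUnion.2 fun n => (htb n).isSeparable
  exact TopologicalSpace.isSeparable_univ_iff.1 this

lemma bc_pos {Y : Type*} [MetricSpace Y] [MeasurableSpace Y]
    (N : ℕ)
    (hN : ∀ (y : Y) (r : ℝ), ∃ s : Finset Y, s.card ≤ N ∧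
      closedBall y r ⊆ ⋃ z ∈ s, closedBall z (r / 2))
    (μ : Measure Y) [IsProbabilityMeasure μ] (y0 : Y) :
    ∀ᵐ y ∂μ, ∀ᶠ ρ in 𝓝[>] (0 : ℝ),
      ENNReal.ofReal (ρ ^ (2 * (N + 1))) ≤ μ (closedBall y ρ) := by
  set nn := N + 1 with hnn
  have hhalf : ∀ s : ℕ, ENNReal.ofReal ((1/2 : ℝ) ^ s) = (1/2 : ℝ≥0∞) ^ s := by
    intro s
    rw [ENNReal.ofReal_pow (by norm_num)]
    congr 1
    rw [ENNReal.ofReal_div_of_pos two_pos]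
    norm_num
  -- the bad sets
  set bad : ℕ → ℕ → Set Y := fun M k =>
    {y | dist y y0 ≤ (M : ℝ) ∧ μ (closedBall y ((1/2 : ℝ) ^ k)) ≤ (1/2 : ℝ≥0∞) ^ (k * nn)}
    with hbad
  have hbadme : ∀ M k, μ (bad M k) ≤ (N : ℝ≥0∞) ^ (1 + M) * (1/2) ^ k := by
    intro M k
    have hsb := DimAux3.small_ball N hN μ y0 (M : ℝ) ((1/2 : ℝ) ^ k)
      ((1/2 : ℝ≥0∞) ^ (k * nn)) (k + 1 + M) ?_
    · refine hsb.trans ?_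
      have heq : (N : ℝ≥0∞) ^ (k + 1 + M) = (N : ℝ≥0∞) ^ k * (N : ℝ≥0∞) ^ (1 + M) := by
        rw [← pow_add]; ring_nf
      have hsplit : (1/2 : ℝ≥0∞) ^ (k * nn) = (1/2) ^ (k * N) * (1/2) ^ k := by
        rw [← pow_add]
        congr 1
      rw [heq, hsplit]
      have hNle : (N : ℝ≥0∞) ^ k * (1/2 : ℝ≥0∞) ^ (k * N) ≤ 1 := by
        rw [mul_comm k N, pow_mul, ← mul_pow]
        refine pow_le_one' ?_ k
        rw [one_div, ← ENNReal.inv_pow]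
        calc (N : ℝ≥0∞) * ((2 : ℝ≥0∞) ^ N)⁻¹ ≤ (2 : ℝ≥0∞) ^ N * ((2 : ℝ≥0∞) ^ N)⁻¹ := by
              gcongr
              have := (Nat.lt_two_pow_self (n := N)).le
              exact_mod_cast this
        _ = 1 := ENNReal.mul_inv_cancel (by positivity) (by simp)
      calc (N : ℝ≥0∞) ^ k * (N : ℝ≥0∞) ^ (1 + M) * ((1/2) ^ (k * N) * (1/2) ^ k)
          = ((N : ℝ≥0∞) ^ k * (1/2) ^ (k * N)) * ((N : ℝ≥0∞) ^ (1 + M) * (1/2) ^ k) := by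
            ring
        _ ≤ 1 * ((N : ℝ≥0∞) ^ (1 + M) * (1/2) ^ k) := by gcongr
        _ = (N : ℝ≥0∞) ^ (1 + M) * (1/2) ^ k := one_mul _
    · -- 2 * (M / 2^(k+1+M)) ≤ (1/2)^k
      have hM2 : (M : ℝ) ≤ 2 ^ M := by exact_mod_cast (Nat.lt_two_pow_self (n := M)).le
      have hpow : (2 : ℝ) ^ (k + 1 + M) = 2 * 2 ^ k * 2 ^ M := by
        rw [pow_add, pow_add]; ring
      have h1 : ((1:ℝ)/2) ^ k = 1 / 2 ^ k := by rw [div_pow, one_pow]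
      rw [h1, hpow, mul_div_assoc', div_le_div_iff₀ (by positivity) (by positivity)]
      have hcross : (M : ℝ) * 2 ^ k ≤ 2 ^ M * 2 ^ k :=
        mul_le_mul_of_nonneg_right hM2 (by positivity)
      nlinarith [hcross]
  have hBC : ∀ M : ℕ, ∀ᵐ y ∂μ, ∀ᶠ k in atTop, y ∉ bad M k := by
    intro M
    refine MeasureTheory.ae_eventually_notMem ?_
    refine ne_top_of_le_ne_top ?_ (ENNReal.tsum_le_tsum fun k => hbadme M k)
    rw [ENNReal.tsum_mul_left, ENNReal.tsum_geometric]
    refine ENNReal.mul_ne_top (ENNReal.pow_ne_top (ENNReal.natCast_ne_top N)) ?_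
    rw [ENNReal.inv_ne_top]
    have h12 : (1 : ℝ≥0∞) - 1/2 = 1/2 := by
      rw [one_div, ENNReal.one_sub_inv_two]
    rw [h12]
    simp
  have hall : ∀ᵐ y ∂μ, ∀ M : ℕ, ∀ᶠ k in atTop, y ∉ bad M k := ae_all_iff.2 hBC
  filter_upwards [hall] with y hy
  obtain ⟨M, hM⟩ := exists_nat_ge (dist y y0)
  obtain ⟨k0, hk0⟩ := Filter.eventually_atTop.1 (hy M)
  have hk0' : ∀ k ≥ k0, (1/2 : ℝ≥0∞) ^ (k * nn) < μ (closedBall y ((1/2 : ℝ) ^ k)) := by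
    intro k hk
    have := hk0 k hk
    rw [hbad, Set.mem_setOf_eq, not_and] at this
    exact not_le.1 (this hM)
  have hmem : Set.Ioc (0:ℝ) ((1/2 : ℝ) ^ (k0 + 1)) ∈ 𝓝[>] (0:ℝ) :=
    Ioc_mem_nhdsGT_of_mem ⟨le_refl 0, by positivity⟩
  filter_upwards [hmem] with ρ hρ
  obtain ⟨hρ0, hρ1⟩ := hρ
  have hex : ∃ j, (1/2 : ℝ) ^ j < ρ := exists_pow_lt_of_lt_one hρ0 (by norm_num)
  have hjlt : (1/2 : ℝ) ^ (Nat.find hex) < ρ := Nat.find_spec hex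
  have hjne : Nat.find hex ≠ 0 := by
    intro h0
    rw [h0, pow_zero] at hjlt
    have : ρ ≤ 1 := hρ1.trans (by
      apply pow_le_one₀ <;> norm_num)
    linarith
  obtain ⟨kk, hkkj⟩ : ∃ kk, Nat.find hex = kk + 1 := ⟨Nat.find hex - 1, by omega⟩
  rw [hkkj] at hjlt
  have hklow : ρ ≤ (1/2 : ℝ) ^ kk := not_lt.1 (Nat.find_min hex (by omega))
  have hkk1 : k0 + 1 ≤ kk := by
    have hlt : (1/2 : ℝ) ^ (kk + 1) < (1/2 : ℝ) ^ (k0 + 1) := lt_of_lt_of_le hjlt hρ1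
    by_contra hcon
    push_neg at hcon
    have : (1/2 : ℝ) ^ (k0 + 1) ≤ (1/2 : ℝ) ^ (kk + 1) :=
      pow_le_pow_of_le_one (by norm_num) (by norm_num) (by omega)
    linarith
  have hoexp : (kk + 1) * nn ≤ kk * (2 * nn) := by
    have h1 : kk + 1 ≤ 2 * kk := by omega
    calc (kk + 1) * nn ≤ (2 * kk) * nn := Nat.mul_le_mul_right _ h1
    _ = kk * (2 * nn) := by ring
  calc ENNReal.ofReal (ρ ^ (2 * (N + 1)))
      ≤ ENNReal.ofReal ((1/2 : ℝ) ^ (kk * (2 * nn))) := by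
        refine ENNReal.ofReal_le_ofReal ?_
        rw [pow_mul ((1:ℝ)/2) kk]
        exact pow_le_pow_left₀ hρ0.le hklow _
    _ = (1/2 : ℝ≥0∞) ^ (kk * (2 * nn)) := hhalf _
    _ ≤ (1/2 : ℝ≥0∞) ^ ((kk + 1) * nn) :=
        pow_le_pow_of_le_one (by norm_num) (by norm_num) hoexp
    _ ≤ μ (closedBall y ((1/2 : ℝ) ^ (kk + 1))) := (hk0' (kk + 1) (by omega)).le
    _ ≤ μ (closedBall y ρ) := measure_mono (closedBall_subset_closedBall hjlt.le)

end DimAux5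


/-- Let `Y` be a complete doubling metric space, `Z` a standard Borel
space, `π : Y → Z` Borel measurable, `μ` a Borel probability measure on `Y`,
`ν = π_*μ` and `(μz z)` a disintegration of `μ` over `ν` along `π`.  If for `μ`-a.e.
`y` the lower pointwise dimension of `μz (π y)` at `y` is `≥ γ`, then for `μ`-a.e. `y`
the upper pointwise dimension of `μ` at `y` is `≥ γ`. -/
theorem upperDim_ge_of_fiber_dim_ge_doubling
    {Y Z : Type*}
    [MetricSpace Y] [CompleteSpace Y]
    [MeasurableSpace Y] [BorelSpace Y]
    [MeasurableSpace Z] [StandardBorelSpace Z]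
    (hdoub : ∃ N : ℕ, ∀ (y : Y) (r : ℝ), ∃ s : Finset Y,
      s.card ≤ N ∧ Metric.closedBall y r ⊆ ⋃ z ∈ s, Metric.closedBall z (r / 2))
    (π : Y → Z) (hπ : Measurable π)
    (μ : Measure Y) [IsProbabilityMeasure μ]
    (μz : Z → Measure Y)
    (hfam : ∀ s : Set Y, MeasurableSet s → Measurable fun z => μz z s)
    (hprob : ∀ z, IsProbabilityMeasure (μz z))
    (hfiber : ∀ᵐ z ∂(μ.map π), μz z ((π ⁻¹' {z})ᶜ) = 0)
    (hdis : ∀ s : Set Y, MeasurableSet s → μ s = ∫⁻ z, μz z s ∂(μ.map π))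
    (γ : ℝ) (hγ : 0 ≤ γ)
    (hi : ∀ᵐ y ∂μ, γ ≤ lowerPointwiseDim (μz (π y)) y) :
    ∀ᵐ y ∂μ, γ ≤ upperPointwiseDim μ y := by
  classical
  obtain ⟨N, hN⟩ := hdoub
  rcases isEmpty_or_nonempty Y with hY | hY
  · have h1 : μ Set.univ = 1 := measure_univ
    rw [Set.univ_eq_empty_iff.2 hY, measure_empty] at h1
    exact absurd h1 (by simp)
  obtain ⟨y0⟩ := hY
  haveI : TopologicalSpace.SeparableSpace Y := DimAux5.sep_of_doubling N hN
  haveI : SecondCountableTopology Y := UniformSpace.secondCountable_of_separable Y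
  -- the bad set where the fibre measure is always exponentially smaller
  set p : ℕ := 2 * (N + 1) with hp
  set Bad : Set Y := {y | ∀ m : ℕ, ∃ n : ℕ, ∀ k : ℕ, n ≤ k →
    (2 : ℝ≥0∞) ^ m * μz (π y) (Metric.closedBall y ((1/2 : ℝ) ^ k))
      ≤ μ (Metric.closedBall y ((1/2 : ℝ) ^ k))} with hBad
  set G : ℕ → ℕ → Set Y := fun m k =>
    {y | (2 : ℝ≥0∞) ^ m * μz (π y) (Metric.closedBall y ((1/2 : ℝ) ^ k))
      ≤ μ (Metric.closedBall y ((1/2 : ℝ) ^ k))} with hG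
  have hGbound : ∀ m k : ℕ, μ (G m k) ≤ (N : ℝ≥0∞) ^ 2 / 2 ^ m := by
    intro m k
    have h := DimAux4.key1 N hN π hπ μ μz hfam hprob hfiber hdis ((2 : ℝ≥0∞) ^ m)
      (by simp) ((1/2 : ℝ) ^ k) (by positivity)
    rw [ENNReal.le_div_iff_mul_le (Or.inl (by positivity)) (Or.inl (by simp)), mul_comm]
    exact h
  have hBadnull : μ Bad = 0 := by
    have hb : ∀ m : ℕ, μ Bad ≤ (N : ℝ≥0∞) ^ 2 / 2 ^ m := by
      intro m
      have hsub : Bad ⊆ ⋃ n : ℕ, ⋂ k : ℕ, ⋂ (_ : n ≤ k), G m k := by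
        intro y hy
        obtain ⟨n, hn⟩ := hy m
        exact Set.mem_iUnion.2 ⟨n, Set.mem_iInter.2 fun k =>
          Set.mem_iInter.2 fun hk => hn k hk⟩
      refine (measure_mono hsub).trans ?_
      rw [Directed.measure_iUnion ?_]
      · exact iSup_le fun n => (measure_mono (Set.iInter₂_subset n (le_refl n))).trans
          (hGbound m n)
      · intro n n'
        refine ⟨max n n', ?_, ?_⟩ <;>
        · intro y hy
          refine Set.mem_iInter.2 fun k => Set.mem_iInter.2 fun hk => ?_
          exact Set.mem_iInter.1 (Set.mem_iInter.1 hy k) (le_trans (by omega) hk)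
    have ht : Tendsto (fun m : ℕ => (N : ℝ≥0∞) ^ 2 / 2 ^ m) atTop (𝓝 (0 : ℝ≥0∞)) := by
      simp_rw [div_eq_mul_inv, ENNReal.inv_pow]
      have h0 : (N : ℝ≥0∞) ^ 2 * 0 = 0 := mul_zero _
      rw [← h0]
      exact ENNReal.Tendsto.const_mul
        (ENNReal.tendsto_pow_atTop_nhds_zero_of_lt_one
          (by simp [ENNReal.inv_lt_one])) (Or.inr (by simp))
    exact le_antisymm (ge_of_tendsto' ht hb) (zero_le)
  have hpos := DimAux5.bc_pos N hN μ y0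
  filter_upwards [hi, hpos, measure_eq_zero_iff_ae_notMem.1 hBadnull] with y hdim hposy hbady
  -- extract the frequent comparison scale
  rw [hBad, Set.mem_setOf_eq] at hbady
  push_neg at hbady
  obtain ⟨m, hm⟩ := hbady
  have hfreqk : ∃ᶠ k in atTop, μ (Metric.closedBall y ((1/2 : ℝ) ^ k))
      < (2 : ℝ≥0∞) ^ m * μz (π y) (Metric.closedBall y ((1/2 : ℝ) ^ k)) := by
    rw [Filter.frequently_atTop]
    intro n
    obtain ⟨k, hk1, hk2⟩ := hm n
    exact ⟨k, hk1, hk2⟩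
  have htendk : Tendsto (fun k : ℕ => (1/2 : ℝ) ^ k) atTop (𝓝[>] (0 : ℝ)) :=
    tendsto_pow_atTop_nhdsWithin_zero_of_lt_one (by norm_num) (by norm_num)
  have hfreqρ : ∃ᶠ ρ in 𝓝[>] (0 : ℝ), μ (Metric.closedBall y ρ)
      < (2 : ℝ≥0∞) ^ m * μz (π y) (Metric.closedBall y ρ) := htendk.frequently hfreqk
  -- eventual facts
  have he1 : ∀ᶠ ρ in 𝓝[>] (0 : ℝ), ρ ∈ Set.Ioo (0 : ℝ) 1 :=
    Ioo_mem_nhdsGT_of_mem ⟨le_refl 0, one_pos⟩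
  have hbddf : Filter.IsBoundedUnder (· ≤ ·) (𝓝[>] (0 : ℝ))
      (fun ρ : ℝ => Real.log (μ (Metric.closedBall y ρ)).toReal / Real.log ρ) := by
    refine ⟨(p : ℝ), ?_⟩
    rw [Filter.eventually_map]
    filter_upwards [he1, hposy] with ρ hρ hpρ
    obtain ⟨hρ0, hρ1⟩ := hρ
    have hlogρ : Real.log ρ < 0 := Real.log_neg hρ0 hρ1
    have haρ : ρ ^ p ≤ (μ (Metric.closedBall y ρ)).toReal :=
      (ENNReal.ofReal_le_iff_le_toReal (measure_ne_top μ _)).1 hpρ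
    have hloga : (p : ℝ) * Real.log ρ ≤ Real.log (μ (Metric.closedBall y ρ)).toReal := by
      calc (p : ℝ) * Real.log ρ = Real.log (ρ ^ p) := by rw [Real.log_pow]
      _ ≤ Real.log (μ (Metric.closedBall y ρ)).toReal :=
          Real.log_le_log (by positivity) haρ
    rw [div_le_iff_of_neg hlogρ]
    exact hloga
  -- the main frequent lower bound
  have hkey : ∀ δ : ℝ, 0 < δ → γ - 2 * δ ≤ upperPointwiseDim μ y := by
    intro δ hδ
    have hlimev : ∀ᶠ ρ in 𝓝[>] (0 : ℝ), γ - δ <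
        Real.log (μz (π y) (Metric.closedBall y ρ)).toReal / Real.log ρ := by
      refine Filter.eventually_lt_of_lt_liminf (lt_of_lt_of_le (by linarith) hdim) ?_
      refine ⟨0, ?_⟩
      rw [Filter.eventually_map]
      filter_upwards [he1] with ρ hρ
      have hlogρ : Real.log ρ < 0 := Real.log_neg hρ.1 hρ.2
      have hb1 : (μz (π y) (Metric.closedBall y ρ)).toReal ≤ 1 := by
        have h := prob_le_one (μ := μz (π y)) (s := Metric.closedBall y ρ)
        simpa using ENNReal.toReal_mono (by simp) h
      exact div_nonneg_iff.2 (Or.inr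
        ⟨Real.log_nonpos ENNReal.toReal_nonneg hb1, hlogρ.le⟩)
    have hlogsmall : ∀ᶠ ρ in 𝓝[>] (0 : ℝ),
        (m : ℝ) * Real.log 2 ≤ δ * (-Real.log ρ) := by
      have : ∀ᶠ ρ in 𝓝[>] (0 : ℝ), Real.log ρ ≤ -((m : ℝ) * Real.log 2) / δ :=
        Real.tendsto_log_nhdsGT_zero.eventually_le_atBot _
      filter_upwards [this] with ρ hρ
      rw [le_div_iff₀ hδ] at hρ
      nlinarith [hρ]
    have hfreq2 : ∃ᶠ ρ in 𝓝[>] (0 : ℝ), γ - 2 * δ ≤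
        Real.log (μ (Metric.closedBall y ρ)).toReal / Real.log ρ := by
      refine (hfreqρ.and_eventually ((he1.and hposy).and
        (hlimev.and hlogsmall))).mono ?_
      rintro ρ ⟨hlt, ⟨⟨hρ0, hρ1⟩, hpρ⟩, hliminfρ, hlogρδ⟩
      set a := (μ (Metric.closedBall y ρ)).toReal with haa
      set b := (μz (π y) (Metric.closedBall y ρ)).toReal with hbb
      have hlogρ : Real.log ρ < 0 := Real.log_neg hρ0 hρ1
      have hμtop : μ (Metric.closedBall y ρ) ≠ ⊤ := measure_ne_top μ _
      have ha0 : 0 < a := by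
        refine ENNReal.toReal_pos ?_ hμtop
        refine fun h0 => ?_
        rw [h0] at hpρ
        have : (0:ℝ) < ρ ^ p := by positivity
        simp [ENNReal.ofReal_eq_zero] at hpρ
        linarith
      have h2top : (2 : ℝ≥0∞) ^ m * μz (π y) (Metric.closedBall y ρ) ≠ ⊤ :=
        ENNReal.mul_ne_top (by simp) (measure_ne_top _ _)
      have hab : a < (2 : ℝ) ^ m * b := by
        have h := (ENNReal.toReal_lt_toReal hμtop h2top).2 hlt
        rwa [ENNReal.toReal_mul, ENNReal.toReal_pow, ENNReal.toReal_ofNat] at h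
      have h2m : (0 : ℝ) < 2 ^ m := by positivity
      have hb0 : 0 < b := by nlinarith
      have hloga : Real.log a < (m : ℝ) * Real.log 2 + Real.log b := by
        have h := Real.log_lt_log ha0 hab
        rwa [Real.log_mul (by positivity) hb0.ne', Real.log_pow] at h
      have hstep1 : ((m : ℝ) * Real.log 2 + Real.log b) / Real.log ρ < Real.log a / Real.log ρ :=
        (div_lt_div_right_of_neg hlogρ).2 hloga
      have hstep2 : -δ ≤ (m : ℝ) * Real.log 2 / Real.log ρ := by
        rw [le_div_iff_of_neg hlogρ]
        nlinarith
      have hstep3 : ((m : ℝ) * Real.log 2 + Real.log b) / Real.log ρ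
          = (m : ℝ) * Real.log 2 / Real.log ρ + Real.log b / Real.log ρ := add_div _ _ _
      have := hliminfρ
      calc γ - 2 * δ = -δ + (γ - δ) := by ring
      _ ≤ (m : ℝ) * Real.log 2 / Real.log ρ + Real.log b / Real.log ρ := by
          exact add_le_add hstep2 this.le
      _ = ((m : ℝ) * Real.log 2 + Real.log b) / Real.log ρ := hstep3.symm
      _ ≤ Real.log a / Real.log ρ := hstep1.le
    exact Filter.le_limsup_of_frequently_le hfreq2 hbddf
  by_contra hcon
  push_neg at hcon
  have h3 := hkey ((γ - upperPointwiseDim μ y) / 3) (by linarith)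
  linarith
end

section
/- Let G be a Hausdorff topological group acting on a set X, and let U be a compact symmetric neighbourhood of the identity in G such that for every x ∈ X the only element g ∈ U·U with g·x = x is the identity. Let Σ ⊆ X be a (U·U)-lacunary subset and let K ⊆ G be a compact set. Then there exists an integer m such that for every x ∈ X the set {(g,σ) ∈ K × Σ : g·σ = x} has at most m elements. In particular, for every x ∈ X there is at most one pair (g,σ) ∈ U × Σ with g·σ = x. -/
open scoped Pointwise

/-- Let `G` be a Hausdorff topological group acting on a set `X`,
`U` a compact symmetric neighbourhood of the identity such that the only element of
`U·U` fixing some point of `X` is the identity, `S` a `(U·U)`-lacunary subset of `X`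
and `K ⊆ G` compact.  Then there is an integer `m` such that for every `x` the set of
pairs `(g,σ) ∈ K × S` with `g • σ = x` is finite with at most `m` elements; in
particular, for every `x` there is at most one pair `(g,σ) ∈ U × S` with `g • σ = x`. -/
theorem card_fiber_le_of_lacunary
    {G X : Type*} [Group G] [TopologicalSpace G] [IsTopologicalGroup G] [T2Space G]
    [MulAction G X]
    (U : Set G) (hUc : IsCompact U) (hUs : U⁻¹ = U) (hU1 : U ∈ nhds (1 : G))
    (hfree : ∀ (x : X), ∀ g ∈ U * U, g • x = x → g = 1)
    (S : Set X) (hlac : ∀ x' ∈ S, ∀ g ∈ U * U, g • x' ∈ S → g • x' = x')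
    (K : Set G) (hK : IsCompact K) :
    (∃ m : ℕ, ∀ x : X,
        ({p : G × X | p.1 ∈ K ∧ p.2 ∈ S ∧ p.1 • p.2 = x}).Finite ∧
        ({p : G × X | p.1 ∈ K ∧ p.2 ∈ S ∧ p.1 • p.2 = x}).ncard ≤ m) ∧
    (∀ (x : X) (g g' : G) (σ σ' : X), g ∈ U → g' ∈ U → σ ∈ S → σ' ∈ S →
        g • σ = x → g' • σ' = x → g = g' ∧ σ = σ') := by
  classical
  have key : ∀ (x : X) (g g' : G) (σ σ' : X), g ∈ U → g' ∈ U → σ ∈ S → σ' ∈ S →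
      g • σ = x → g' • σ' = x → g = g' ∧ σ = σ' := by
    intro x g g' σ σ' hg hg' hσ hσ' he he'
    have hginv : g'⁻¹ ∈ U := by rw [← hUs]; exact Set.inv_mem_inv.2 hg'
    have hmem : g'⁻¹ * g ∈ U * U := Set.mul_mem_mul hginv hg
    have hact : (g'⁻¹ * g) • σ = σ' := by
      rw [mul_smul, he, ← he', inv_smul_smul]
    have hfix : (g'⁻¹ * g) • σ = σ := hlac σ hσ _ hmem (by rw [hact]; exact hσ')
    have hgg : g'⁻¹ * g = 1 := hfree σ _ hmem hfix
    have hge : g = g' := (inv_mul_eq_one.mp hgg).symm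
    exact ⟨hge, (hact.symm.trans hfix).symm⟩
  refine ⟨?_, key⟩
  -- cover K by finitely many translates of U
  have hcov : ∀ g ∈ K, g • U ∈ nhds g := by
    intro g hg
    have := smul_mem_nhds_smul g hU1 (a := (1:G))
    simpa using this
  obtain ⟨t, _, ht⟩ := hK.elim_nhds_subcover (fun g => g • U) hcov
  refine ⟨t.card, fun x => ?_⟩
  set fib := {p : G × X | p.1 ∈ K ∧ p.2 ∈ S ∧ p.1 • p.2 = x} with hfib
  have hchoice : ∀ p : G × X, ∃ g₀ : G, p ∈ fib → g₀ ∈ t ∧ p.1 ∈ g₀ • U := by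
    intro p
    by_cases hp : p ∈ fib
    · have := ht hp.1
      simp only [Set.mem_iUnion] at this
      obtain ⟨g₀, hg₀t, hg₀⟩ := this
      exact ⟨g₀, fun _ => ⟨hg₀t, hg₀⟩⟩
    · exact ⟨1, fun h => absurd h hp⟩
  choose f hf using hchoice
  have hinj : Set.InjOn f fib := by
    intro p hp q hq hfeq
    obtain ⟨hpt, hpU⟩ := hf p hp
    obtain ⟨hqt, hqU⟩ := hf q hq
    rw [hfeq] at hpU
    obtain ⟨u, hu, hpu⟩ := hpU
    obtain ⟨v, hv, hqv⟩ := hqU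
    simp only [smul_eq_mul] at hpu hqv
    -- p.1 = f q * u, q.1 = f q * v
    have hux : u • p.2 = (f q)⁻¹ • x := by
      rw [← hp.2.2, ← hpu, mul_smul, inv_smul_smul]
    have hvx : v • q.2 = (f q)⁻¹ • x := by
      rw [← hq.2.2, ← hqv, mul_smul, inv_smul_smul]
    obtain ⟨huv, hσ⟩ := key ((f q)⁻¹ • x) u v p.2 q.2 hu hv hp.2.1 hq.2.1 hux hvx
    have h1 : p.1 = q.1 := by rw [← hpu, ← hqv, huv]
    exact Prod.ext h1 hσ
  have himg : f '' fib ⊆ (t : Set G) := by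
    rintro _ ⟨p, hp, rfl⟩
    exact (hf p hp).1
  have hfin : fib.Finite :=
    Set.Finite.of_finite_image ((t.finite_toSet).subset himg) hinj
  refine ⟨hfin, ?_⟩
  calc fib.ncard = (f '' fib).ncard := (Set.ncard_image_of_injOn hinj).symm
    _ ≤ (t : Set G).ncard := Set.ncard_le_ncard himg t.finite_toSet
    _ = t.card := by simp
end
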